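/- arXiv:1311.2859 — 4 statements merged into one kernel-verified Lean document; each statement's English description precedes it below -/
import Mathlib

section
/- Let r > 1, s = r/(r−1), let ρ₀ ∈ L^r(Ω) with ρ₀ ≢ 0, let P be the set of all rearrangements of ρ₀, and let q ∈ L^s(Ω) with q ≢ 0. If there is an increasing function ξ : ℝ → ℝ such that ξ∘q ∈ P, then for every ρ ∈ P one has ∫_Ω ρ q dx ≤ ∫_Ω ξ(q) q dx, and ξ∘q is the unique maximizer of ρ ↦ ∫_Ω ρ q dx over P (unique up to equality almost everywhere). -/
open MeasureTheory Set
open scoped ENNReal NNReal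

namespace BurtonAux

open scoped Classical

theorem arctan_nonneg' {u : ℝ} (h : 0 ≤ u) : 0 ≤ Real.arctan u := by
  have := Real.arctan_strictMono.monotone h
  rwa [Real.arctan_zero] at this

theorem arctan_neg' {u : ℝ} (h : u < 0) : Real.arctan u < 0 := by
  have := Real.arctan_strictMono h
  rwa [Real.arctan_zero] at this

noncomputable def xid (ξ : ℝ → ℝ) (δ : ℝ) : ℝ → ℝ := fun u => ξ u + δ * Real.arctan u

def Gset (ξ : ℝ → ℝ) (δ : ℝ) : Set ℝ :=
  {s | (∃ u, s ≤ xid ξ δ u) ∧ (∃ u, xid ξ δ u < s)}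

noncomputable def gam (ξ : ℝ → ℝ) (δ : ℝ) : ℝ → ℝ :=
  fun s => if s ∈ Gset ξ δ then sInf {u | s ≤ xid ξ δ u} else 0

noncomputable def Phi (ξ : ℝ → ℝ) (δ : ℝ) : ℝ → ℝ := fun t => ∫ u in (0:ℝ)..t, xid ξ δ u

noncomputable def Psi (ξ : ℝ → ℝ) (δ : ℝ) : ℝ → ℝ :=
  fun s => s * gam ξ δ s - Phi ξ δ (gam ξ δ s)

noncomputable def gap (ξ : ℝ → ℝ) (δ : ℝ) (s t : ℝ) : ℝ :=
  ∫ u in gam ξ δ s..t, (xid ξ δ u - s)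

variable {ξ : ℝ → ℝ} {δ : ℝ}

theorem abs_arctan_le (u : ℝ) : |Real.arctan u| ≤ Real.pi / 2 :=
  abs_le.2 ⟨by linarith [Real.neg_pi_div_two_lt_arctan u], (Real.arctan_lt_pi_div_two u).le⟩

theorem xid_mono (hξ : Monotone ξ) (hδ : 0 ≤ δ) : Monotone (xid ξ δ) := fun a b h =>
  add_le_add (hξ h) (mul_le_mul_of_nonneg_left (Real.arctan_strictMono.monotone h) hδ)

theorem xid_meas (hξ : Monotone ξ) : Measurable (xid ξ δ) :=
  hξ.measurable.add ((continuous_const.mul Real.continuous_arctan).measurable)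

theorem mem_Gset (hξ : Monotone ξ) (hδ : 0 < δ) (t : ℝ) : ξ t ∈ Gset ξ δ := by
  constructor
  · refine ⟨max t 0, ?_⟩
    have h1 : ξ t ≤ ξ (max t 0) := hξ (le_max_left _ _)
    have h2 : (0:ℝ) ≤ Real.arctan (max t 0) := arctan_nonneg' (le_max_right _ _)
    unfold xid; nlinarith
  · refine ⟨min t 0 - 1, ?_⟩
    have h1 : ξ (min t 0 - 1) ≤ ξ t := hξ (by
      have := min_le_left t 0; linarith)
    have h2 : Real.arctan (min t 0 - 1) < 0 :=
      arctan_neg' (by have := min_le_right t 0; linarith)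
    unfold xid; nlinarith

theorem Gset_nonempty {s : ℝ} (hs : s ∈ Gset ξ δ) : {u | s ≤ xid ξ δ u}.Nonempty := hs.1

theorem Gset_bddBelow (hξ : Monotone ξ) (hδ : 0 ≤ δ) {s : ℝ} (hs : s ∈ Gset ξ δ) :
    BddBelow {u | s ≤ xid ξ δ u} := by
  obtain ⟨u₀, hu₀⟩ := hs.2
  refine ⟨u₀, fun v hv => ?_⟩
  by_contra h
  push_neg at h
  exact absurd (le_trans hv (xid_mono hξ hδ h.le)) (not_le.2 hu₀)

theorem gam_eq {s : ℝ} (hs : s ∈ Gset ξ δ) : gam ξ δ s = sInf {u | s ≤ xid ξ δ u} :=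
  if_pos hs

theorem gam_le (hξ : Monotone ξ) (hδ : 0 ≤ δ) {s u : ℝ} (hs : s ∈ Gset ξ δ)
    (hu : s ≤ xid ξ δ u) : gam ξ δ s ≤ u := by
  rw [gam_eq hs]; exact csInf_le (Gset_bddBelow hξ hδ hs) hu

theorem gam_ge {s b : ℝ} (hs : s ∈ Gset ξ δ)
    (hb : ∀ v, s ≤ xid ξ δ v → b ≤ v) : b ≤ gam ξ δ s := by
  rw [gam_eq hs]; exact le_csInf (Gset_nonempty hs) hb

theorem le_xid_of_gam_lt (hξ : Monotone ξ) (hδ : 0 ≤ δ) {s u : ℝ} (hs : s ∈ Gset ξ δ)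
    (hu : gam ξ δ s < u) : s ≤ xid ξ δ u := by
  by_contra h
  push_neg at h
  have : u ≤ gam ξ δ s := gam_ge hs (fun v hv => by
    by_contra hc; push_neg at hc
    exact absurd (le_trans hv (xid_mono hξ hδ hc.le)) (not_le.2 h))
  exact absurd hu (not_lt.2 this)

theorem xid_lt_of_lt_gam (hξ : Monotone ξ) (hδ : 0 ≤ δ) {s u : ℝ} (hs : s ∈ Gset ξ δ)
    (hu : u < gam ξ δ s) : xid ξ δ u < s := by
  by_contra h
  push_neg at h
  exact absurd hu (not_lt.2 (gam_le hξ hδ hs h))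

theorem xid_intInt (hξ : Monotone ξ) (a b : ℝ) :
    IntervalIntegrable (xid ξ δ) MeasureTheory.volume a b :=
  hξ.intervalIntegrable.add
    ((continuous_const.mul Real.continuous_arctan).intervalIntegrable a b)

theorem Phi_cont (hξ : Monotone ξ) : Continuous (Phi ξ δ) :=
  intervalIntegral.continuous_primitive (xid_intInt hξ) 0

theorem Phi_diff (hξ : Monotone ξ) (a t : ℝ) :
    Phi ξ δ t - Phi ξ δ a = ∫ u in a..t, xid ξ δ u := by
  have h := intervalIntegral.integral_add_adjacent_intervals
    (xid_intInt hξ (δ := δ) 0 a) (xid_intInt hξ (δ := δ) a t)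
  unfold Phi
  linarith

theorem young_eq (hξ : Monotone ξ) {s : ℝ} (hs : s ∈ Gset ξ δ) (t : ℝ) :
    Phi ξ δ t + Psi ξ δ s - s * t = gap ξ δ s t := by
  unfold Psi gap
  have h1 : ∫ u in gam ξ δ s..t, (xid ξ δ u - s) =
      (∫ u in gam ξ δ s..t, xid ξ δ u) - (t - gam ξ δ s) * s := by
    rw [intervalIntegral.integral_sub (xid_intInt hξ _ _)
      (intervalIntegrable_const)]
    rw [intervalIntegral.integral_const, smul_eq_mul]
  rw [h1, ← Phi_diff hξ]
  ring

theorem gap_nonneg (hξ : Monotone ξ) (hδ : 0 ≤ δ) {s : ℝ} (hs : s ∈ Gset ξ δ) (t : ℝ) :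
    0 ≤ gap ξ δ s t := by
  set γ := gam ξ δ s with hγ
  have hne : ∀ᵐ u ∂(MeasureTheory.volume : Measure ℝ), u ≠ γ := by
    rw [MeasureTheory.ae_iff]
    simpa using MeasureTheory.measure_singleton (μ := (MeasureTheory.volume : Measure ℝ)) γ
  rcases le_total γ t with h | h
  · apply intervalIntegral.integral_nonneg_of_ae_restrict h
    filter_upwards [MeasureTheory.ae_restrict_mem measurableSet_Icc,
      MeasureTheory.ae_restrict_of_ae hne] with u hu hu2
    have : γ < u := lt_of_le_of_ne hu.1 (Ne.symm hu2)
    have := le_xid_of_gam_lt hξ hδ hs this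
    simp only [Pi.zero_apply]
    linarith
  · have hsymm : gap ξ δ s t = ∫ u in t..γ, (s - xid ξ δ u) := by
      unfold gap
      rw [intervalIntegral.integral_symm, ← intervalIntegral.integral_neg]
      simp
      rfl
    rw [hsymm]
    apply intervalIntegral.integral_nonneg_of_ae_restrict h
    filter_upwards [MeasureTheory.ae_restrict_mem measurableSet_Icc,
      MeasureTheory.ae_restrict_of_ae hne] with u hu hu2
    have : u < γ := lt_of_le_of_ne hu.2 hu2
    have := xid_lt_of_lt_gam hξ hδ hs this
    simp only [Pi.zero_apply]
    linarith

theorem gap_xi_le (hξ : Monotone ξ) (hδ : 0 < δ) (t : ℝ) :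
    gap ξ δ (ξ t) t ≤ δ * (Real.pi / 2) * |t| := by
  have hπ : (0:ℝ) < Real.pi / 2 := by positivity
  set s := ξ t with hsdef
  have hsG : s ∈ Gset ξ δ := mem_Gset hξ hδ t
  set γ := gam ξ δ s with hγ
  have h_lb : min t 0 ≤ γ := by
    apply gam_ge hsG
    intro v hv
    by_contra hc
    push_neg at hc
    have h1 : ξ v ≤ ξ t := hξ (by have := min_le_left t 0; linarith)
    have h2 : Real.arctan v < 0 := arctan_neg' (by have := min_le_right t 0; linarith)
    have : xid ξ δ v < s := by unfold xid; nlinarith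
    linarith
  have h_ub : γ ≤ max t 0 := by
    apply gam_le hξ hδ.le hsG
    have h1 : ξ t ≤ ξ (max t 0) := hξ (le_max_left _ _)
    have h2 : (0:ℝ) ≤ Real.arctan (max t 0) := arctan_nonneg' (le_max_right _ _)
    unfold xid; nlinarith
  rcases le_total 0 t with ht | ht
  · rw [max_eq_left ht] at h_ub
    rw [min_eq_right ht] at h_lb
    have hbound : gap ξ δ s t ≤ (t - γ) * (δ * (Real.pi / 2)) := by
      unfold gap
      calc ∫ u in γ..t, (xid ξ δ u - s)
          ≤ ∫ _u in γ..t, δ * (Real.pi / 2) := by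
            apply intervalIntegral.integral_mono_on h_ub
              ((xid_intInt hξ _ _).sub intervalIntegrable_const) intervalIntegrable_const
            intro u hu
            have h1 : ξ u ≤ ξ t := hξ hu.2
            have h2 : Real.arctan u ≤ Real.pi / 2 := (abs_le.1 (abs_arctan_le u)).2
            unfold xid; nlinarith
        _ = (t - γ) * (δ * (Real.pi / 2)) := by
            rw [intervalIntegral.integral_const, smul_eq_mul]
    have : (t - γ) * (δ * (Real.pi / 2)) ≤ t * (δ * (Real.pi / 2)) := by
      nlinarith [mul_nonneg h_lb (mul_nonneg hδ.le hπ.le)]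
    rw [abs_of_nonneg ht]
    nlinarith
  · rw [max_eq_right ht] at h_ub
    rw [min_eq_left ht] at h_lb
    have hsymm : gap ξ δ s t = ∫ u in t..γ, (s - xid ξ δ u) := by
      unfold gap
      rw [intervalIntegral.integral_symm, ← intervalIntegral.integral_neg]
      simp
      rfl
    have hbound : gap ξ δ s t ≤ (γ - t) * (δ * (Real.pi / 2)) := by
      rw [hsymm]
      calc ∫ u in t..γ, (s - xid ξ δ u)
          ≤ ∫ _u in t..γ, δ * (Real.pi / 2) := by
            apply intervalIntegral.integral_mono_on h_lb
              (intervalIntegrable_const.sub (xid_intInt hξ _ _)) intervalIntegrable_const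
            intro u hu
            have h1 : ξ t ≤ ξ u := hξ hu.1
            have h2 : -(Real.pi / 2) ≤ Real.arctan u := (abs_le.1 (abs_arctan_le u)).1
            unfold xid; nlinarith
        _ = (γ - t) * (δ * (Real.pi / 2)) := by
            rw [intervalIntegral.integral_const, smul_eq_mul]
    have : (γ - t) * (δ * (Real.pi / 2)) ≤ (-t) * (δ * (Real.pi / 2)) := by
      nlinarith [mul_nonneg (neg_nonneg.2 h_ub) (mul_nonneg hδ.le hπ.le)]
    rw [abs_of_nonpos ht]
    nlinarith

theorem Phi_abs_le (hξ : Monotone ξ) (hδ : 0 ≤ δ) (t : ℝ) :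
    |Phi ξ δ t| ≤ |t| * (|ξ t| + |ξ 0| + δ * (Real.pi / 2)) := by
  have hπ : (0:ℝ) < Real.pi / 2 := by positivity
  have habs : ∀ u, |Real.arctan u| ≤ Real.pi / 2 := abs_arctan_le
  rcases le_total 0 t with ht | ht
  · have hup : Phi ξ δ t ≤ t * (ξ t + δ * (Real.pi / 2)) := by
      unfold Phi
      calc ∫ u in (0:ℝ)..t, xid ξ δ u
          ≤ ∫ _u in (0:ℝ)..t, (ξ t + δ * (Real.pi / 2)) := by
            apply intervalIntegral.integral_mono_on ht (xid_intInt hξ _ _)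
              intervalIntegrable_const
            intro u hu
            have h1 : ξ u ≤ ξ t := hξ hu.2
            have h2 := (abs_le.1 (habs u)).2
            unfold xid; nlinarith
        _ = t * (ξ t + δ * (Real.pi / 2)) := by
            rw [intervalIntegral.integral_const, smul_eq_mul]; ring
    have hlo : t * (ξ 0 - δ * (Real.pi / 2)) ≤ Phi ξ δ t := by
      unfold Phi
      calc (t:ℝ) * (ξ 0 - δ * (Real.pi / 2))
          = ∫ _u in (0:ℝ)..t, (ξ 0 - δ * (Real.pi / 2)) := by
            rw [intervalIntegral.integral_const, smul_eq_mul]; ring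
        _ ≤ ∫ u in (0:ℝ)..t, xid ξ δ u := by
            apply intervalIntegral.integral_mono_on ht intervalIntegrable_const
              (xid_intInt hξ _ _)
            intro u hu
            have h1 : ξ 0 ≤ ξ u := hξ hu.1
            have h2 := (abs_le.1 (habs u)).1
            unfold xid; nlinarith
    rw [abs_of_nonneg ht]
    rw [abs_le]
    constructor
    · nlinarith [neg_abs_le (ξ 0), le_abs_self (ξ 0), neg_abs_le (ξ t), le_abs_self (ξ t)]
    · nlinarith [neg_abs_le (ξ 0), le_abs_self (ξ 0), neg_abs_le (ξ t), le_abs_self (ξ t)]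
  · have hPhi : Phi ξ δ t = -∫ u in t..(0:ℝ), xid ξ δ u := by
      unfold Phi
      rw [intervalIntegral.integral_symm]
    have hup : ∫ u in t..(0:ℝ), xid ξ δ u ≤ (-t) * (ξ 0 + δ * (Real.pi / 2)) := by
      calc ∫ u in t..(0:ℝ), xid ξ δ u
          ≤ ∫ _u in t..(0:ℝ), (ξ 0 + δ * (Real.pi / 2)) := by
            apply intervalIntegral.integral_mono_on ht (xid_intInt hξ _ _)
              intervalIntegrable_const
            intro u hu
            have h1 : ξ u ≤ ξ 0 := hξ hu.2
            have h2 := (abs_le.1 (habs u)).2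
            unfold xid; nlinarith
        _ = (-t) * (ξ 0 + δ * (Real.pi / 2)) := by
            rw [intervalIntegral.integral_const, smul_eq_mul]; ring
    have hlo : (-t) * (ξ t - δ * (Real.pi / 2)) ≤ ∫ u in t..(0:ℝ), xid ξ δ u := by
      calc (-t) * (ξ t - δ * (Real.pi / 2))
          = ∫ _u in t..(0:ℝ), (ξ t - δ * (Real.pi / 2)) := by
            rw [intervalIntegral.integral_const, smul_eq_mul]; ring
        _ ≤ ∫ u in t..(0:ℝ), xid ξ δ u := by
            apply intervalIntegral.integral_mono_on ht intervalIntegrable_const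
              (xid_intInt hξ _ _)
            intro u hu
            have h1 : ξ t ≤ ξ u := hξ hu.1
            have h2 := (abs_le.1 (habs u)).1
            unfold xid; nlinarith
    rw [hPhi, abs_of_nonpos ht, abs_le]
    constructor
    · nlinarith [neg_abs_le (ξ 0), le_abs_self (ξ 0), neg_abs_le (ξ t), le_abs_self (ξ t)]
    · nlinarith [neg_abs_le (ξ 0), le_abs_self (ξ 0), neg_abs_le (ξ t), le_abs_self (ξ t)]

theorem Gset_ordConnected : (Gset ξ δ).OrdConnected := by
  constructor
  intro x hx y hy z hz
  obtain ⟨⟨u1, hu1⟩, ⟨u2, hu2⟩⟩ := hx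
  obtain ⟨⟨v1, hv1⟩, ⟨v2, hv2⟩⟩ := hy
  exact ⟨⟨v1, le_trans hz.2 hv1⟩, ⟨u2, lt_of_lt_of_le hu2 hz.1⟩⟩

theorem Gset_measurable : MeasurableSet (Gset ξ δ) :=
  (Gset_ordConnected).measurableSet

theorem gam_monoOn (hξ : Monotone ξ) (hδ : 0 ≤ δ) :
    MonotoneOn (gam ξ δ) (Gset ξ δ) := by
  intro s1 hs1 s2 hs2 h
  rw [gam_eq hs1, gam_eq hs2]
  exact csInf_le_csInf (Gset_bddBelow hξ hδ hs1) (Gset_nonempty hs2)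
    (fun u hu => le_trans h hu)

theorem gam_measurable (hξ : Monotone ξ) (hδ : 0 ≤ δ) : Measurable (gam ξ δ) := by
  apply measurable_of_Iic
  intro c
  have : gam ξ δ ⁻¹' Iic c =
      (Gset ξ δ ∩ {s | gam ξ δ s ≤ c}) ∪ ((Gset ξ δ)ᶜ ∩ {s : ℝ | (0:ℝ) ≤ c}) := by
    ext s
    simp only [mem_preimage, mem_Iic, mem_union, mem_inter_iff, mem_compl_iff, mem_setOf_eq]
    by_cases hs : s ∈ Gset ξ δ
    · simp only [hs, true_and, not_true, false_and, or_false]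
    · have : gam ξ δ s = 0 := if_neg hs
      rw [this]
      simp [hs]
  rw [this]
  apply MeasurableSet.union
  · have hoc : (Gset ξ δ ∩ {s | gam ξ δ s ≤ c}).OrdConnected := by
      constructor
      intro x hx y hy z hz
      have hzG : z ∈ Gset ξ δ := Gset_ordConnected.out hx.1 hy.1 hz
      refine ⟨hzG, ?_⟩
      exact le_trans (gam_monoOn hξ hδ hzG hy.1 hz.2) hy.2
    exact hoc.measurableSet
  · by_cases hc : (0:ℝ) ≤ c
    · simp only [hc, setOf_true]
      simpa using Gset_measurable.compl
    · simp only [hc, setOf_false, inter_empty]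
      exact MeasurableSet.empty

theorem Psi_measurable (hξ : Monotone ξ) (hδ : 0 ≤ δ) : Measurable (Psi ξ δ) := by
  unfold Psi
  exact (measurable_id.mul (gam_measurable hξ hδ)).sub
    ((Phi_cont hξ).measurable.comp (gam_measurable hξ hδ))

theorem gap_lower_right (hξ : Monotone ξ) (hδ : 0 < δ) {s t u₀ : ℝ} (hs : s ∈ Gset ξ δ)
    (ht : t < u₀) (hu₀ : ξ u₀ < s) (hδ' : δ * (Real.pi / 2) < s - ξ u₀) :
    (u₀ - t) * (s - ξ u₀ - δ * (Real.pi / 2)) ≤ gap ξ δ s t := by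
  set γ := gam ξ δ s with hγ
  have hπ : (0:ℝ) < Real.pi / 2 := by positivity
  have habs : ∀ u, |Real.arctan u| ≤ Real.pi / 2 := abs_arctan_le
  have hγ_ge : u₀ ≤ γ := by
    apply gam_ge hs
    intro v hv
    by_contra hc
    push_neg at hc
    have h1 : ξ v ≤ ξ u₀ := hξ hc.le
    have h2 := (abs_le.1 (habs v)).2
    have : xid ξ δ v < s := by
      unfold xid
      nlinarith [mul_le_mul_of_nonneg_left h2 hδ.le]
    linarith
  have hsymm : gap ξ δ s t = ∫ u in t..γ, (s - xid ξ δ u) := by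
    unfold gap
    rw [intervalIntegral.integral_symm, ← intervalIntegral.integral_neg]
    simp
    rfl
  have hsplit : (∫ u in t..γ, (s - xid ξ δ u)) =
      (∫ u in t..u₀, (s - xid ξ δ u)) + ∫ u in u₀..γ, (s - xid ξ δ u) :=
    (intervalIntegral.integral_add_adjacent_intervals
      (intervalIntegrable_const.sub (xid_intInt hξ _ _))
      (intervalIntegrable_const.sub (xid_intInt hξ _ _))).symm
  have h2nn : 0 ≤ ∫ u in u₀..γ, (s - xid ξ δ u) := by
    apply intervalIntegral.integral_nonneg_of_ae_restrict hγ_ge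
    have hne : ∀ᵐ u ∂(MeasureTheory.volume : Measure ℝ), u ≠ γ := by
      rw [MeasureTheory.ae_iff]
      simpa using MeasureTheory.measure_singleton (μ := (MeasureTheory.volume : Measure ℝ)) γ
    filter_upwards [MeasureTheory.ae_restrict_mem measurableSet_Icc,
      MeasureTheory.ae_restrict_of_ae hne] with u hu hu2
    have : u < γ := lt_of_le_of_ne hu.2 hu2
    have := xid_lt_of_lt_gam hξ hδ.le hs this
    simp only [Pi.zero_apply]
    linarith
  have h1ge : (u₀ - t) * (s - ξ u₀ - δ * (Real.pi / 2)) ≤ ∫ u in t..u₀, (s - xid ξ δ u) := by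
    calc (u₀ - t) * (s - ξ u₀ - δ * (Real.pi / 2))
        = ∫ _u in t..u₀, (s - ξ u₀ - δ * (Real.pi / 2)) := by
          rw [intervalIntegral.integral_const, smul_eq_mul]
      _ ≤ ∫ u in t..u₀, (s - xid ξ δ u) := by
          apply intervalIntegral.integral_mono_on ht.le intervalIntegrable_const
            (intervalIntegrable_const.sub (xid_intInt hξ _ _))
          intro u hu
          have h1 : ξ u ≤ ξ u₀ := hξ hu.2
          have h2 := (abs_le.1 (habs u)).2
          unfold xid; nlinarith
  rw [hsymm, hsplit]
  linarith

theorem gap_lower_left (hξ : Monotone ξ) (hδ : 0 < δ) {s t u₀ : ℝ} (hs : s ∈ Gset ξ δ)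
    (ht : u₀ < t) (hu₀ : s < ξ u₀) (hδ' : δ * (Real.pi / 2) < ξ u₀ - s) :
    (t - u₀) * (ξ u₀ - s - δ * (Real.pi / 2)) ≤ gap ξ δ s t := by
  set γ := gam ξ δ s with hγ
  have hπ : (0:ℝ) < Real.pi / 2 := by positivity
  have habs : ∀ u, |Real.arctan u| ≤ Real.pi / 2 := abs_arctan_le
  have hγ_le : γ ≤ u₀ := by
    apply gam_le hξ hδ.le hs
    have h2 := (abs_le.1 (habs u₀)).1
    unfold xid
    nlinarith [mul_le_mul_of_nonneg_left h2 hδ.le]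
  have hsplit : gap ξ δ s t =
      (∫ u in γ..u₀, (xid ξ δ u - s)) + ∫ u in u₀..t, (xid ξ δ u - s) := by
    unfold gap
    exact (intervalIntegral.integral_add_adjacent_intervals
      ((xid_intInt hξ _ _).sub intervalIntegrable_const)
      ((xid_intInt hξ _ _).sub intervalIntegrable_const)).symm
  have h1nn : 0 ≤ ∫ u in γ..u₀, (xid ξ δ u - s) := by
    apply intervalIntegral.integral_nonneg_of_ae_restrict hγ_le
    have hne : ∀ᵐ u ∂(MeasureTheory.volume : Measure ℝ), u ≠ γ := by
      rw [MeasureTheory.ae_iff]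
      simpa using MeasureTheory.measure_singleton (μ := (MeasureTheory.volume : Measure ℝ)) γ
    filter_upwards [MeasureTheory.ae_restrict_mem measurableSet_Icc,
      MeasureTheory.ae_restrict_of_ae hne] with u hu hu2
    have : γ < u := lt_of_le_of_ne hu.1 (Ne.symm hu2)
    have := le_xid_of_gam_lt hξ hδ.le hs this
    simp only [Pi.zero_apply]
    linarith
  have h2ge : (t - u₀) * (ξ u₀ - s - δ * (Real.pi / 2)) ≤ ∫ u in u₀..t, (xid ξ δ u - s) := by
    calc (t - u₀) * (ξ u₀ - s - δ * (Real.pi / 2))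
        = ∫ _u in u₀..t, (ξ u₀ - s - δ * (Real.pi / 2)) := by
          rw [intervalIntegral.integral_const, smul_eq_mul]
      _ ≤ ∫ u in u₀..t, (xid ξ δ u - s) := by
          apply intervalIntegral.integral_mono_on ht.le intervalIntegrable_const
            ((xid_intInt hξ _ _).sub intervalIntegrable_const)
          intro u hu
          have h1 : ξ u₀ ≤ ξ u := hξ hu.1
          have h2 := (abs_le.1 (habs u)).1
          unfold xid; nlinarith
  rw [hsplit]
  linarith

section Transfer

variable {α : Type*} [MeasurableSpace α] {μ : Measure α} [IsFiniteMeasure μ]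
variable {f g : α → ℝ}

theorem map_eq_of_dist (hf : Measurable f) (hg : Measurable g)
    (h : ∀ t : ℝ, μ {x | t ≤ f x} = μ {x | t ≤ g x}) : μ.map f = μ.map g := by
  haveI := Measure.isFiniteMeasure_map μ f
  apply MeasureTheory.Measure.ext_of_Ici
  intro a
  rw [Measure.map_apply hf measurableSet_Ici, Measure.map_apply hg measurableSet_Ici]
  exact h a

theorem lintegral_comp_eq (hmap : μ.map f = μ.map g) (hf : Measurable f) (hg : Measurable g)
    {F : ℝ → ℝ≥0∞} (hF : Measurable F) :
    ∫⁻ x, F (f x) ∂μ = ∫⁻ x, F (g x) ∂μ := by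
  rw [← MeasureTheory.lintegral_map hF hf, hmap, MeasureTheory.lintegral_map hF hg]

theorem memLp_transfer (hmap : μ.map f = μ.map g) (hf : Measurable f) (hg : Measurable g)
    {e : ℝ≥0∞} (he0 : e ≠ 0) (het : e ≠ ∞) (hmem : MemLp g e μ) : MemLp f e μ := by
  refine ⟨hf.aestronglyMeasurable, ?_⟩
  rw [eLpNorm_eq_lintegral_rpow_enorm_toReal he0 het]
  have hF : Measurable (fun a : ℝ => ‖a‖ₑ ^ e.toReal) :=
    measurable_enorm.pow_const _
  have := lintegral_comp_eq hmap hf hg hF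
  rw [this, ← eLpNorm_eq_lintegral_rpow_enorm_toReal he0 het]
  exact hmem.2

theorem integrable_transfer (hmap : μ.map f = μ.map g) (hf : Measurable f) (hg : Measurable g)
    (hint : Integrable g μ) : Integrable f μ := by
  rw [← memLp_one_iff_integrable] at hint ⊢
  exact memLp_transfer hmap hf hg one_ne_zero ENNReal.one_ne_top hint

theorem map_comp_eq (hmap : μ.map f = μ.map g) (hf : Measurable f) (hg : Measurable g)
    {Ψ : ℝ → ℝ} (hΨ : Measurable Ψ) :
    μ.map (fun x => Ψ (f x)) = μ.map (fun x => Ψ (g x)) := by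
  have h1 := Measure.map_map hΨ hf (μ := μ)
  have h2 := Measure.map_map hΨ hg (μ := μ)
  calc μ.map (fun x => Ψ (f x)) = (μ.map f).map Ψ := h1.symm
    _ = (μ.map g).map Ψ := by rw [hmap]
    _ = μ.map (fun x => Ψ (g x)) := h2

theorem integral_comp_eq (hmap : μ.map f = μ.map g) (hf : Measurable f) (hg : Measurable g)
    {Ψ : ℝ → ℝ} (hΨ : Measurable Ψ) :
    ∫ x, Ψ (f x) ∂μ = ∫ x, Ψ (g x) ∂μ := by
  rw [← MeasureTheory.integral_map hf.aemeasurable hΨ.aestronglyMeasurable, hmap,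
    MeasureTheory.integral_map hg.aemeasurable hΨ.aestronglyMeasurable]

theorem ae_mem_transfer (hmap : μ.map f = μ.map g) (hf : Measurable f) (hg : Measurable g)
    {S : Set ℝ} (hS : MeasurableSet S) (hgS : ∀ x, g x ∈ S) : ∀ᵐ x ∂μ, f x ∈ S := by
  rw [MeasureTheory.ae_iff]
  have h1 : {x | ¬ f x ∈ S} = f ⁻¹' Sᶜ := rfl
  rw [h1, ← Measure.map_apply hf hS.compl, hmap, Measure.map_apply hg hS.compl]
  have : g ⁻¹' Sᶜ = ∅ := by
    ext x; simp [hgS x]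
  simp [this]

end Transfer

section Key

variable {α : Type*} [MeasurableSpace α] {μ : Measure α} [IsFiniteMeasure μ]

theorem key (μ : Measure α) [IsFiniteMeasure μ]
    {q : α → ℝ} (hq : Measurable q) {ξ : ℝ → ℝ} (hξ : Monotone ξ)
    {p s : ℝ} (hp : 1 < p) (hs : s = p / (p - 1))
    (hq_Ls : MemLp q (ENNReal.ofReal s) μ)
    (hfLp : MemLp (fun x => ξ (q x)) (ENNReal.ofReal p) μ)
    {ρ : α → ℝ} (hρ : Measurable ρ)
    (hmap : μ.map ρ = μ.map (fun x => ξ (q x))) :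
    (∫ x, ρ x * q x ∂μ ≤ ∫ x, ξ (q x) * q x ∂μ) ∧
    ((∫ x, ρ x * q x ∂μ) = (∫ x, ξ (q x) * q x ∂μ) →
      ∀ᵐ x ∂μ, sSup (ξ '' Iio (q x)) ≤ ρ x ∧ ρ x ≤ sInf (ξ '' Ioi (q x))) := by
  have hπ : (0:ℝ) < Real.pi / 2 := by positivity
  have hf_meas : Measurable (fun x => ξ (q x)) := hξ.measurable.comp hq
  have hp_pos : (0:ℝ) < p := by linarith
  have hs1 : 1 < s := by
    rw [hs]
    rw [lt_div_iff₀ (by linarith)]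
    linarith
  have hs_pos : (0:ℝ) < s := by linarith
  have hρLp : MemLp ρ (ENNReal.ofReal p) μ :=
    memLp_transfer hmap hρ hf_meas
      (by simp [ENNReal.ofReal_eq_zero]; linarith) ENNReal.ofReal_ne_top hfLp
  have h_conj : (1:ℝ≥0∞) / 1 = 1 / (ENNReal.ofReal p) + 1 / (ENNReal.ofReal s) := by
    rw [one_div, one_div, one_div, ← ENNReal.ofReal_inv_of_pos hp_pos,
      ← ENNReal.ofReal_inv_of_pos hs_pos, ← ENNReal.ofReal_add (by positivity) (by positivity)]
    rw [inv_one]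
    have : p⁻¹ + s⁻¹ = 1 := by
      rw [hs]
      field_simp
      ring
    rw [this, ENNReal.ofReal_one]
  have Int_ρq : Integrable (fun x => ρ x * q x) μ := by
    have := (haveI : ENNReal.HolderTriple (ENNReal.ofReal p) (ENNReal.ofReal s) 1 := ⟨by simpa [one_div] using h_conj.symm⟩; hq_Ls.smul hρLp (r := 1))
    rw [memLp_one_iff_integrable] at this
    exact this.congr (Filter.Eventually.of_forall (fun x => by simp [smul_eq_mul]))
  have Int_fq : Integrable (fun x => ξ (q x) * q x) μ := by
    have := (haveI : ENNReal.HolderTriple (ENNReal.ofReal p) (ENNReal.ofReal s) 1 := ⟨by simpa [one_div] using h_conj.symm⟩; hq_Ls.smul hfLp (r := 1))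
    rw [memLp_one_iff_integrable] at this
    exact this.congr (Filter.Eventually.of_forall (fun x => by simp [smul_eq_mul]))
  have Int_q : Integrable q μ :=
    hq_Ls.integrable (by rw [← ENNReal.ofReal_one]; exact ENNReal.ofReal_le_ofReal hs1.le)
  set C : ℝ := (Real.pi / 2) * ∫ x, |q x| ∂μ with hC
  have hC0 : 0 ≤ C := by
    apply mul_nonneg hπ.le
    apply integral_nonneg
    intro x; positivity
  -- the key δ-estimate
  have hδkey : ∀ δ : ℝ, 0 < δ →
      Integrable (fun x => Phi ξ δ (q x) + Psi ξ δ (ρ x) - ρ x * q x) μ ∧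
      (∀ᵐ x ∂μ, ρ x ∈ Gset ξ δ) ∧
      (0 ≤ ∫ x, (Phi ξ δ (q x) + Psi ξ δ (ρ x) - ρ x * q x) ∂μ) ∧
      ∫ x, (Phi ξ δ (q x) + Psi ξ δ (ρ x) - ρ x * q x) ∂μ ≤
        (∫ x, ξ (q x) * q x ∂μ) - (∫ x, ρ x * q x ∂μ) + δ * C := by
    intro δ hδ
    have hρG : ∀ᵐ x ∂μ, ρ x ∈ Gset ξ δ :=
      ae_mem_transfer hmap hρ hf_meas Gset_measurable (fun x => mem_Gset hξ hδ (q x))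
    have Int_Φq : Integrable (fun x => Phi ξ δ (q x)) μ := by
      apply Integrable.mono'
        (g := fun x => |ξ (q x) * q x| + (|ξ 0| + δ * (Real.pi / 2)) * |q x|)
        (Int_fq.abs.add (Int_q.abs.const_mul _))
        (((Phi_cont hξ).measurable.comp hq).aestronglyMeasurable)
      apply Filter.Eventually.of_forall
      intro x
      have := Phi_abs_le hξ hδ.le (q x)
      have habs : |q x| * |ξ (q x)| = |ξ (q x) * q x| := by
        rw [abs_mul]; ring
      calc ‖Phi ξ δ (q x)‖ = |Phi ξ δ (q x)| := rfl
        _ ≤ |q x| * (|ξ (q x)| + |ξ 0| + δ * (Real.pi / 2)) := this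
        _ = |ξ (q x) * q x| + (|ξ 0| + δ * (Real.pi / 2)) * |q x| := by
            rw [← habs]; ring
    have hW'_eq : ∀ x, Phi ξ δ (q x) + Psi ξ δ (ξ (q x)) - ξ (q x) * q x =
        gap ξ δ (ξ (q x)) (q x) := fun x => young_eq hξ (mem_Gset hξ hδ (q x)) (q x)
    have hW'_nonneg : ∀ x, 0 ≤ Phi ξ δ (q x) + Psi ξ δ (ξ (q x)) - ξ (q x) * q x := by
      intro x; rw [hW'_eq x]; exact gap_nonneg hξ hδ.le (mem_Gset hξ hδ (q x)) (q x)
    have hW'_le : ∀ x, Phi ξ δ (q x) + Psi ξ δ (ξ (q x)) - ξ (q x) * q x ≤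
        δ * (Real.pi / 2) * |q x| := by
      intro x; rw [hW'_eq x]; exact gap_xi_le hξ hδ (q x)
    have hW'_meas : Measurable (fun x => Phi ξ δ (q x) + Psi ξ δ (ξ (q x)) - ξ (q x) * q x) :=
      (((Phi_cont hξ).measurable.comp hq).add
        ((Psi_measurable hξ hδ.le).comp hf_meas)).sub (hf_meas.mul hq)
    have Int_W' : Integrable (fun x => Phi ξ δ (q x) + Psi ξ δ (ξ (q x)) - ξ (q x) * q x) μ := by
      apply Integrable.mono' (g := fun x => (δ * (Real.pi / 2)) * |q x|)
        (Int_q.abs.const_mul _) hW'_meas.aestronglyMeasurable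
      apply Filter.Eventually.of_forall
      intro x
      rw [Real.norm_eq_abs, abs_of_nonneg (hW'_nonneg x)]
      exact hW'_le x
    have Int_Ψf : Integrable (fun x => Psi ξ δ (ξ (q x))) μ := by
      apply ((Int_W'.sub Int_Φq).add Int_fq).congr
      apply Filter.Eventually.of_forall
      intro x
      simp only [Pi.add_apply, Pi.sub_apply]
      ring
    have Int_Ψρ : Integrable (fun x => Psi ξ δ (ρ x)) μ :=
      integrable_transfer (map_comp_eq hmap hρ hf_meas (Psi_measurable hξ hδ.le))
        ((Psi_measurable hξ hδ.le).comp hρ) ((Psi_measurable hξ hδ.le).comp hf_meas) Int_Ψf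
    have int_Ψ_eq : ∫ x, Psi ξ δ (ρ x) ∂μ = ∫ x, Psi ξ δ (ξ (q x)) ∂μ :=
      integral_comp_eq hmap hρ hf_meas (Psi_measurable hξ hδ.le)
    have Int_W : Integrable (fun x => Phi ξ δ (q x) + Psi ξ δ (ρ x) - ρ x * q x) μ :=
      (Int_Φq.add Int_Ψρ).sub Int_ρq
    refine ⟨Int_W, hρG, ?_, ?_⟩
    · apply integral_nonneg_of_ae
      filter_upwards [hρG] with x hxG
      have := young_eq hξ hxG (q x)
      have h2 := gap_nonneg hξ hδ.le hxG (q x)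
      simp only [Pi.zero_apply]
      linarith
    · have hsplit : ∫ x, (Phi ξ δ (q x) + Psi ξ δ (ρ x) - ρ x * q x) ∂μ =
          (∫ x, Phi ξ δ (q x) ∂μ) + (∫ x, Psi ξ δ (ρ x) ∂μ) - ∫ x, ρ x * q x ∂μ := by
        have hAB : Integrable (fun x => Phi ξ δ (q x) + Psi ξ δ (ρ x)) μ := Int_Φq.add Int_Ψρ
        have h2 := integral_sub hAB Int_ρq
        have h1 := integral_add Int_Φq Int_Ψρ
        exact h2.trans (by rw [h1])
      have hAB' : Integrable (fun x => Phi ξ δ (q x) + Psi ξ δ (ξ (q x))) μ := Int_Φq.add Int_Ψf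
      have hsplit' : ∫ x, (Phi ξ δ (q x) + Psi ξ δ (ξ (q x)) - ξ (q x) * q x) ∂μ =
          (∫ x, Phi ξ δ (q x) ∂μ) + (∫ x, Psi ξ δ (ξ (q x)) ∂μ) - ∫ x, ξ (q x) * q x ∂μ := by
        have h2 := integral_sub hAB' Int_fq
        have h1 := integral_add Int_Φq Int_Ψf
        exact h2.trans (by rw [h1])
      have hW'_int_le : ∫ x, (Phi ξ δ (q x) + Psi ξ δ (ξ (q x)) - ξ (q x) * q x) ∂μ ≤ δ * C := by
        calc ∫ x, (Phi ξ δ (q x) + Psi ξ δ (ξ (q x)) - ξ (q x) * q x) ∂μ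
            ≤ ∫ x, (δ * (Real.pi / 2)) * |q x| ∂μ := by
              apply integral_mono Int_W' (Int_q.abs.const_mul _)
              intro x
              exact hW'_le x
          _ = δ * C := by
              rw [integral_const_mul, hC]; ring
      rw [hsplit, int_Ψ_eq]
      linarith [hsplit', hW'_int_le]
  -- Part 1
  have part1 : ∫ x, ρ x * q x ∂μ ≤ ∫ x, ξ (q x) * q x ∂μ := by
    apply le_of_forall_pos_le_add
    intro ε hε
    have hδ : (0:ℝ) < ε / (C + 1) := by positivity
    obtain ⟨_, _, h0, hle⟩ := hδkey (ε / (C + 1)) hδ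
    have : ε / (C + 1) * C ≤ ε := by
      rw [div_mul_eq_mul_div, div_le_iff₀ (by linarith)]
      nlinarith
    linarith
  refine ⟨part1, ?_⟩
  -- Part 2
  intro heq
  set δseq : ℕ → ℝ := fun n => (1/2 : ℝ) ^ n with hδseq
  have hδseq_pos : ∀ n, 0 < δseq n := fun n => by positivity
  have hδseq_tendsto : Filter.Tendsto δseq Filter.atTop (nhds 0) :=
    tendsto_pow_atTop_nhds_zero_of_lt_one (by norm_num) (by norm_num)
  -- integrals tend to zero summably
  have hWn : ∀ n : ℕ,
      Integrable (fun x => Phi ξ (δseq n) (q x) + Psi ξ (δseq n) (ρ x) - ρ x * q x) μ ∧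
      (∀ᵐ x ∂μ, ρ x ∈ Gset ξ (δseq n)) ∧
      (0 ≤ ∫ x, (Phi ξ (δseq n) (q x) + Psi ξ (δseq n) (ρ x) - ρ x * q x) ∂μ) ∧
      ∫ x, (Phi ξ (δseq n) (q x) + Psi ξ (δseq n) (ρ x) - ρ x * q x) ∂μ ≤ δseq n * C := by
    intro n
    obtain ⟨h1, h2, h3, h4⟩ := hδkey (δseq n) (hδseq_pos n)
    exact ⟨h1, h2, h3, by rw [heq] at h4; linarith⟩
  set Wn : ℕ → α → ℝ := fun n x => Phi ξ (δseq n) (q x) + Psi ξ (δseq n) (ρ x) - ρ x * q x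
    with hWndef
  have hWn_meas : ∀ n, Measurable (Wn n) := fun n =>
    (((Phi_cont hξ).measurable.comp hq).add
      ((Psi_measurable hξ (hδseq_pos n).le).comp hρ)).sub (hρ.mul hq)
  have hWn_ae_nonneg : ∀ n, ∀ᵐ x ∂μ, 0 ≤ Wn n x := by
    intro n
    filter_upwards [(hWn n).2.1] with x hxG
    have h1 := young_eq hξ hxG (q x)
    have h2 := gap_nonneg hξ (hδseq_pos n).le hxG (q x)
    simp only [hWndef]
    linarith
  have hlint : ∀ n, ∫⁻ x, ENNReal.ofReal (Wn n x) ∂μ ≤ ENNReal.ofReal (δseq n * C) := by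
    intro n
    rw [← ofReal_integral_eq_lintegral_ofReal (hWn n).1 (hWn_ae_nonneg n)]
    exact ENNReal.ofReal_le_ofReal (hWn n).2.2.2
  have hsum_lt : ∫⁻ x, ∑' n, ENNReal.ofReal (Wn n x) ∂μ < ⊤ := by
    rw [lintegral_tsum (fun n => ((hWn_meas n).ennreal_ofReal).aemeasurable)]
    apply lt_of_le_of_lt (ENNReal.tsum_le_tsum hlint)
    have hgeo : ∀ n : ℕ, ENNReal.ofReal (δseq n * C) ≤
        (ENNReal.ofReal (1/2:ℝ))^n * ENNReal.ofReal C := by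
      intro n
      rw [ENNReal.ofReal_mul (hδseq_pos n).le, ← ENNReal.ofReal_pow (by norm_num : (0:ℝ) ≤ 1/2)]
    apply lt_of_le_of_lt (ENNReal.tsum_le_tsum hgeo)
    rw [ENNReal.tsum_mul_right]
    apply ENNReal.mul_lt_top
    · rw [ENNReal.tsum_geometric]
      rw [ENNReal.inv_lt_top, tsub_pos_iff_lt]
      exact ENNReal.ofReal_lt_one.2 (by norm_num)
    · exact ENNReal.ofReal_lt_top
  have h_ae_tendsto : ∀ᵐ x ∂μ,
      Filter.Tendsto (fun n => ENNReal.ofReal (Wn n x)) Filter.atTop (nhds 0) := by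
    filter_upwards [MeasureTheory.ae_lt_top
      (Measurable.ennreal_tsum (fun n => (hWn_meas n).ennreal_ofReal)) hsum_lt.ne] with x hx
    exact ENNReal.tendsto_atTop_zero_of_tsum_ne_top hx.ne
  have h_ae_G : ∀ᵐ x ∂μ, ∀ n, ρ x ∈ Gset ξ (δseq n) :=
    (MeasureTheory.ae_all_iff).2 (fun n => (hWn n).2.1)
  filter_upwards [h_ae_tendsto, h_ae_G] with x htend hG
  have hWx_eq : ∀ n, Wn n x = gap ξ (δseq n) (ρ x) (q x) := by
    intro n
    have h1 := young_eq hξ (hG n) (q x)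
    simp only [hWndef]
    linarith
  have hWx_nonneg : ∀ n, 0 ≤ Wn n x := fun n => by
    rw [hWx_eq n]
    exact gap_nonneg hξ (hδseq_pos n).le (hG n) (q x)
  have htendW : Filter.Tendsto (fun n => Wn n x) Filter.atTop (nhds 0) := by
    have h1 : Filter.Tendsto (fun n => (ENNReal.ofReal (Wn n x)).toReal)
        Filter.atTop (nhds ((0:ℝ≥0∞)).toReal) :=
      (ENNReal.tendsto_toReal (by simp)).comp htend
    rw [ENNReal.toReal_zero] at h1
    apply h1.congr
    intro n
    exact ENNReal.toReal_ofReal (hWx_nonneg n)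
  have hδπ_tend : Filter.Tendsto (fun n => δseq n * (Real.pi/2)) Filter.atTop (nhds 0) := by
    have := hδseq_tendsto.mul_const (Real.pi/2)
    rwa [zero_mul] at this
  constructor
  · -- sSup (ξ '' Iio (q x)) ≤ ρ x
    by_contra hcon
    push_neg at hcon
    have hbdd : BddAbove (ξ '' Iio (q x)) := by
      refine ⟨ξ (q x), ?_⟩
      rintro y ⟨u, hu, rfl⟩
      exact hξ (le_of_lt hu)
    have hne : (ξ '' Iio (q x)).Nonempty := ⟨ξ (q x - 1), ⟨q x - 1, by simp, rfl⟩⟩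
    obtain ⟨y, ⟨u₀, hu₀_mem, rfl⟩, hy⟩ := (lt_csSup_iff hbdd hne).1 hcon
    have hu₀lt : u₀ < q x := hu₀_mem
    set m : ℝ := ξ u₀ - ρ x with hm_def
    have hm : 0 < m := by simp only [hm_def]; linarith
    have hev1 : ∀ᶠ n in Filter.atTop, δseq n * (Real.pi/2) < m/2 :=
      hδπ_tend.eventually_lt_const (by linarith)
    have hev2 : ∀ᶠ n in Filter.atTop, Wn n x < (q x - u₀) * (m/2) :=
      htendW.eventually_lt_const (by nlinarith)
    obtain ⟨n, hn1, hn2⟩ := (hev1.and hev2).exists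
    have hlow := gap_lower_left hξ (hδseq_pos n) (hG n) hu₀lt hy (by linarith)
    rw [← hWx_eq n] at hlow
    nlinarith
  · -- ρ x ≤ sInf (ξ '' Ioi (q x))
    by_contra hcon
    push_neg at hcon
    have hbdd : BddBelow (ξ '' Ioi (q x)) := by
      refine ⟨ξ (q x), ?_⟩
      rintro y ⟨u, hu, rfl⟩
      exact hξ (le_of_lt hu)
    have hne : (ξ '' Ioi (q x)).Nonempty := ⟨ξ (q x + 1), ⟨q x + 1, by simp, rfl⟩⟩
    obtain ⟨y, ⟨u₀, hu₀_mem, rfl⟩, hy⟩ := (csInf_lt_iff hbdd hne).1 hcon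
    have hu₀gt : q x < u₀ := hu₀_mem
    set m : ℝ := ρ x - ξ u₀ with hm_def
    have hm : 0 < m := by simp only [hm_def]; linarith
    have hev1 : ∀ᶠ n in Filter.atTop, δseq n * (Real.pi/2) < m/2 :=
      hδπ_tend.eventually_lt_const (by linarith)
    have hev2 : ∀ᶠ n in Filter.atTop, Wn n x < (u₀ - q x) * (m/2) :=
      htendW.eventually_lt_const (by nlinarith)
    obtain ⟨n, hn1, hn2⟩ := (hev1.and hev2).exists
    have hlow := gap_lower_right hξ (hδseq_pos n) (hG n) hu₀gt hy (by linarith)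
    rw [← hWx_eq n] at hlow
    nlinarith

end Key

theorem endgame {α : Type*} [MeasurableSpace α] (μ : Measure α) [IsFiniteMeasure μ]
    {q ρ : α → ℝ} (hq : Measurable q) (hρ : Measurable ρ) {ξ : ℝ → ℝ} (hξ : Monotone ξ)
    (hdist : ∀ c : ℝ, μ {x | c ≤ ρ x} = μ {x | c ≤ ξ (q x)})
    (hsand : ∀ᵐ x ∂μ, sSup (ξ '' Iio (q x)) ≤ ρ x ∧ ρ x ≤ sInf (ξ '' Ioi (q x))) :
    ρ =ᵐ[μ] fun x => ξ (q x) := by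
  set l : ℝ → ℝ := fun t => sSup (ξ '' Iio t) with hl_def
  set r : ℝ → ℝ := fun t => sInf (ξ '' Ioi t) with hr_def
  have hbddA : ∀ t, BddAbove (ξ '' Iio t) := fun t =>
    ⟨ξ t, by rintro y ⟨u, hu, rfl⟩; exact hξ (le_of_lt hu)⟩
  have hbddB : ∀ t, BddBelow (ξ '' Ioi t) := fun t =>
    ⟨ξ t, by rintro y ⟨u, hu, rfl⟩; exact hξ (le_of_lt hu)⟩
  have hneA : ∀ t, (ξ '' Iio t).Nonempty := fun t => ⟨ξ (t - 1), ⟨t - 1, by simp, rfl⟩⟩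
  have hneB : ∀ t, (ξ '' Ioi t).Nonempty := fun t => ⟨ξ (t + 1), ⟨t + 1, by simp, rfl⟩⟩
  have hl_mono : Monotone l := fun t1 t2 h =>
    csSup_le_csSup (hbddA t2) (hneA t1) (image_mono (Iio_subset_Iio h))
  have hr_mono : Monotone r := fun t1 t2 h =>
    csInf_le_csInf (hbddB t1) (hneB t2) (image_mono (Ioi_subset_Ioi h))
  have hl_le : ∀ t, l t ≤ ξ t := fun t =>
    csSup_le (hneA t) (by rintro y ⟨u, hu, rfl⟩; exact hξ (le_of_lt hu))
  have hr_ge : ∀ t, ξ t ≤ r t := fun t =>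
    le_csInf (hneB t) (by rintro y ⟨u, hu, rfl⟩; exact hξ (le_of_lt hu))
  have hrl : ∀ t1 t2, t1 < t2 → r t1 ≤ l t2 := by
    intro t1 t2 h
    have h1 : r t1 ≤ ξ ((t1 + t2) / 2) :=
      csInf_le (hbddB t1) ⟨(t1 + t2) / 2, by simp only [mem_Ioi]; linarith, rfl⟩
    have h2 : ξ ((t1 + t2) / 2) ≤ l t2 :=
      le_csSup (hbddA t2) ⟨(t1 + t2) / 2, by simp only [mem_Iio]; linarith, rfl⟩
    linarith
  set S : Set α := {x | l (q x) ≤ ρ x ∧ ρ x ≤ r (q x)} with hS_def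
  have hS_meas : MeasurableSet S :=
    (measurableSet_le (hl_mono.measurable.comp hq) hρ).inter
      (measurableSet_le hρ (hr_mono.measurable.comp hq))
  have hS_null : μ Sᶜ = 0 := by
    rw [MeasureTheory.ae_iff] at hsand
    rw [hS_def, compl_setOf]
    exact hsand
  have hf_meas : Measurable (fun x => ξ (q x)) := hξ.measurable.comp hq
  -- per-threshold null sets
  have hthresh : ∀ c : ℝ,
      μ (S ∩ {x | ξ (q x) < c ∧ c ≤ ρ x}) = 0 ∧
      μ (S ∩ {x | ρ x < c ∧ c ≤ ξ (q x)}) = 0 := by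
    intro c
    set A : Set α := {x | c ≤ ρ x} with hA_def
    set B : Set α := {x | c ≤ ξ (q x)} with hB_def
    have hA_meas : MeasurableSet A := measurableSet_le measurable_const hρ
    have hB_meas : MeasurableSet B := measurableSet_le measurable_const hf_meas
    have hAB : μ A = μ B := hdist c
    have hdiff : μ (A \ B) = μ (B \ A) := by
      have h1 : μ (A \ B) + μ (A ∩ B) = μ A := measure_diff_add_inter A hB_meas
      have h2 : μ (B \ A) + μ (B ∩ A) = μ B := measure_diff_add_inter B hA_meas
      rw [inter_comm] at h2
      rw [hAB, ← h2] at h1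
      exact (ENNReal.add_left_inj (measure_ne_top μ _)).1 h1
    have hmemNp : ∀ x, x ∈ S ∩ {x | ξ (q x) < c ∧ c ≤ ρ x} →
        l (q x) < c ∧ c ≤ r (q x) := by
      rintro x ⟨hxS, hx1, hx2⟩
      exact ⟨lt_of_le_of_lt (hl_le (q x)) hx1, le_trans hx2 hxS.2⟩
    have hmemNm : ∀ x, x ∈ S ∩ {x | ρ x < c ∧ c ≤ ξ (q x)} →
        l (q x) < c ∧ c ≤ r (q x) := by
      rintro x ⟨hxS, hx1, hx2⟩
      exact ⟨lt_of_le_of_lt hxS.1 hx1, le_trans hx2 (hr_ge (q x))⟩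
    by_cases huc : ∃ u, l u < c ∧ c ≤ r u
    · obtain ⟨uc, huc1, huc2⟩ := huc
      have huniq : ∀ u, l u < c → c ≤ r u → u = uc := by
        intro u hu1 hu2
        rcases lt_trichotomy u uc with h | h | h
        · exact absurd (lt_of_le_of_lt (le_trans hu2 (hrl u uc h)) huc1) (lt_irrefl c)
        · exact h
        · exact absurd (lt_of_le_of_lt (le_trans huc2 (hrl uc u h)) hu1) (lt_irrefl c)
      by_cases hc : c ≤ ξ uc
      · have hNp_empty : S ∩ {x | ξ (q x) < c ∧ c ≤ ρ x} = ∅ := by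
          ext x
          simp only [mem_inter_iff, mem_setOf_eq, mem_empty_iff_false, iff_false, not_and]
          intro hxS hx1 hx2
          obtain ⟨h1, h2⟩ := hmemNp x ⟨hxS, hx1, hx2⟩
          rw [huniq (q x) h1 h2] at hx1
          linarith
        have hABnull : μ (A \ B) = 0 := by
          have hsub : A \ B ⊆ Sᶜ ∪ (S ∩ {x | ξ (q x) < c ∧ c ≤ ρ x}) := by
            intro x hx
            by_cases hxS : x ∈ S
            · right
              exact ⟨hxS, not_le.1 hx.2, hx.1⟩
            · left; exact hxS
          apply measure_mono_null hsub
          rw [hNp_empty]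
          simp [hS_null]
        refine ⟨by rw [hNp_empty]; simp, ?_⟩
        apply measure_mono_null (t := B \ A)
        · rintro x ⟨hxS, hx1, hx2⟩
          exact ⟨hx2, not_le.2 hx1⟩
        · rw [← hdiff]; exact hABnull
      · push_neg at hc
        have hNm_empty : S ∩ {x | ρ x < c ∧ c ≤ ξ (q x)} = ∅ := by
          ext x
          simp only [mem_inter_iff, mem_setOf_eq, mem_empty_iff_false, iff_false, not_and]
          intro hxS hx1 hx2
          obtain ⟨h1, h2⟩ := hmemNm x ⟨hxS, hx1, hx2⟩
          rw [huniq (q x) h1 h2] at hx2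
          linarith
        have hBAnull : μ (B \ A) = 0 := by
          have hsub : B \ A ⊆ Sᶜ ∪ (S ∩ {x | ρ x < c ∧ c ≤ ξ (q x)}) := by
            intro x hx
            by_cases hxS : x ∈ S
            · right
              exact ⟨hxS, not_le.1 hx.2, hx.1⟩
            · left; exact hxS
          apply measure_mono_null hsub
          rw [hNm_empty]
          simp [hS_null]
        refine ⟨?_, by rw [hNm_empty]; simp⟩
        apply measure_mono_null (t := A \ B)
        · rintro x ⟨hxS, hx1, hx2⟩
          exact ⟨hx2, not_le.2 hx1⟩
        · rw [hdiff]; exact hBAnull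
    · push_neg at huc
      constructor
      · have : S ∩ {x | ξ (q x) < c ∧ c ≤ ρ x} = ∅ := by
          ext x
          simp only [mem_inter_iff, mem_setOf_eq, mem_empty_iff_false, iff_false, not_and]
          intro hxS hx1 hx2
          obtain ⟨h1, h2⟩ := hmemNp x ⟨hxS, hx1, hx2⟩
          exact absurd h2 (not_le.2 (huc (q x) h1))
        rw [this]; simp
      · have : S ∩ {x | ρ x < c ∧ c ≤ ξ (q x)} = ∅ := by
          ext x
          simp only [mem_inter_iff, mem_setOf_eq, mem_empty_iff_false, iff_false, not_and]
          intro hxS hx1 hx2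
          obtain ⟨h1, h2⟩ := hmemNm x ⟨hxS, hx1, hx2⟩
          exact absurd h2 (not_le.2 (huc (q x) h1))
        rw [this]; simp
  -- conclusion
  have hfinal : μ {x | ρ x ≠ ξ (q x)} = 0 := by
    have hsub : {x | ρ x ≠ ξ (q x)} ⊆
        Sᶜ ∪ ⋃ c : ℚ, ((S ∩ {x | ξ (q x) < (c:ℝ) ∧ (c:ℝ) ≤ ρ x}) ∪
          (S ∩ {x | ρ x < (c:ℝ) ∧ (c:ℝ) ≤ ξ (q x)})) := by
      intro x hx
      by_cases hxS : x ∈ S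
      · right
        rcases lt_or_gt_of_ne (Ne.symm hx) with h | h
        · -- ξ (q x) < ρ x
          obtain ⟨c, hc1, hc2⟩ := exists_rat_btwn h
          exact mem_iUnion.2 ⟨c, Or.inl ⟨hxS, hc1, hc2.le⟩⟩
        · obtain ⟨c, hc1, hc2⟩ := exists_rat_btwn h
          exact mem_iUnion.2 ⟨c, Or.inr ⟨hxS, hc1, hc2.le⟩⟩
      · left; exact hxS
    apply measure_mono_null hsub
    apply measure_union_null hS_null
    apply measure_iUnion_null
    intro c
    exact measure_union_null (hthresh (c:ℝ)).1 (hthresh (c:ℝ)).2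
  rw [Filter.EventuallyEq, MeasureTheory.ae_iff]
  exact hfinal

end BurtonAux

open BurtonAux

/-- Burton's rearrangement lemma, maximization. Let `p > 1`,
`s = p/(p-1)`, `ρ₀ ∈ L^p(Ω)` nontrivial, `q ∈ L^s(Ω)` nontrivial, and suppose there is an
increasing function `ξ : ℝ → ℝ` with `ξ ∘ q` a rearrangement of `ρ₀`. Then
`∫_Ω ρ q ≤ ∫_Ω ξ(q) q` for every rearrangement `ρ` of `ρ₀`, and `ξ ∘ q` is the unique
maximizer up to a.e. equality. -/
theorem stmt3 {N : ℕ}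
    (Ω : Set (EuclideanSpace ℝ (Fin N)))
    (hΩ_meas : MeasurableSet Ω) (hΩ_bd : Bornology.IsBounded Ω)
    (p s : ℝ) (hp : 1 < p) (hs : s = p / (p - 1))
    (ρ₀ : EuclideanSpace ℝ (Fin N) → ℝ) (hρ₀_meas : Measurable ρ₀)
    (hρ₀_Lp : MemLp ρ₀ (ENNReal.ofReal p) (volume.restrict Ω))
    (hρ₀_ne : ¬ ρ₀ =ᵐ[volume.restrict Ω] 0)
    (q : EuclideanSpace ℝ (Fin N) → ℝ) (hq_meas : Measurable q)
    (hq_Ls : MemLp q (ENNReal.ofReal s) (volume.restrict Ω))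
    (hq_ne : ¬ q =ᵐ[volume.restrict Ω] 0)
    (ξ : ℝ → ℝ) (hξ_mono : Monotone ξ)
    (hξq_rearr : ∀ t : ℝ,
      volume {x ∈ Ω | t ≤ ξ (q x)} = volume {x ∈ Ω | t ≤ ρ₀ x}) :
    (∀ ρ : EuclideanSpace ℝ (Fin N) → ℝ, Measurable ρ →
      (∀ t : ℝ, volume {x ∈ Ω | t ≤ ρ x} = volume {x ∈ Ω | t ≤ ρ₀ x}) →
      ∫ x in Ω, ρ x * q x ≤ ∫ x in Ω, ξ (q x) * q x) ∧
    (∀ ρ : EuclideanSpace ℝ (Fin N) → ℝ, Measurable ρ →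
      (∀ t : ℝ, volume {x ∈ Ω | t ≤ ρ x} = volume {x ∈ Ω | t ≤ ρ₀ x}) →
      (∫ x in Ω, ρ x * q x) = ∫ x in Ω, ξ (q x) * q x →
      ρ =ᵐ[volume.restrict Ω] fun x => ξ (q x)) := by
  set μ : Measure (EuclideanSpace ℝ (Fin N)) := volume.restrict Ω with hμ
  haveI : IsFiniteMeasure μ := by
    constructor
    rw [hμ, Measure.restrict_apply_univ]
    exact hΩ_bd.measure_lt_top
  have hf_meas : Measurable (fun x => ξ (q x)) := hξ_mono.measurable.comp hq_meas
  have hconv : ∀ (f : EuclideanSpace ℝ (Fin N) → ℝ), Measurable f → ∀ t : ℝ,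
      μ {x | t ≤ f x} = volume {x ∈ Ω | t ≤ f x} := by
    intro f hf t
    rw [hμ, Measure.restrict_apply (measurableSet_le measurable_const hf)]
    congr 1
    ext x
    simp only [mem_inter_iff, mem_setOf_eq]
    tauto
  have hmap_f : μ.map (fun x => ξ (q x)) = μ.map ρ₀ :=
    map_eq_of_dist hf_meas hρ₀_meas
      (fun t => by rw [hconv _ hf_meas t, hconv _ hρ₀_meas t]; exact hξq_rearr t)
  have hfLp : MemLp (fun x => ξ (q x)) (ENNReal.ofReal p) μ :=
    memLp_transfer hmap_f hf_meas hρ₀_meas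
      (by simp [ENNReal.ofReal_eq_zero]; linarith) ENNReal.ofReal_ne_top hρ₀_Lp
  have hmapρ : ∀ ρ : EuclideanSpace ℝ (Fin N) → ℝ, Measurable ρ →
      (∀ t : ℝ, volume {x ∈ Ω | t ≤ ρ x} = volume {x ∈ Ω | t ≤ ρ₀ x}) →
      μ.map ρ = μ.map (fun x => ξ (q x)) := by
    intro ρ hρ hre
    refine map_eq_of_dist hρ hf_meas (fun t => ?_)
    rw [hconv _ hρ t, hconv _ hf_meas t, hre t, hξq_rearr t]
  constructor
  · intro ρ hρ hre
    exact (key μ hq_meas hξ_mono hp hs hq_Ls hfLp hρ (hmapρ ρ hρ hre)).1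
  · intro ρ hρ hre heq
    have hsand := (key μ hq_meas hξ_mono hp hs hq_Ls hfLp hρ (hmapρ ρ hρ hre)).2 heq
    refine endgame μ hq_meas hρ hξ_mono (fun c => ?_) hsand
    have h1 := hmapρ ρ hρ hre
    have h2 : μ (ρ ⁻¹' Ici c) = μ ((fun x => ξ (q x)) ⁻¹' Ici c) := by
      rw [← Measure.map_apply hρ measurableSet_Ici, h1,
        Measure.map_apply hf_meas measurableSet_Ici]
    exact h2
end

section
/- Let r > 1, s = r/(r−1), let ρ₀ ∈ L^r(Ω) with ρ₀ ≢ 0, let P be the set of all rearrangements of ρ₀, and let q ∈ L^s(Ω) with q ≢ 0. If there is a decreasing function η : ℝ → ℝ such that η∘q ∈ P, then for every ρ ∈ P one has ∫_Ω ρ q dx ≥ ∫_Ω η(q) q dx, and η∘q is the unique minimizer of ρ ↦ ∫_Ω ρ q dx over P (unique up to equality almost everywhere). -/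
open MeasureTheory Set
open scoped ENNReal NNReal

/-- Key lemma: abstract Burton minimization over a finite measure space. -/
lemma burton_key {α : Type*} [MeasurableSpace α] (μ : Measure α) [IsFiniteMeasure μ]
    (ρ f q : α → ℝ) (hρ : Measurable ρ) (hf : Measurable f) (hq : Measurable q)
    (hmap : Measure.map ρ μ = Measure.map f μ)
    (hqf : ∀ x y, q x ≤ q y → f y ≤ f x)
    (hq1 : Integrable q μ)
    (hbd : Integrable (fun x => |q x| * |ρ x - f x|) μ) :
    0 ≤ ∫ x, (ρ x - f x) * q x ∂μ ∧
    ((∫ x, (ρ x - f x) * q x ∂μ) = 0 → ρ =ᵐ[μ] f) := by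
  classical
  set A : ℝ → Set α := fun t => {x | f x < t ∧ t < ρ x} with hA_def
  set B : ℝ → Set α := fun t => {x | ρ x < t ∧ t < f x} with hB_def
  have hAmeas : ∀ t, MeasurableSet (A t) := fun t =>
    ((measurableSet_lt hf measurable_const).inter (measurableSet_lt measurable_const hρ))
  have hBmeas : ∀ t, MeasurableSet (B t) := fun t =>
    ((measurableSet_lt hρ measurable_const).inter (measurableSet_lt measurable_const hf))
  set F : α → ℝ → ℝ := fun x t =>
    q x * ((Ioo (f x) (ρ x)).indicator (fun _ => (1:ℝ)) t
      - (Ioo (ρ x) (f x)).indicator (fun _ => (1:ℝ)) t) with hF_def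
  -- measurability of the uncurried function
  have hS1 : MeasurableSet {z : α × ℝ | f z.1 < z.2 ∧ z.2 < ρ z.1} :=
    ((measurableSet_lt (hf.comp measurable_fst) measurable_snd).inter
      (measurableSet_lt measurable_snd (hρ.comp measurable_fst)))
  have hS2 : MeasurableSet {z : α × ℝ | ρ z.1 < z.2 ∧ z.2 < f z.1} :=
    ((measurableSet_lt (hρ.comp measurable_fst) measurable_snd).inter
      (measurableSet_lt measurable_snd (hf.comp measurable_fst)))
  have hFuncurry : Function.uncurry F = fun z : α × ℝ =>
      q z.1 * ({z : α × ℝ | f z.1 < z.2 ∧ z.2 < ρ z.1}.indicator (fun _ => (1:ℝ)) z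
        - {z : α × ℝ | ρ z.1 < z.2 ∧ z.2 < f z.1}.indicator (fun _ => (1:ℝ)) z) := by
    funext z
    have h1 : (Ioo (f z.1) (ρ z.1)).indicator (fun _ => (1:ℝ)) z.2
        = {z : α × ℝ | f z.1 < z.2 ∧ z.2 < ρ z.1}.indicator (fun _ => (1:ℝ)) z := by
      by_cases h : f z.1 < z.2 ∧ z.2 < ρ z.1 <;>
        simp [Set.indicator_apply, Set.mem_Ioo, h]
    have h2 : (Ioo (ρ z.1) (f z.1)).indicator (fun _ => (1:ℝ)) z.2
        = {z : α × ℝ | ρ z.1 < z.2 ∧ z.2 < f z.1}.indicator (fun _ => (1:ℝ)) z := by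
      by_cases h : ρ z.1 < z.2 ∧ z.2 < f z.1 <;>
        simp [Set.indicator_apply, Set.mem_Ioo, h]
    simp only [Function.uncurry, hF_def, h1, h2]
  have hFmeas : Measurable (Function.uncurry F) := by
    rw [hFuncurry]
    exact (hq.comp measurable_fst).mul
      (((measurable_const.indicator hS1)).sub ((measurable_const.indicator hS2)))
  -- integrability of F on the product
  have habs : ∀ x t, ‖F x t‖ = |q x| * ((Ioo (f x) (ρ x)).indicator (fun _ => (1:ℝ)) t
      + (Ioo (ρ x) (f x)).indicator (fun _ => (1:ℝ)) t) := by
    intro x t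
    by_cases h1 : t ∈ Ioo (f x) (ρ x) <;> by_cases h2 : t ∈ Ioo (ρ x) (f x)
    · exact absurd h2 (by simp only [Set.mem_Ioo] at h1 ⊢; intro h2; linarith [h1.1, h1.2, h2.1, h2.2])
    all_goals simp [hF_def, h1, h2, abs_mul]
  have hioo_int : ∀ a b : ℝ, Integrable ((Ioo a b).indicator (fun _ => (1:ℝ))) volume := by
    intro a b
    rw [integrable_indicator_iff measurableSet_Ioo]
    exact integrableOn_const measure_Ioo_lt_top.ne
  have hslice : ∀ x, Integrable (F x) volume := by
    intro x
    exact (((hioo_int (f x) (ρ x)).sub (hioo_int (ρ x) (f x))).const_mul (q x))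
  have hnormint : ∀ x, (∫ t, ‖F x t‖ ∂volume) = |q x| * |ρ x - f x| := by
    intro x
    have : (∫ t, ‖F x t‖ ∂volume)
        = |q x| * ((volume (Ioo (f x) (ρ x))).toReal + (volume (Ioo (ρ x) (f x))).toReal) := by
      simp_rw [habs x]
      rw [integral_const_mul, integral_add (hioo_int _ _) (hioo_int _ _),
        integral_indicator_const _ measurableSet_Ioo,
        integral_indicator_const _ measurableSet_Ioo, measureReal_def, measureReal_def]
      simp
    rw [this, Real.volume_Ioo, Real.volume_Ioo]
    rcases le_total (f x) (ρ x) with h | h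
    · rw [ENNReal.toReal_ofReal (by linarith), ENNReal.ofReal_of_nonpos (by linarith),
        abs_of_nonneg (by linarith : (0:ℝ) ≤ ρ x - f x)]
      simp
    · rw [ENNReal.ofReal_of_nonpos (by linarith), ENNReal.toReal_ofReal (by linarith),
        abs_of_nonpos (by linarith : ρ x - f x ≤ 0)]
      simp
  have hFint : Integrable (Function.uncurry F) (μ.prod volume) := by
    rw [integrable_prod_iff hFmeas.aestronglyMeasurable]
    constructor
    · exact Filter.Eventually.of_forall fun x => hslice x
    · apply Integrable.congr hbd
      exact Filter.Eventually.of_forall fun x => (hnormint x).symm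
  -- the swap identity
  have hinner : ∀ x, (∫ t, F x t ∂volume) = (ρ x - f x) * q x := by
    intro x
    rw [hF_def]
    simp only
    rw [integral_const_mul, integral_sub (hioo_int _ _) (hioo_int _ _),
      integral_indicator_const _ measurableSet_Ioo,
      integral_indicator_const _ measurableSet_Ioo, measureReal_def, measureReal_def,
      Real.volume_Ioo, Real.volume_Ioo]
    rcases le_total (f x) (ρ x) with h | h
    · rw [ENNReal.toReal_ofReal (by linarith), ENNReal.ofReal_of_nonpos (by linarith)]
      simp; ring
    · rw [ENNReal.ofReal_of_nonpos (by linarith), ENNReal.toReal_ofReal (by linarith)]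
      simp; ring
  have hswap : ∫ x, (ρ x - f x) * q x ∂μ = ∫ t, (∫ x, F x t ∂μ) ∂volume := by
    rw [← integral_integral_swap hFint]
    exact integral_congr_ae (Filter.Eventually.of_forall fun x => (hinner x).symm)
  -- countability of atoms
  have hatom : ∀ g : α → ℝ, Measurable g → {t : ℝ | μ {x | g x = t} ≠ 0}.Countable := by
    intro g hg
    apply (countable_meas_le_ne_meas_lt μ g).mono
    intro t ht
    simp only [mem_setOf_eq] at ht ⊢
    intro hEq
    apply ht
    have hsub : {a | t < g a} ⊆ {a | t ≤ g a} := by intro a ha; simp only [mem_setOf_eq] at ha ⊢; exact ha.le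
    have hset : {x | g x = t} = {a | t ≤ g a} \ {a | t < g a} := by
      ext x; simp only [mem_setOf_eq, mem_diff, not_lt]
      constructor
      · intro h; exact ⟨le_of_eq h.symm, le_of_eq h⟩
      · intro h; exact le_antisymm h.2 h.1
    rw [hset, measure_diff hsub (measurableSet_lt measurable_const hg).nullMeasurableSet
      (measure_ne_top μ _), hEq, tsub_self]
  have hgood : ∀ᵐ t ∂(volume : Measure ℝ), μ {x | ρ x = t} = 0 ∧ μ {x | f x = t} = 0 := by
    rw [MeasureTheory.ae_iff]
    refine measure_mono_null (fun t ht => ?_)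
      (Set.Countable.measure_zero ((hatom ρ hρ).union (hatom f hf)) volume)
    simp only [mem_setOf_eq, not_and_or] at ht
    rcases ht with h | h
    · exact Or.inl h
    · exact Or.inr h
  -- for good t, μ (A t) = μ (B t)
  have hmapIoi : ∀ t : ℝ, μ {x | t < ρ x} = μ {x | t < f x} := by
    intro t
    have h1 : μ (ρ ⁻¹' Ioi t) = μ (f ⁻¹' Ioi t) := by
      rw [← Measure.map_apply hρ measurableSet_Ioi, ← Measure.map_apply hf measurableSet_Ioi,
        hmap]
    simpa [Set.preimage, Set.mem_Ioi] using h1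
  have hAB : ∀ t : ℝ, μ {x | ρ x = t} = 0 → μ {x | f x = t} = 0 → μ (A t) = μ (B t) := by
    intro t hρt hft
    have hsplit : ∀ g h : α → ℝ, Measurable g → Measurable h → μ {x | h x = t} = 0 →
        μ {x | t < g x} = μ {x | h x < t ∧ t < g x} + μ ({x | t < g x} ∩ {x | t < h x}) := by
      intro g h hgm hhm hht
      have hdecomp : {x | t < g x} = ({x | h x < t ∧ t < g x}) ∪ ({x | t < g x} ∩ {x | t ≤ h x}) := by
        ext x; simp only [mem_setOf_eq, mem_union, mem_inter_iff]
        constructor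
        · intro hx
          rcases lt_or_ge (h x) t with h1 | h1
          · exact Or.inl ⟨h1, hx⟩
          · exact Or.inr ⟨hx, h1⟩
        · rintro (⟨_, hx⟩ | ⟨hx, _⟩) <;> exact hx
      have hdisj : Disjoint {x | h x < t ∧ t < g x} ({x | t < g x} ∩ {x | t ≤ h x}) := by
        rw [Set.disjoint_left]
        rintro x ⟨h1, _⟩ ⟨_, h2⟩
        exact absurd h2 (not_le.2 h1)
      conv_lhs => rw [hdecomp]
      rw [measure_union hdisj ((measurableSet_lt measurable_const hgm).inter
        (measurableSet_le measurable_const hhm))]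
      congr 1
      -- μ ({t < g} ∩ {t ≤ h}) = μ ({t < g} ∩ {t < h})
      apply le_antisymm
      · have : {x | t < g x} ∩ {x | t ≤ h x}
            ⊆ ({x | t < g x} ∩ {x | t < h x}) ∪ {x | h x = t} := by
          rintro x ⟨h1, h2⟩
          simp only [mem_setOf_eq] at h1 h2
          rcases lt_or_eq_of_le h2 with h3 | h3
          · exact Or.inl ⟨h1, h3⟩
          · exact Or.inr h3.symm
        calc μ ({x | t < g x} ∩ {x | t ≤ h x})
            ≤ μ (({x | t < g x} ∩ {x | t < h x}) ∪ {x | h x = t}) := measure_mono this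
          _ ≤ μ ({x | t < g x} ∩ {x | t < h x}) + μ {x | h x = t} := measure_union_le _ _
          _ = μ ({x | t < g x} ∩ {x | t < h x}) := by rw [hht, add_zero]
      · apply measure_mono
        rintro x ⟨h1, h2⟩
        simp only [mem_setOf_eq] at h1 h2 ⊢
        exact ⟨h1, h2.le⟩
    have h1 := hsplit ρ f hρ hf hft
    have h2 := hsplit f ρ hf hρ hρt
    rw [Set.inter_comm] at h2
    have key : μ (A t) + μ ({x | t < ρ x} ∩ {x | t < f x})
        = μ (B t) + μ ({x | t < ρ x} ∩ {x | t < f x}) := by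
      rw [← h1, ← h2, hmapIoi t]
    exact (ENNReal.add_left_inj (measure_ne_top μ _)).1 key
  -- the inner integral as a difference of set integrals
  have hCt_eq : ∀ t : ℝ, (∫ x, F x t ∂μ)
      = (∫ x in A t, q x ∂μ) - ∫ x in B t, q x ∂μ := by
    intro t
    have hpt : ∀ x, F x t = (A t).indicator q x - (B t).indicator q x := by
      intro x
      have e1 : (Ioo (f x) (ρ x)).indicator (fun _ => (1:ℝ)) t
          = (A t).indicator (fun _ => (1:ℝ)) x := by
        by_cases h : f x < t ∧ t < ρ x <;> simp [Set.indicator_apply, Set.mem_Ioo, hA_def, h]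
      have e2 : (Ioo (ρ x) (f x)).indicator (fun _ => (1:ℝ)) t
          = (B t).indicator (fun _ => (1:ℝ)) x := by
        by_cases h : ρ x < t ∧ t < f x <;> simp [Set.indicator_apply, Set.mem_Ioo, hB_def, h]
      rw [hF_def]
      simp only [e1, e2]
      by_cases h1 : x ∈ A t <;> by_cases h2 : x ∈ B t <;>
        simp [Set.indicator_apply, h1, h2]
    rw [integral_congr_ae (Filter.Eventually.of_forall hpt),
      integral_sub (hq1.indicator (hAmeas t)) (hq1.indicator (hBmeas t)),
      integral_indicator (hAmeas t), integral_indicator (hBmeas t)]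
  -- nonnegativity and the equality case at each good level t
  have hCt : ∀ t : ℝ, μ (A t) = μ (B t) →
      0 ≤ (∫ x, F x t ∂μ) ∧ ((∫ x, F x t ∂μ) = 0 → μ (A t) = 0) := by
    intro t hABt
    rcases eq_or_ne (μ (A t)) 0 with hA0 | hA0
    · have hB0 : μ (B t) = 0 := hABt ▸ hA0
      have : (∫ x, F x t ∂μ) = 0 := by
        rw [hCt_eq t, Measure.restrict_eq_zero.2 hA0, Measure.restrict_eq_zero.2 hB0]
        simp
      exact ⟨le_of_eq this.symm, fun _ => hA0⟩
    · have hB0 : μ (B t) ≠ 0 := hABt ▸ hA0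
      obtain ⟨x₀, hx₀⟩ := nonempty_of_measure_ne_zero hA0
      obtain ⟨y₀, hy₀⟩ := nonempty_of_measure_ne_zero hB0
      have hsep : ∀ x ∈ A t, ∀ y ∈ B t, q y < q x := by
        intro x hx y hy
        by_contra hcon
        push_neg at hcon
        have := hqf x y hcon
        simp only [hA_def, hB_def, mem_setOf_eq] at hx hy
        linarith [hx.1, hy.2]
      set s₀ := sSup (q '' B t) with hs₀
      have hbddB : BddAbove (q '' B t) := by
        refine ⟨q x₀, ?_⟩
        rintro _ ⟨y, hy, rfl⟩
        exact (hsep x₀ hx₀ y hy).le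
      have hsA : ∀ x ∈ A t, s₀ ≤ q x := by
        intro x hx
        apply csSup_le ⟨q y₀, mem_image_of_mem q hy₀⟩
        rintro _ ⟨y, hy, rfl⟩
        exact (hsep x hx y hy).le
      have hsB : ∀ y ∈ B t, q y ≤ s₀ := fun y hy => le_csSup hbddB (mem_image_of_mem q hy)
      have hIB : (∫ x in B t, q x ∂μ) ≤ s₀ * (μ (B t)).toReal := by
        calc (∫ x in B t, q x ∂μ) ≤ ∫ _ in B t, s₀ ∂μ :=
              setIntegral_mono_on hq1.integrableOn (integrableOn_const
                (measure_lt_top μ _).ne) (hBmeas t) hsB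
          _ = s₀ * (μ (B t)).toReal := by rw [setIntegral_const, measureReal_def, smul_eq_mul]; ring
      have hIA : s₀ * (μ (A t)).toReal ≤ ∫ x in A t, q x ∂μ := by
        calc s₀ * (μ (A t)).toReal = ∫ _ in A t, s₀ ∂μ := by rw [setIntegral_const, measureReal_def, smul_eq_mul]; ring
          _ ≤ ∫ x in A t, q x ∂μ :=
              setIntegral_mono_on (integrableOn_const
                (measure_lt_top μ _).ne) hq1.integrableOn (hAmeas t) hsA
      have hmeq : (μ (A t)).toReal = (μ (B t)).toReal := by rw [hABt]
      constructor
      · rw [hCt_eq t]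
        rw [hmeq] at hIA
        linarith
      · intro h0
        exfalso
        rw [hCt_eq t] at h0
        have hABint : (∫ x in A t, q x ∂μ) = ∫ x in B t, q x ∂μ := by linarith
        -- q = s₀ a.e. on A t
        have hqA : ∀ᵐ x ∂(μ.restrict (A t)), q x = s₀ := by
          have hintz : (∫ x in A t, (q x - s₀) ∂μ) = 0 := by
            rw [integral_sub hq1.integrableOn (integrableOn_const
              (measure_lt_top μ _).ne), setIntegral_const, measureReal_def]
            rw [hmeq] at hIA ⊢
            have : (∫ x in A t, q x ∂μ) = s₀ * (μ (B t)).toReal := le_antisymm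
              (hABint ▸ hIB) hIA
            rw [this, smul_eq_mul]; ring
          have hnn : 0 ≤ᵐ[μ.restrict (A t)] fun x => q x - s₀ := by
            refine (MeasureTheory.ae_restrict_iff' (hAmeas t)).2 ?_
            exact Filter.Eventually.of_forall fun x hx => sub_nonneg.2 (hsA x hx)
          have := (integral_eq_zero_iff_of_nonneg_ae hnn
            (hq1.integrableOn.sub (integrableOn_const (measure_lt_top μ _).ne))).1 hintz
          filter_upwards [this] with x hx
          have : q x - s₀ = 0 := hx
          linarith
        have hqB : ∀ᵐ x ∂(μ.restrict (B t)), q x = s₀ := by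
          have hintz : (∫ x in B t, (s₀ - q x) ∂μ) = 0 := by
            rw [integral_sub (integrableOn_const (C := s₀)
              (measure_lt_top μ _).ne) hq1.integrableOn, setIntegral_const, measureReal_def]
            rw [hmeq] at hIA
            have : (∫ x in B t, q x ∂μ) = s₀ * (μ (B t)).toReal := le_antisymm
              hIB (hABint ▸ hIA)
            rw [this, smul_eq_mul]; ring
          have hnn : 0 ≤ᵐ[μ.restrict (B t)] fun x => s₀ - q x := by
            refine (MeasureTheory.ae_restrict_iff' (hBmeas t)).2 ?_
            exact Filter.Eventually.of_forall fun x hx => sub_nonneg.2 (hsB x hx)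
          have := (integral_eq_zero_iff_of_nonneg_ae hnn
            ((integrableOn_const (measure_lt_top μ _).ne).sub hq1.integrableOn)).1 hintz
          filter_upwards [this] with x hx
          have : s₀ - q x = 0 := hx
          linarith
        -- extract witnesses
        have hwitA : ∃ x, x ∈ A t ∧ q x = s₀ := by
          by_contra hcon
          push_neg at hcon
          have : μ.restrict (A t) {x | ¬ q x = s₀} = 0 := by
            have h' := hqA
            rw [MeasureTheory.ae_iff] at h'
            exact h'
          have hms : MeasurableSet {x | ¬ q x = s₀} := (hq (MeasurableSet.singleton s₀)).compl
          rw [Measure.restrict_apply hms] at this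
          apply hA0
          have hsub2 : A t ⊆ {x | ¬ q x = s₀} ∩ A t := fun x hx => ⟨hcon x hx, hx⟩
          exact measure_mono_null hsub2 this
        have hwitB : ∃ y, y ∈ B t ∧ q y = s₀ := by
          by_contra hcon
          push_neg at hcon
          have : μ.restrict (B t) {x | ¬ q x = s₀} = 0 := by
            have h' := hqB
            rw [MeasureTheory.ae_iff] at h'
            exact h'
          have hms : MeasurableSet {x | ¬ q x = s₀} := (hq (MeasurableSet.singleton s₀)).compl
          rw [Measure.restrict_apply hms] at this
          apply hB0
          have hsub2 : B t ⊆ {x | ¬ q x = s₀} ∩ B t := fun x hx => ⟨hcon x hx, hx⟩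
          exact measure_mono_null hsub2 this
        obtain ⟨x₁, hx₁, hqx₁⟩ := hwitA
        obtain ⟨y₁, hy₁, hqy₁⟩ := hwitB
        have hfeq : f x₁ = f y₁ :=
          le_antisymm (hqf y₁ x₁ (by rw [hqx₁, hqy₁])) (hqf x₁ y₁ (by rw [hqx₁, hqy₁]))
        simp only [hA_def, hB_def, mem_setOf_eq] at hx₁ hy₁
        linarith [hx₁.1, hy₁.2]
  -- assemble
  have hgood' : ∀ᵐ t ∂(volume : Measure ℝ), μ (A t) = μ (B t) := by
    filter_upwards [hgood] with t ht
    exact hAB t ht.1 ht.2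
  have hC_nonneg : ∀ᵐ t ∂(volume : Measure ℝ), 0 ≤ ∫ x, F x t ∂μ := by
    filter_upwards [hgood'] with t ht
    exact (hCt t ht).1
  constructor
  · rw [hswap]
    exact integral_nonneg_of_ae hC_nonneg
  · intro h0
    have hCint : Integrable (fun t => ∫ x, F x t ∂μ) volume := by
      have := hFint.integral_prod_right
      exact this
    have hC0 : (fun t => ∫ x, F x t ∂μ) =ᵐ[volume] 0 := by
      refine (integral_eq_zero_iff_of_nonneg_ae hC_nonneg hCint).1 ?_
      rw [← hswap]; exact h0
    have hA0ae : ∀ᵐ t ∂(volume : Measure ℝ), μ (A t) = 0 ∧ μ (B t) = 0 := by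
      filter_upwards [hgood', hC0] with t ht h0t
      have hAt := (hCt t ht).2 h0t
      exact ⟨hAt, ht ▸ hAt⟩
    -- convert to a.e. statements about ρ and f
    have hprod : ∀ (S : Set (α × ℝ)), MeasurableSet S →
        (∀ᵐ t ∂(volume : Measure ℝ), μ ((fun x => (x, t)) ⁻¹' S) = 0) →
        (∀ᵐ x ∂μ, volume (Prod.mk x ⁻¹' S) = 0) := by
      intro S hS h
      have h1 : (μ.prod volume) S = 0 := by
        rw [Measure.prod_apply_symm hS]
        rw [lintegral_congr_ae h]
        simp
      rw [Measure.prod_apply hS] at h1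
      exact (lintegral_eq_zero_iff (measurable_measure_prodMk_left hS)).1 h1
    have h1 : ∀ᵐ x ∂μ, ρ x ≤ f x := by
      have := hprod {z : α × ℝ | f z.1 < z.2 ∧ z.2 < ρ z.1} hS1 ?_
      · filter_upwards [this] with x hx
        have : Prod.mk x ⁻¹' {z : α × ℝ | f z.1 < z.2 ∧ z.2 < ρ z.1} = Ioo (f x) (ρ x) := by
          ext t; simp [Set.mem_Ioo]
        rw [this, Real.volume_Ioo] at hx
        have := ENNReal.ofReal_eq_zero.1 hx
        linarith
      · filter_upwards [hA0ae] with t ht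
        have : (fun x => (x, t)) ⁻¹' {z : α × ℝ | f z.1 < z.2 ∧ z.2 < ρ z.1} = A t := by
          ext x; simp [hA_def]
        rw [this]; exact ht.1
    have h2 : ∀ᵐ x ∂μ, f x ≤ ρ x := by
      have := hprod {z : α × ℝ | ρ z.1 < z.2 ∧ z.2 < f z.1} hS2 ?_
      · filter_upwards [this] with x hx
        have : Prod.mk x ⁻¹' {z : α × ℝ | ρ z.1 < z.2 ∧ z.2 < f z.1} = Ioo (ρ x) (f x) := by
          ext t; simp [Set.mem_Ioo]
        rw [this, Real.volume_Ioo] at hx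
        have := ENNReal.ofReal_eq_zero.1 hx
        linarith
      · filter_upwards [hA0ae] with t ht
        have : (fun x => (x, t)) ⁻¹' {z : α × ℝ | ρ z.1 < z.2 ∧ z.2 < f z.1} = B t := by
          ext x; simp [hB_def]
        rw [this]; exact ht.2
    filter_upwards [h1, h2] with x hx1 hx2
    exact le_antisymm hx1 hx2


/-- Transfer of `MemLp` along equality of pushforward measures. -/
lemma memLp_of_map_eq {α : Type*} [MeasurableSpace α] {μ : Measure α}
    {g h : α → ℝ} (hg : Measurable g) (hh : Measurable h)
    (hmap : Measure.map g μ = Measure.map h μ) {P : ℝ≥0∞} (hP0 : P ≠ 0) (hPtop : P ≠ ∞)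
    (hmem : MemLp h P μ) : MemLp g P μ := by
  refine ⟨hg.aestronglyMeasurable, ?_⟩
  have hlint : (∫⁻ x, (‖g x‖₊ : ℝ≥0∞) ^ P.toReal ∂μ)
      = ∫⁻ x, (‖h x‖₊ : ℝ≥0∞) ^ P.toReal ∂μ := by
    have hmeas : Measurable fun y : ℝ => (‖y‖₊ : ℝ≥0∞) ^ P.toReal :=
      (measurable_nnnorm.comp measurable_id).coe_nnreal_ennreal.pow_const _
    rw [← lintegral_map hmeas hg, ← lintegral_map hmeas hh, hmap]
  have := hmem.2
  rw [eLpNorm_eq_lintegral_rpow_enorm_toReal hP0 hPtop] at this ⊢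
  simp only [enorm_eq_nnnorm] at this ⊢
  rw [hlint]
  exact this

/-- Burton's rearrangement lemma, minimization. Let `p > 1`,
`s = p/(p-1)`, `ρ₀ ∈ L^p(Ω)` nontrivial, `q ∈ L^s(Ω)` nontrivial, and suppose there is an
decreasing function `η : ℝ → ℝ` with `η ∘ q` a rearrangement of `ρ₀`. Then
`∫_Ω ρ q ≥ ∫_Ω η(q) q` for every rearrangement `ρ` of `ρ₀`, and `η ∘ q` is the unique
minimizer up to a.e. equality. -/
theorem stmt4 {N : ℕ}
    (Ω : Set (EuclideanSpace ℝ (Fin N)))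
    (hΩ_meas : MeasurableSet Ω) (hΩ_bd : Bornology.IsBounded Ω)
    (p s : ℝ) (hp : 1 < p) (hs : s = p / (p - 1))
    (ρ₀ : EuclideanSpace ℝ (Fin N) → ℝ) (hρ₀_meas : Measurable ρ₀)
    (hρ₀_Lp : MemLp ρ₀ (ENNReal.ofReal p) (volume.restrict Ω))
    (hρ₀_ne : ¬ ρ₀ =ᵐ[volume.restrict Ω] 0)
    (q : EuclideanSpace ℝ (Fin N) → ℝ) (hq_meas : Measurable q)
    (hq_Ls : MemLp q (ENNReal.ofReal s) (volume.restrict Ω))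
    (hq_ne : ¬ q =ᵐ[volume.restrict Ω] 0)
    (η : ℝ → ℝ) (hη_anti : Antitone η)
    (hηq_rearr : ∀ t : ℝ,
      volume {x ∈ Ω | t ≤ η (q x)} = volume {x ∈ Ω | t ≤ ρ₀ x}) :
    (∀ ρ : EuclideanSpace ℝ (Fin N) → ℝ, Measurable ρ →
      (∀ t : ℝ, volume {x ∈ Ω | t ≤ ρ x} = volume {x ∈ Ω | t ≤ ρ₀ x}) →
      ∫ x in Ω, η (q x) * q x ≤ ∫ x in Ω, ρ x * q x) ∧
    (∀ ρ : EuclideanSpace ℝ (Fin N) → ℝ, Measurable ρ →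
      (∀ t : ℝ, volume {x ∈ Ω | t ≤ ρ x} = volume {x ∈ Ω | t ≤ ρ₀ x}) →
      (∫ x in Ω, ρ x * q x) = ∫ x in Ω, η (q x) * q x →
      ρ =ᵐ[volume.restrict Ω] fun x => η (q x)) := by
  set μ : Measure (EuclideanSpace ℝ (Fin N)) := volume.restrict Ω with hμ
  haveI : IsFiniteMeasure μ := by
    constructor
    rw [hμ, Measure.restrict_apply_univ]
    exact hΩ_bd.measure_lt_top
  set f : EuclideanSpace ℝ (Fin N) → ℝ := fun x => η (q x) with hf_def
  have hf_meas : Measurable f := hη_anti.measurable.comp hq_meas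
  -- superlevel measures determine the pushforward
  have hmap_of_rearr : ∀ g h : EuclideanSpace ℝ (Fin N) → ℝ, Measurable g → Measurable h →
      (∀ t : ℝ, volume {x ∈ Ω | t ≤ g x} = volume {x ∈ Ω | t ≤ h x}) →
      Measure.map g μ = Measure.map h μ := by
    intro g h hg hh hr
    apply Measure.ext_of_Ici
    intro a
    rw [Measure.map_apply hg measurableSet_Ici, Measure.map_apply hh measurableSet_Ici, hμ,
      Measure.restrict_apply (hg measurableSet_Ici), Measure.restrict_apply (hh measurableSet_Ici)]
    have e1 : g ⁻¹' Ici a ∩ Ω = {x ∈ Ω | a ≤ g x} := by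
      ext x; simp [Set.mem_Ici, and_comm]
    have e2 : h ⁻¹' Ici a ∩ Ω = {x ∈ Ω | a ≤ h x} := by
      ext x; simp [Set.mem_Ici, and_comm]
    rw [e1, e2, hr a]
  have hmapf : Measure.map f μ = Measure.map ρ₀ μ :=
    hmap_of_rearr f ρ₀ hf_meas hρ₀_meas hηq_rearr
  -- conjugate exponents
  have hconj : Real.HolderConjugate p s :=
    (Real.holderConjugate_iff_eq_conjExponent hp).2 hs
  have hP0 : (ENNReal.ofReal p) ≠ 0 := by
    simp [ENNReal.ofReal_eq_zero, not_le]; linarith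
  have hPtop : (ENNReal.ofReal p) ≠ ∞ := ENNReal.ofReal_ne_top
  have hfLp : MemLp f (ENNReal.ofReal p) μ :=
    memLp_of_map_eq hf_meas hρ₀_meas hmapf hP0 hPtop hρ₀_Lp
  have hs1 : 1 < s := hconj.symm.lt
  have hq1 : Integrable q μ := hq_Ls.integrable (by
    rw [← ENNReal.ofReal_one]
    exact ENNReal.ofReal_le_ofReal hs1.le)
  -- Hölder: product of Lp and Ls functions is integrable
  have hmul : ∀ g : EuclideanSpace ℝ (Fin N) → ℝ, MemLp g (ENNReal.ofReal p) μ →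
      Integrable (fun x => g x * q x) μ := by
    intro g hg
    have hsmul : MemLp (q • g) 1 μ := by
      haveI : ENNReal.HolderTriple (ENNReal.ofReal s) (ENNReal.ofReal p) 1 :=
        ⟨by rw [inv_one, add_comm]; exact hconj.inv_add_inv_ennreal⟩
      exact MemLp.smul hg hq_Ls
    have := memLp_one_iff_integrable.1 hsmul
    apply this.congr
    refine Filter.Eventually.of_forall fun x => ?_
    simp [Pi.smul_apply, smul_eq_mul, mul_comm]
  -- instantiate the key lemma
  have main : ∀ ρ : EuclideanSpace ℝ (Fin N) → ℝ, Measurable ρ →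
      (∀ t : ℝ, volume {x ∈ Ω | t ≤ ρ x} = volume {x ∈ Ω | t ≤ ρ₀ x}) →
      (Integrable (fun x => ρ x * q x) μ ∧ Integrable (fun x => f x * q x) μ ∧
        0 ≤ ∫ x, (ρ x - f x) * q x ∂μ ∧
        ((∫ x, (ρ x - f x) * q x ∂μ) = 0 → ρ =ᵐ[μ] f)) := by
    intro ρ hρ_meas hρ_rearr
    have hmapρ : Measure.map ρ μ = Measure.map f μ :=
      (hmap_of_rearr ρ ρ₀ hρ_meas hρ₀_meas hρ_rearr).trans hmapf.symm
    have hρLp : MemLp ρ (ENNReal.ofReal p) μ :=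
      memLp_of_map_eq hρ_meas hρ₀_meas (hmapρ.trans hmapf) hP0 hPtop hρ₀_Lp
    have hint1 : Integrable (fun x => ρ x * q x) μ := hmul ρ hρLp
    have hint2 : Integrable (fun x => f x * q x) μ := hmul f hfLp
    have hint3 : Integrable (fun x => (ρ x - f x) * q x) μ := by
      apply (hint1.sub hint2).congr
      refine Filter.Eventually.of_forall fun x => ?_
      simp only [Pi.sub_apply]; ring
    have hbd : Integrable (fun x => |q x| * |ρ x - f x|) μ := by
      apply hint3.abs.congr
      refine Filter.Eventually.of_forall fun x => ?_
      simp only [abs_mul]; ring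
    have hkey := burton_key μ ρ f q hρ_meas hf_meas hq_meas hmapρ
      (fun x y hxy => hη_anti hxy) hq1 hbd
    exact ⟨hint1, hint2, hkey.1, hkey.2⟩
  constructor
  · intro ρ hρ_meas hρ_rearr
    obtain ⟨hint1, hint2, hpos, _⟩ := main ρ hρ_meas hρ_rearr
    have hsub : (∫ x, (ρ x - f x) * q x ∂μ)
        = (∫ x in Ω, ρ x * q x) - ∫ x in Ω, f x * q x := by
      rw [← integral_sub hint1 hint2]
      apply integral_congr_ae
      refine Filter.Eventually.of_forall fun x => ?_
      ring
    rw [hsub] at hpos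
    linarith
  · intro ρ hρ_meas hρ_rearr heq
    obtain ⟨hint1, hint2, _, huniq⟩ := main ρ hρ_meas hρ_rearr
    apply huniq
    have hsub : (∫ x, (ρ x - f x) * q x ∂μ)
        = (∫ x in Ω, ρ x * q x) - ∫ x in Ω, f x * q x := by
      rw [← integral_sub hint1 hint2]
      apply integral_congr_ae
      refine Filter.Eventually.of_forall fun x => ?_
      ring
    rw [hsub, heq]
    ring
end

section
/- Let f ∈ L¹(Ω) be nonnegative with all level sets {x ∈ Ω : f(x) = c} of Lebesgue measure zero. Define t₁ = sup{s ∈ ℝ : |{x ∈ Ω : f(x) ≥ s}| ≥ S₁} and D̂₁ = {x ∈ Ω : f(x) ≥ t₁}, and recursively for i = 2, …, m−1 set t_i = sup{s ∈ ℝ : |{x ∈ Ω \ (D̂₁ ∪ ⋯ ∪ D̂_{i−1}) : f(x) ≥ s}| ≥ S_i} and D̂_i = {x ∈ Ω \ (D̂₁ ∪ ⋯ ∪ D̂_{i−1}) : f(x) ≥ t_i}, with D̂_m = Ω \ (D̂₁ ∪ ⋯ ∪ D̂_{m−1}). Then |D̂_i| = S_i for each i = 1, …, m, the function ρ̂ =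 c₁χ_{D̂₁} + ⋯ + c_m χ_{D̂_m} belongs to P, and ∫_Ω ρ̂ f dx ≤ ∫_Ω ρ f dx for every ρ ∈ P; that is, ρ̂ solves inf_{ρ ∈ P} ∫_Ω ρ f dx. -/
open MeasureTheory Set Filter
open scoped ENNReal

lemma aux_phi_anti {α : Type*} [MeasurableSpace α] (μ : Measure α) (A : Set α) (f : α → ℝ) :
    Antitone (fun s : ℝ => μ {x ∈ A | s ≤ f x}) := by
  intro s s' h
  exact measure_mono (fun x hx => ⟨hx.1, h.trans hx.2⟩)

lemma aux_level {α : Type*} [MeasurableSpace α] (μ : Measure α)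
    (A : Set α) (hA : MeasurableSet A) (hfin : μ A ≠ ⊤)
    (f : α → ℝ) (hf : Measurable f)
    (hlevel : ∀ a : ℝ, μ {x ∈ A | f x = a} = 0)
    (hf0 : ∀ x ∈ A, 0 ≤ f x)
    (S : ℝ) (hS : 0 < S) (hSA : ENNReal.ofReal S ≤ μ A) :
    μ {x ∈ A | sSup {s : ℝ | ENNReal.ofReal S ≤ μ {x ∈ A | s ≤ f x}} ≤ f x}
      = ENNReal.ofReal S := by
  set φ : ℝ → ℝ≥0∞ := fun s => μ {x ∈ A | s ≤ f x} with hφdef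
  have hanti : Antitone φ := aux_phi_anti μ A f
  have hmeas : ∀ s : ℝ, MeasurableSet {x ∈ A | s ≤ f x} := fun s =>
    hA.inter (measurableSet_le measurable_const hf)
  set T : Set ℝ := {s : ℝ | ENNReal.ofReal S ≤ φ s} with hTdef
  have h0T : (0:ℝ) ∈ T := by
    have : {x ∈ A | (0:ℝ) ≤ f x} = A := by
      ext x; exact ⟨fun h => h.1, fun h => ⟨h, hf0 x h⟩⟩
    simp only [hTdef, mem_setOf_eq, hφdef, this]
    exact hSA
  have hTne : T.Nonempty := ⟨0, h0T⟩
  -- tail tendsto 0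
  have htail : Tendsto (fun n : ℕ => φ n) atTop (nhds 0) := by
    have hempty : (⋂ n : ℕ, {x ∈ A | (n:ℝ) ≤ f x}) = ∅ := by
      ext x
      simp only [mem_iInter, mem_empty_iff_false, iff_false, not_forall, mem_setOf_eq]
      obtain ⟨n, hn⟩ := exists_nat_gt (f x)
      exact ⟨n, fun h => absurd h.2 (not_le.2 hn)⟩
    have := tendsto_measure_iInter_atTop (μ := μ)
      (s := fun n : ℕ => {x ∈ A | (n:ℝ) ≤ f x})
      (fun n => (hmeas _).nullMeasurableSet)
      (fun n n' h => fun x hx => ⟨hx.1, le_trans (by exact_mod_cast Nat.cast_le.2 h) hx.2⟩)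
      ⟨0, by exact fun h => hfin (top_le_iff.1 (h ▸ measure_mono (fun x hx => hx.1)))⟩
    rw [hempty, measure_empty] at this
    exact this
  obtain ⟨n₀, hn₀⟩ : ∃ n : ℕ, φ n < ENNReal.ofReal S := by
    have := htail.eventually_lt_const (by positivity : (0:ℝ≥0∞) < ENNReal.ofReal S)
    exact this.exists
  have hTbdd : BddAbove T := by
    refine ⟨n₀, fun s hs => ?_⟩
    by_contra h
    push_neg at h
    exact absurd (hs.trans (hanti h.le)) (not_le.2 hn₀)
  set t : ℝ := sSup T with htdef
  -- lower bound : ofReal S ≤ φ t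
  have hlow : ENNReal.ofReal S ≤ φ t := by
    have hseteq : {x ∈ A | t ≤ f x} = ⋂ n : ℕ, {x ∈ A | t - 1/(n+1) ≤ f x} := by
      ext x
      simp only [mem_iInter, mem_setOf_eq]
      constructor
      · intro h n
        refine ⟨h.1, le_trans (sub_le_self t (by positivity)) h.2⟩
      · intro h
        refine ⟨(h 0).1, ?_⟩
        by_contra hc
        push_neg at hc
        obtain ⟨n, hn⟩ := exists_nat_one_div_lt (show (0:ℝ) < t - f x by linarith)
        have := (h n).2
        linarith
    have hmono : Antitone (fun n : ℕ => {x ∈ A | t - 1/(n+1) ≤ f x}) := by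
      intro n n' h
      refine fun x hx => ⟨hx.1, le_trans ?_ hx.2⟩
      have h1 : (1:ℝ)/(n'+1) ≤ 1/(n+1) := by
        apply one_div_le_one_div_of_le (by positivity)
        exact_mod_cast by exact_mod_cast add_le_add_left (Nat.cast_le.2 h) 1
      linarith
    have htend := tendsto_measure_iInter_atTop (μ := μ)
      (s := fun n : ℕ => {x ∈ A | t - 1/(n+1) ≤ f x})
      (fun n => (hmeas _).nullMeasurableSet) hmono
      ⟨0, by exact fun h => hfin (top_le_iff.1 (h ▸ measure_mono (fun x hx => hx.1)))⟩
    rw [← hseteq] at htend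
    refine ge_of_tendsto htend (Eventually.of_forall (fun n => ?_))
    have hlt : t - 1/(n+1) < t := by
      have : (0:ℝ) < 1/(n+1) := by positivity
      linarith
    obtain ⟨s, hsT, hs⟩ := exists_lt_of_lt_csSup hTne hlt
    exact le_trans hsT (hanti hs.le)
  -- upper bound
  have hup : φ t ≤ ENNReal.ofReal S := by
    have hsub : {x ∈ A | t ≤ f x} ⊆ {x ∈ A | t < f x} ∪ {x ∈ A | f x = t} := by
      intro x hx
      rcases lt_or_eq_of_le hx.2 with h | h
      · exact Or.inl ⟨hx.1, h⟩
      · exact Or.inr ⟨hx.1, h.symm⟩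
    have h1 : φ t ≤ μ {x ∈ A | t < f x} := by
      calc φ t ≤ μ ({x ∈ A | t < f x} ∪ {x ∈ A | f x = t}) := measure_mono hsub
        _ ≤ μ {x ∈ A | t < f x} + μ {x ∈ A | f x = t} := measure_union_le _ _
        _ = μ {x ∈ A | t < f x} := by rw [hlevel t, add_zero]
    have hseteq : {x ∈ A | t < f x} = ⋃ n : ℕ, {x ∈ A | t + 1/(n+1) ≤ f x} := by
      ext x
      simp only [mem_iUnion, mem_setOf_eq]
      constructor
      · intro h
        obtain ⟨n, hn⟩ := exists_nat_one_div_lt (show (0:ℝ) < f x - t by linarith)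
        exact ⟨n, h.1, by linarith⟩
      · rintro ⟨n, hn⟩
        have : (0:ℝ) < 1/(n+1) := by positivity
        exact ⟨hn.1, by linarith [hn.2]⟩
    have hmono : Monotone (fun n : ℕ => {x ∈ A | t + 1/(n+1) ≤ f x}) := by
      intro n n' h x hx
      refine ⟨hx.1, le_trans ?_ hx.2⟩
      have h1 : (1:ℝ)/(n'+1) ≤ 1/(n+1) := by
        apply one_div_le_one_div_of_le (by positivity)
        exact_mod_cast by exact_mod_cast add_le_add_left (Nat.cast_le.2 h) 1
      linarith
    have htend := tendsto_measure_iUnion_atTop (μ := μ)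
      (s := fun n : ℕ => {x ∈ A | t + 1/(n+1) ≤ f x}) hmono
    rw [← hseteq] at htend
    refine h1.trans (le_of_tendsto htend (Eventually.of_forall (fun n => ?_)))
    have hnotT : t + 1/(n+1) ∉ T := by
      intro hmem
      have := le_csSup hTbdd hmem
      have h0 : (0:ℝ) < 1/(n+1) := by positivity
      linarith
    exact le_of_not_ge hnotT
  exact le_antisymm hup hlow

-- superlevel set maximizes the integral among subsets of Ω of the same measure
lemma aux_bathtub {α : Type*} [MeasurableSpace α] (μ : Measure α)
    (Ω : Set α) (hΩ : MeasurableSet Ω) (hfin : μ Ω ≠ ⊤)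
    (f : α → ℝ) (hf : Measurable f) (hint : IntegrableOn f Ω μ)
    (B : Set α) (hB : MeasurableSet B) (hBΩ : B ⊆ Ω) (τ : ℝ)
    (hvol : μ B = μ {x ∈ Ω | τ ≤ f x}) :
    ∫ x in B, f x ∂μ ≤ ∫ x in {x ∈ Ω | τ ≤ f x}, f x ∂μ := by
  set C : Set α := {x ∈ Ω | τ ≤ f x} with hCdef
  have hC : MeasurableSet C := hΩ.inter (measurableSet_le measurable_const hf)
  have hCΩ : C ⊆ Ω := fun x hx => hx.1
  have hPQ : μ (B \ C) = μ (C \ B) := by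
    have h1 : μ B = μ (B ∩ C) + μ (B \ C) := (measure_inter_add_diff B hC).symm
    have h2 : μ C = μ (C ∩ B) + μ (C \ B) := (measure_inter_add_diff C hB).symm
    have hfin1 : μ (B ∩ C) ≠ ⊤ := fun h =>
      hfin (top_le_iff.1 (h ▸ measure_mono (fun x hx => hBΩ hx.1)))
    rw [Set.inter_comm C B] at h2
    rw [hvol, h2] at h1
    exact (ENNReal.add_right_inj hfin1).1 h1.symm
  have hintB : IntegrableOn f B μ := hint.mono_set hBΩ
  have hintC : IntegrableOn f C μ := hint.mono_set hCΩ
  have hsplitB : ∫ x in B, f x ∂μ = ∫ x in B ∩ C, f x ∂μ + ∫ x in B \ C, f x ∂μ := by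
    have h := setIntegral_union (μ := μ) (f := f) (s := B ∩ C) (t := B \ C)
      (Set.disjoint_left.2 (fun x hx hx2 => hx2.2 hx.2)) (hB.diff hC)
      (hintB.mono_set Set.inter_subset_left) (hintB.mono_set Set.diff_subset)
    rw [Set.inter_union_diff] at h
    exact h
  have hsplitC : ∫ x in C, f x ∂μ = ∫ x in B ∩ C, f x ∂μ + ∫ x in C \ B, f x ∂μ := by
    have h := setIntegral_union (μ := μ) (f := f) (s := B ∩ C) (t := C \ B)
      (Set.disjoint_left.2 (fun x hx hx2 => hx2.2 hx.1)) (hC.diff hB)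
      (hintC.mono_set Set.inter_subset_right) (hintC.mono_set Set.diff_subset)
    rw [Set.inter_comm B C, Set.inter_union_diff, Set.inter_comm C B] at h
    exact h
  have hPfin : μ (B \ C) ≠ ⊤ := fun h =>
    hfin (top_le_iff.1 (h ▸ measure_mono (fun x hx => hBΩ hx.1)))
  -- on B \ C : f < τ ; on C \ B : f ≥ τ
  have hub : ∫ x in B \ C, f x ∂μ ≤ τ * (μ (B \ C)).toReal := by
    have := setIntegral_mono_on (hintB.mono_set diff_subset)
      (integrableOn_const hPfin) (hB.diff hC)
      (fun x hx => le_of_lt (by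
        have h1 : x ∈ Ω := hBΩ hx.1
        have h2 : ¬ (x ∈ Ω ∧ τ ≤ f x) := hx.2
        push_neg at h2
        exact h2 h1))
    simpa [setIntegral_const, smul_eq_mul, mul_comm, Measure.real] using this
  have hQfin : μ (C \ B) ≠ ⊤ := fun h =>
    hfin (top_le_iff.1 (h ▸ measure_mono (fun x hx => hx.1.1)))
  have hlb : τ * (μ (C \ B)).toReal ≤ ∫ x in C \ B, f x ∂μ := by
    have := setIntegral_mono_on
      (integrableOn_const hQfin)
      (hintC.mono_set diff_subset) (hC.diff hB)
      (fun x hx => hx.1.2)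
    simpa [setIntegral_const, smul_eq_mul, mul_comm, Measure.real] using this
  rw [hsplitB, hsplitC]
  have : ∫ x in B \ C, f x ∂μ ≤ ∫ x in C \ B, f x ∂μ := by
    calc ∫ x in B \ C, f x ∂μ ≤ τ * (μ (B \ C)).toReal := hub
      _ = τ * (μ (C \ B)).toReal := by rw [hPQ]
      _ ≤ ∫ x in C \ B, f x ∂μ := hlb
  linarith

lemma aux_sum_indicator {α : Type*} {m : ℕ} (A : Fin m → Set α)
    (hdisj : Pairwise (Function.onFun Disjoint A)) (c : Fin m → ℝ)
    (i : Fin m) (x : α) (hx : x ∈ A i) :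
    (∑ j, (A j).indicator (fun _ => c j) x) = c i := by
  rw [Finset.sum_eq_single i]
  · exact Set.indicator_of_mem hx _
  · intro j _ hj
    exact Set.indicator_of_notMem
      (fun hxj => Set.disjoint_left.1 (hdisj hj) hxj hx) _
  · intro h; exact absurd (Finset.mem_univ i) h

lemma aux_step_dist {α : Type*} [MeasurableSpace α] (μ : Measure α) {m : ℕ}
    (Ω : Set α) (A : Fin m → Set α) (hmeas : ∀ i, MeasurableSet (A i))
    (hdisj : Pairwise (Function.onFun Disjoint A)) (hunion : (⋃ i, A i) = Ω)
    (c : Fin m → ℝ) (r : ℝ) :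
    μ {x ∈ Ω | r ≤ ∑ i, (A i).indicator (fun _ => c i) x}
      = ∑ i ∈ Finset.univ.filter (fun i => r ≤ c i), μ (A i) := by
  have hseteq : {x ∈ Ω | r ≤ ∑ i, (A i).indicator (fun _ => c i) x}
      = ⋃ i ∈ Finset.univ.filter (fun i => r ≤ c i), A i := by
    ext x
    simp only [mem_setOf_eq, Set.mem_iUnion, Finset.mem_filter, Finset.mem_univ, true_and,
      exists_prop]
    constructor
    · rintro ⟨hxΩ, hr⟩
      obtain ⟨i, hi⟩ : ∃ i, x ∈ A i := by
        rw [← hunion] at hxΩ; exact Set.mem_iUnion.1 hxΩ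
      rw [aux_sum_indicator A hdisj c i x hi] at hr
      exact ⟨i, hr, hi⟩
    · rintro ⟨i, hri, hxi⟩
      refine ⟨hunion ▸ Set.mem_iUnion.2 ⟨i, hxi⟩, ?_⟩
      rw [aux_sum_indicator A hdisj c i x hxi]
      exact hri
  rw [hseteq, measure_biUnion_finset (fun i _ j _ hij => hdisj hij) (fun i _ => hmeas i)]

noncomputable def natE {β : Type*} (m : ℕ) (d : β) (g : Fin m → β) : ℕ → β :=
  fun n => if h : n < m then g ⟨n, h⟩ else d

lemma natE_lt {β : Type*} {m n : ℕ} (h : n < m) (d : β) (g : Fin m → β) :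
    natE m d g n = g ⟨n, h⟩ := dif_pos h

lemma natE_ge {β : Type*} {m n : ℕ} (h : ¬ n < m) (d : β) (g : Fin m → β) :
    natE m d g n = d := dif_neg h

lemma aux_rest {α : Type*} [MeasurableSpace α] (μ : Measure α) {m : ℕ}
    (Ω : Set α) (hΩ : MeasurableSet Ω) (hfin : μ Ω ≠ ⊤)
    (S : Fin m → ℝ) (hS0 : ∀ j, 0 ≤ S j)
    (hΩvol : μ Ω = ENNReal.ofReal (∑ j, S j))
    (Dhat : Fin m → Set α) (i : Fin m)
    (hprev : ∀ j, j < i → MeasurableSet (Dhat j) ∧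
      Dhat j ⊆ Ω \ (⋃ k, ⋃ (_ : k < j), Dhat k) ∧ μ (Dhat j) = ENNReal.ofReal (S j)) :
    MeasurableSet (⋃ j, ⋃ (_ : j < i), Dhat j) ∧
    (⋃ j, ⋃ (_ : j < i), Dhat j) ⊆ Ω ∧
    μ (Ω \ ⋃ j, ⋃ (_ : j < i), Dhat j)
      = ENNReal.ofReal (∑ j ∈ Finset.univ.filter (fun j => ¬ j < i), S j) := by
  classical
  have hdisj : ∀ j k : Fin m, j < i → k < i → j ≠ k → Disjoint (Dhat j) (Dhat k) := by
    have main : ∀ j k : Fin m, k < i → j < k → Disjoint (Dhat j) (Dhat k) := by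
      intro j k hk hjk
      refine Set.disjoint_left.2 fun x hxj hxk => ?_
      exact ((hprev k hk).2.1 hxk).2 (Set.mem_iUnion.2 ⟨j, Set.mem_iUnion.2 ⟨hjk, hxj⟩⟩)
    intro j k hj hk hjk
    rcases lt_or_gt_of_ne hjk with h | h
    · exact main j k hk h
    · exact (main k j hj h).symm
  have hmeasU : MeasurableSet (⋃ j, ⋃ (_ : j < i), Dhat j) :=
    MeasurableSet.iUnion fun j => MeasurableSet.iUnion fun hj => (hprev j hj).1
  have hsubU : (⋃ j, ⋃ (_ : j < i), Dhat j) ⊆ Ω := by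
    refine Set.iUnion_subset fun j => Set.iUnion_subset fun hj => ?_
    exact ((hprev j hj).2.1).trans diff_subset
  refine ⟨hmeasU, hsubU, ?_⟩
  have hUeq : (⋃ j, ⋃ (_ : j < i), Dhat j)
      = ⋃ j ∈ Finset.univ.filter (fun j => j < i), Dhat j := by
    ext x; simp
  have hUvol : μ (⋃ j, ⋃ (_ : j < i), Dhat j)
      = ENNReal.ofReal (∑ j ∈ Finset.univ.filter (fun j => j < i), S j) := by
    rw [hUeq, measure_biUnion_finset
      (fun j hj k hk hjk => hdisj j k (Finset.mem_filter.1 hj).2 (Finset.mem_filter.1 hk).2 hjk)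
      (fun j hj => (hprev j (Finset.mem_filter.1 hj).2).1),
      ENNReal.ofReal_sum_of_nonneg (fun j _ => hS0 j)]
    exact Finset.sum_congr rfl fun j hj => (hprev j (Finset.mem_filter.1 hj).2).2.2
  rw [measure_diff hsubU hmeasU.nullMeasurableSet
    (fun h => hfin (top_le_iff.1 (h ▸ measure_mono hsubU))),
    hΩvol, hUvol, ← ENNReal.ofReal_sub _ (Finset.sum_nonneg fun j _ => hS0 j)]
  congr 1
  have := Finset.sum_filter_add_sum_filter_not Finset.univ (fun j => j < i) S
  linarith
/-- Lemma on the minimization problem `inf_{ρ ∈ P} ∫_Ω ρ f`.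
Let `f ∈ L¹(Ω)` be nonnegative with all its level sets of measure zero. With the
thresholds `t i = sup {s | |{x ∈ Ω \ (D̂ 0 ∪ ⋯ ∪ D̂ (i-1)) : f x ≥ s}| ≥ S i}` and the
super-level sets `D̂ i = {x ∈ Ω \ (D̂ 0 ∪ ⋯ ∪ D̂ (i-1)) : f x ≥ t i}` for `i < m - 1`,
and `D̂ (m-1)` the remainder, one has `|D̂ i| = S i` for all `i`, the step function
`ρ̂ = ∑ i, c i • χ_{D̂ i}` is a rearrangement of `ρ₀ = ∑ i, c i • χ_{D i}`, and `ρ̂`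
minimizes `ρ ↦ ∫_Ω ρ f` over the rearrangement class of `ρ₀`. -/
theorem stmt5 {N m : ℕ} (hm : 0 < m)
    (Ω : Set (EuclideanSpace ℝ (Fin N)))
    (hΩ_meas : MeasurableSet Ω) (hΩ_bd : Bornology.IsBounded Ω)
    (c : Fin m → ℝ) (hc_pos : ∀ i, 0 < c i) (hc_mono : StrictMono c)
    (S : Fin m → ℝ) (hS_pos : ∀ i, 0 < S i)
    (D : Fin m → Set (EuclideanSpace ℝ (Fin N)))
    (hD_meas : ∀ i, MeasurableSet (D i))
    (hD_disj : Pairwise (Function.onFun Disjoint D))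
    (hD_union : (⋃ i, D i) = Ω)
    (hD_vol : ∀ i, volume (D i) = ENNReal.ofReal (S i))
    (f : EuclideanSpace ℝ (Fin N) → ℝ) (hf_meas : Measurable f)
    (hf_int : IntegrableOn f Ω) (hf_nonneg : ∀ x ∈ Ω, 0 ≤ f x)
    (hf_level : ∀ a : ℝ, volume {x ∈ Ω | f x = a} = 0)
    (t : Fin m → ℝ) (Dhat : Fin m → Set (EuclideanSpace ℝ (Fin N)))
    (ht : ∀ i : Fin m, (i : ℕ) < m - 1 →
      t i = sSup {s : ℝ |
        ENNReal.ofReal (S i) ≤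
          volume {x ∈ Ω \ ⋃ j, ⋃ (_ : j < i), Dhat j | s ≤ f x}})
    (hDhat : ∀ i : Fin m, (i : ℕ) < m - 1 →
      Dhat i = {x ∈ Ω \ ⋃ j, ⋃ (_ : j < i), Dhat j | t i ≤ f x})
    (hDlast : ∀ i : Fin m, (i : ℕ) = m - 1 →
      Dhat i = Ω \ ⋃ j, ⋃ (_ : j < i), Dhat j) :
    (∀ i, volume (Dhat i) = ENNReal.ofReal (S i)) ∧
    (∀ r : ℝ,
      volume {x ∈ Ω | r ≤ ∑ i, (Dhat i).indicator (fun _ => c i) x} =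
        volume {x ∈ Ω | r ≤ ∑ i, (D i).indicator (fun _ => c i) x}) ∧
    (∀ ρ : EuclideanSpace ℝ (Fin N) → ℝ, Measurable ρ →
      (∀ r : ℝ, volume {x ∈ Ω | r ≤ ρ x} =
        volume {x ∈ Ω | r ≤ ∑ i, (D i).indicator (fun _ => c i) x}) →
      ∫ x in Ω, (∑ i, (Dhat i).indicator (fun _ => c i) x) * f x ≤
        ∫ x in Ω, ρ x * f x) := by
  classical
  have hΩfin : volume Ω ≠ ⊤ := hΩ_bd.measure_lt_top.ne
  have hS0 : ∀ j, (0:ℝ) ≤ S j := fun j => (hS_pos j).le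
  have hΩvol : volume Ω = ENNReal.ofReal (∑ j, S j) := by
    rw [← hD_union, measure_iUnion hD_disj hD_meas, tsum_fintype,
      ENNReal.ofReal_sum_of_nonneg (fun j _ => hS0 j)]
    exact Finset.sum_congr rfl fun j _ => hD_vol j
  set ml : Fin m := ⟨m-1, by omega⟩ with hml
  --------------------------------------------------------------------
  -- PART 1 : the measures of the Dhat i
  --------------------------------------------------------------------
  have key : ∀ n : ℕ, ∀ hn : n < m,
      MeasurableSet (Dhat ⟨n, hn⟩) ∧
      Dhat ⟨n, hn⟩ ⊆ Ω \ (⋃ j, ⋃ (_ : j < (⟨n, hn⟩ : Fin m)), Dhat j) ∧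
      volume (Dhat ⟨n, hn⟩) = ENNReal.ofReal (S ⟨n, hn⟩) := by
    intro n
    induction n using Nat.strong_induction_on with
    | _ n IH =>
    intro hn
    have hprev : ∀ j : Fin m, j < (⟨n, hn⟩ : Fin m) → MeasurableSet (Dhat j) ∧
        Dhat j ⊆ Ω \ (⋃ k, ⋃ (_ : k < j), Dhat k) ∧
        volume (Dhat j) = ENNReal.ofReal (S j) :=
      fun j hj => IH j.1 hj j.2
    obtain ⟨hmeasU, hsubU, hrestvol⟩ :=
      aux_rest volume Ω hΩ_meas hΩfin S hS0 hΩvol Dhat ⟨n, hn⟩ hprev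
    have hSle : ENNReal.ofReal (S ⟨n, hn⟩)
        ≤ volume (Ω \ ⋃ j, ⋃ (_ : j < (⟨n, hn⟩:Fin m)), Dhat j) := by
      rw [hrestvol]
      apply ENNReal.ofReal_le_ofReal
      exact Finset.single_le_sum (fun j _ => hS0 j) (by simp)
    by_cases hcase : n < m - 1
    · have hD := hDhat ⟨n, hn⟩ hcase
      have hT := ht ⟨n, hn⟩ hcase
      have hlevel' : ∀ a : ℝ,
          volume {x ∈ Ω \ ⋃ j, ⋃ (_ : j < (⟨n,hn⟩:Fin m)), Dhat j | f x = a} = 0 :=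
        by
          intro a
          refine measure_mono_null ?_ (hf_level a)
          intro x hx
          exact ⟨hx.1.1, hx.2⟩
      have hf0' : ∀ x ∈ Ω \ ⋃ j, ⋃ (_ : j < (⟨n,hn⟩:Fin m)), Dhat j, 0 ≤ f x :=
        fun x hx => hf_nonneg x hx.1
      have hfin' : volume (Ω \ ⋃ j, ⋃ (_ : j < (⟨n,hn⟩:Fin m)), Dhat j) ≠ ⊤ :=
        fun h => hΩfin (top_le_iff.1 (h ▸ measure_mono diff_subset))
      have hkey := aux_level volume _ (hΩ_meas.diff hmeasU) hfin' f hf_meas hlevel' hf0'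
        (S ⟨n,hn⟩) (hS_pos _) hSle
      rw [← hT, ← hD] at hkey
      refine ⟨?_, ?_, hkey⟩
      · rw [hD]
        exact (hΩ_meas.diff hmeasU).inter (measurableSet_le measurable_const hf_meas)
      · rw [hD]; exact fun x hx => hx.1
    · have hlast : ((⟨n, hn⟩ : Fin m) : ℕ) = m - 1 := by show n = m - 1; omega
      have hD := hDlast ⟨n, hn⟩ hlast
      have hfilter : Finset.univ.filter (fun j => ¬ j < (⟨n,hn⟩:Fin m))
          = {(⟨n,hn⟩ : Fin m)} := by
        ext j
        have hj := j.2
        simp only [Finset.mem_filter, Finset.mem_univ, true_and, Finset.mem_singleton,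
          Fin.lt_def, Fin.ext_iff]
        omega
      refine ⟨?_, ?_, ?_⟩
      · rw [hD]; exact hΩ_meas.diff hmeasU
      · rw [hD]
      · rw [hD, hrestvol, hfilter, Finset.sum_singleton]
  have hDm : ∀ i : Fin m, MeasurableSet (Dhat i) := fun i => (key i.1 i.2).1
  have hDsub' : ∀ i : Fin m, Dhat i ⊆ Ω \ (⋃ j, ⋃ (_ : j < i), Dhat j) :=
    fun i => (key i.1 i.2).2.1
  have part1 : ∀ i, volume (Dhat i) = ENNReal.ofReal (S i) := fun i => (key i.1 i.2).2.2
  have hDsubΩ : ∀ i, Dhat i ⊆ Ω := fun i => (hDsub' i).trans diff_subset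
  have hDdisj : Pairwise (Function.onFun Disjoint Dhat) := by
    have main : ∀ j k : Fin m, j < k → Disjoint (Dhat j) (Dhat k) := by
      intro j k hjk
      refine Set.disjoint_left.2 fun x hxj hxk => ?_
      exact (hDsub' k hxk).2 (Set.mem_iUnion.2 ⟨j, Set.mem_iUnion.2 ⟨hjk, hxj⟩⟩)
    intro j k hjk
    rcases lt_or_gt_of_ne hjk with h | h
    · exact main j k h
    · exact (main k j h).symm
  have hDunion : (⋃ i, Dhat i) = Ω := by
    apply Set.Subset.antisymm (Set.iUnion_subset hDsubΩ)
    intro x hx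
    by_cases hxu : x ∈ ⋃ j, ⋃ (_ : j < ml), Dhat j
    · simp only [Set.mem_iUnion] at hxu
      obtain ⟨j, _, hxj⟩ := hxu
      exact Set.mem_iUnion.2 ⟨j, hxj⟩
    · refine Set.mem_iUnion.2 ⟨ml, ?_⟩
      rw [hDlast ml rfl]
      exact ⟨hx, hxu⟩
  --------------------------------------------------------------------
  -- PART 2 : same distribution
  --------------------------------------------------------------------
  have part2 : ∀ r : ℝ,
      volume {x ∈ Ω | r ≤ ∑ i, (Dhat i).indicator (fun _ => c i) x} =
        volume {x ∈ Ω | r ≤ ∑ i, (D i).indicator (fun _ => c i) x} := by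
    intro r
    rw [aux_step_dist volume Ω Dhat hDm hDdisj hDunion c r,
      aux_step_dist volume Ω D hD_meas hD_disj hD_union c r]
    exact Finset.sum_congr rfl fun i _ => by rw [part1 i, hD_vol i]
  refine ⟨part1, part2, ?_⟩
  --------------------------------------------------------------------
  -- PART 3 : minimality
  --------------------------------------------------------------------
  -- superlevel description of the prefix unions
  set DN : ℕ → Set (EuclideanSpace ℝ (Fin N)) := natE m ∅ Dhat with hDN
  have hDNdef : ∀ n (h : n < m), DN n = Dhat ⟨n, h⟩ := fun n h => by
    rw [hDN]; exact natE_lt h ∅ Dhat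
  have hDNempty : ∀ n, ¬ n < m → DN n = ∅ := fun n h => by
    rw [hDN]; exact natE_ge h ∅ Dhat
  have hDNmeas : ∀ n, MeasurableSet (DN n) := by
    intro n
    by_cases h : n < m
    · rw [hDNdef n h]; exact hDm _
    · rw [hDNempty n h]; exact MeasurableSet.empty
  have hDNsub : ∀ n, DN n ⊆ Ω := by
    intro n
    by_cases h : n < m
    · rw [hDNdef n h]; exact hDsubΩ _
    · rw [hDNempty n h]; exact Set.empty_subset _
  have hDNdisj : ∀ j k : ℕ, j ≠ k → Disjoint (DN j) (DN k) := by
    intro j k hjk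
    by_cases hj : j < m
    · by_cases hk : k < m
      · rw [hDNdef j hj, hDNdef k hk]
        exact hDdisj (by simp only [ne_eq, Fin.ext_iff]; exact hjk)
      · rw [hDNempty k hk]; exact disjoint_empty _
    · rw [hDNempty j hj]; exact empty_disjoint _
  have hUN : ∀ i : Fin m, (⋃ j, ⋃ (_ : j < i), Dhat j) = ⋃ j ∈ Finset.range i.1, DN j := by
    intro i; ext x
    simp only [Set.mem_iUnion, Finset.mem_range, exists_prop]
    constructor
    · rintro ⟨j, hj, hx⟩
      exact ⟨j.1, hj, by rw [hDNdef j.1 j.2]; exact hx⟩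
    · rintro ⟨k, hk, hx⟩
      have hkm : k < m := hk.trans i.2
      rw [hDNdef k hkm] at hx
      exact ⟨⟨k, hkm⟩, hk, hx⟩
  have claim : ∀ n : ℕ, ∀ hn : n < m - 1, ∀ hn' : n < m,
      (⋃ j ∈ Finset.range (n+1), DN j) = {x ∈ Ω | t ⟨n, hn'⟩ ≤ f x} := by
    intro n
    induction n with
    | zero =>
      intro hn hn'
      have hD := hDhat ⟨0, hn'⟩ hn
      have hzero : (⋃ j, ⋃ (_ : j < (⟨0, hn'⟩:Fin m)), Dhat j) = ∅ := by
        ext x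
        simp only [Set.mem_iUnion, Set.mem_empty_iff_false, iff_false, not_exists]
        intro j hj
        exact absurd hj (by simp [Fin.lt_def])
      rw [Finset.range_one]
      rw [Finset.set_biUnion_singleton, hDNdef 0 hn', hD, hzero, diff_empty]
    | succ k IHk =>
      intro hn hn'
      have hk1 : k < m - 1 := by omega
      have hk' : k < m := by omega
      have hUk := IHk hk1 hk'
      have hvalk1 : ((⟨k+1, hn'⟩:Fin m) : ℕ) = k+1 := rfl
      have hrest : Ω \ (⋃ j, ⋃ (_ : j < (⟨k+1, hn'⟩:Fin m)), Dhat j)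
          = {x ∈ Ω | f x < t ⟨k, hk'⟩} := by
        rw [hUN ⟨k+1, hn'⟩, hvalk1, hUk]
        ext x
        simp only [Set.mem_diff, Set.mem_setOf_eq]
        constructor
        · rintro ⟨hxΩ, hxn⟩
          refine ⟨hxΩ, ?_⟩
          by_contra hcon
          push_neg at hcon
          exact hxn ⟨hxΩ, hcon⟩
        · rintro ⟨hxΩ, hxf⟩
          exact ⟨hxΩ, fun hc => absurd hc.2 (not_le.2 hxf)⟩
      have hrestvol' := (aux_rest volume Ω hΩ_meas hΩfin S hS0 hΩvol Dhat ⟨k+1, hn'⟩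
        (fun j _ => ⟨hDm j, hDsub' j, part1 j⟩)).2.2
      have htmono : t ⟨k+1, hn'⟩ ≤ t ⟨k, hk'⟩ := by
        rw [ht ⟨k+1, hn'⟩ hn]
        apply csSup_le
        · refine ⟨0, ?_⟩
          simp only [Set.mem_setOf_eq]
          have hset : {x ∈ Ω \ (⋃ j, ⋃ (_ : j < (⟨k+1,hn'⟩:Fin m)), Dhat j) | (0:ℝ) ≤ f x}
              = Ω \ (⋃ j, ⋃ (_ : j < (⟨k+1,hn'⟩:Fin m)), Dhat j) := by
            ext x; exact ⟨fun h => h.1, fun h => ⟨h, hf_nonneg x h.1⟩⟩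
          rw [hset, hrestvol']
          apply ENNReal.ofReal_le_ofReal
          exact Finset.single_le_sum (fun j _ => hS0 j) (by simp)
        · intro s hs
          by_contra hcon
          push_neg at hcon
          simp only [Set.mem_setOf_eq] at hs
          rw [hrest] at hs
          have hzero : volume {x ∈ {x ∈ Ω | f x < t ⟨k, hk'⟩} | s ≤ f x} = 0 := by
            have : {x ∈ {x ∈ Ω | f x < t ⟨k, hk'⟩} | s ≤ f x}
                = (∅ : Set (EuclideanSpace ℝ (Fin N))) := by
              ext x
              simp only [Set.mem_setOf_eq, Set.mem_empty_iff_false, iff_false, not_and]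
              rintro ⟨_, h1⟩ h2
              linarith
            rw [this, measure_empty]
          rw [hzero] at hs
          have := hS_pos ⟨k+1, hn'⟩
          simp only [nonpos_iff_eq_zero, ENNReal.ofReal_eq_zero] at hs
          linarith
      have hDk1 := hDhat ⟨k+1, hn'⟩ hn
      rw [Finset.range_add_one, Finset.set_biUnion_insert, hDNdef (k+1) hn', hDk1, hrest, hUk]
      ext x
      simp only [Set.mem_union, Set.mem_setOf_eq]
      constructor
      · rintro (⟨⟨hxΩ, _⟩, h2⟩ | ⟨hxΩ, h2⟩)
        · exact ⟨hxΩ, h2⟩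
        · exact ⟨hxΩ, htmono.trans h2⟩
      · rintro ⟨hxΩ, hxf⟩
        by_cases hlt : f x < t ⟨k, hk'⟩
        · exact Or.inl ⟨⟨hxΩ, hlt⟩, hxf⟩
        · exact Or.inr ⟨hxΩ, not_lt.1 hlt⟩
  -- volume of the superlevel sets
  have hDNvol : ∀ n (h : n < m), volume (DN n) = ENNReal.ofReal (natE m 0 S n) := by
    intro n h
    rw [hDNdef n h, natE_lt h 0 S]
    exact part1 _
  have hsupvol : ∀ n : ℕ, ∀ hn : n < m - 1, ∀ hn' : n < m,
      volume {x ∈ Ω | t ⟨n, hn'⟩ ≤ f x}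
        = ENNReal.ofReal (∑ j ∈ Finset.range (n+1), natE m 0 S j) := by
    intro n hn hn'
    rw [← claim n hn hn',
      measure_biUnion_finset (fun j _ k _ hjk => hDNdisj j k hjk) (fun j _ => hDNmeas j),
      ENNReal.ofReal_sum_of_nonneg]
    · refine Finset.sum_congr rfl fun j hj => ?_
      have hjm : j < m := by
        have := Finset.mem_range.1 hj; omega
      exact hDNvol j hjm
    · intro j _
      by_cases h : j < m
      · rw [natE_lt h 0 S]; exact hS0 _
      · rw [natE_ge h 0 S]
  intro ρ hρm hρd
  set E : Fin m → Set (EuclideanSpace ℝ (Fin N)) := fun i => {x ∈ Ω | ρ x = c i} with hE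
  have hEmem : ∀ i x, x ∈ E i ↔ (x ∈ Ω ∧ ρ x = c i) := fun i x => Iff.rfl
  have hEmeas : ∀ i, MeasurableSet (E i) := fun i =>
    hΩ_meas.inter (hρm (measurableSet_singleton (c i)))
  have hEsub : ∀ i, E i ⊆ Ω := fun i x hx => ((hEmem i x).1 hx).1
  have hEdisj : Pairwise (Function.onFun Disjoint E) := by
    intro i j hij
    refine Set.disjoint_left.2 fun x hxi hxj => hij ?_
    exact hc_mono.injective ((((hEmem i x).1 hxi).2).symm.trans (((hEmem j x).1 hxj).2))
  have hdist : ∀ r : ℝ, volume {x ∈ Ω | r ≤ ρ x}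
      = ∑ i ∈ Finset.univ.filter (fun i => r ≤ c i), ENNReal.ofReal (S i) := by
    intro r
    rw [hρd r, aux_step_dist volume Ω D hD_meas hD_disj hD_union c r]
    exact Finset.sum_congr rfl fun i _ => hD_vol i
  have hge : ∀ i : Fin m, volume {x ∈ Ω | c i ≤ ρ x}
      = ∑ j ∈ Finset.univ.filter (fun j => i ≤ j), ENNReal.ofReal (S j) := by
    intro i
    rw [hdist (c i)]
    congr 1
    apply Finset.filter_congr
    intro j _
    simp [hc_mono.le_iff_le]
  have hgt : ∀ i : Fin m, volume {x ∈ Ω | c i < ρ x}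
      = ∑ j ∈ Finset.univ.filter (fun j => i < j), ENNReal.ofReal (S j) := by
    intro i
    apply le_antisymm
    · have hseteq : {x ∈ Ω | c i < ρ x} = ⋃ n : ℕ, {x ∈ Ω | c i + 1/((n:ℝ)+1) ≤ ρ x} := by
        ext x
        simp only [Set.mem_iUnion, Set.mem_setOf_eq]
        constructor
        · rintro ⟨hxΩ, hx⟩
          obtain ⟨n, hn⟩ := exists_nat_one_div_lt (show (0:ℝ) < ρ x - c i by linarith)
          exact ⟨n, hxΩ, by linarith⟩
        · rintro ⟨n, hxΩ, hx⟩
          have h0 : (0:ℝ) < 1/((n:ℝ)+1) := by positivity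
          exact ⟨hxΩ, by linarith⟩
      rw [hseteq]
      have hmono : Monotone (fun n : ℕ => {x ∈ Ω | c i + 1/((n:ℝ)+1) ≤ ρ x}) := by
        intro n n' h x hx
        refine ⟨hx.1, le_trans (add_le_add_right ?_ _) hx.2⟩
        apply one_div_le_one_div_of_le (by positivity)
        exact_mod_cast add_le_add_left (Nat.cast_le.2 h) 1
      refine le_of_tendsto (tendsto_measure_iUnion_atTop hmono)
        (Eventually.of_forall fun n => ?_)
      show volume {x ∈ Ω | c i + 1/((n:ℝ)+1) ≤ ρ x}
        ≤ ∑ j ∈ Finset.univ.filter (fun j => i < j), ENNReal.ofReal (S j)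
      rw [hdist]
      apply Finset.sum_le_sum_of_subset
      intro j hj
      simp only [Finset.mem_filter, Finset.mem_univ, true_and] at hj ⊢
      have h0 : (0:ℝ) < 1/((n:ℝ)+1) := by positivity
      exact hc_mono.lt_iff_lt.1 (by linarith)
    · by_cases hlt : (i:ℕ) + 1 < m
      · have hfeq : Finset.univ.filter (fun j : Fin m => (⟨i.1+1, hlt⟩:Fin m) ≤ j)
            = Finset.univ.filter (fun j => i < j) := by
          ext j
          simp only [Finset.mem_filter, Finset.mem_univ, true_and]
          rw [Fin.le_def, Fin.lt_def]
          show i.1 + 1 ≤ j.1 ↔ i.1 < j.1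
          omega
        have heq : ∑ j ∈ Finset.univ.filter (fun j => i < j), ENNReal.ofReal (S j)
            = volume {x ∈ Ω | c ⟨i.1+1, hlt⟩ ≤ ρ x} := by
          rw [hge ⟨i.1+1, hlt⟩, hfeq]
        rw [heq]
        apply measure_mono
        intro x hx
        exact ⟨hx.1, lt_of_lt_of_le (hc_mono (show i < ⟨i.1+1, hlt⟩ from by
          simp [Fin.lt_def])) hx.2⟩
      · have hempty : Finset.univ.filter (fun j => i < j) = ∅ := by
          ext j
          have hj2 := j.2
          simp only [Finset.mem_filter, Finset.mem_univ, true_and, Finset.notMem_empty,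
            iff_false, Fin.lt_def]
          omega
        rw [hempty, Finset.sum_empty]
        exact zero_le
  have hEvol : ∀ i, volume (E i) = ENNReal.ofReal (S i) := by
    intro i
    have hEeq : E i = {x ∈ Ω | c i ≤ ρ x} \ {x ∈ Ω | c i < ρ x} := by
      ext x
      rw [hEmem i x]
      simp only [Set.mem_diff, Set.mem_setOf_eq]
      constructor
      · rintro ⟨hxΩ, hxe⟩
        refine ⟨⟨hxΩ, hxe.ge⟩, fun h => ?_⟩
        rw [hxe] at h
        exact lt_irrefl _ h.2
      · rintro ⟨⟨hxΩ, h1⟩, h2⟩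
        refine ⟨hxΩ, le_antisymm ?_ h1⟩
        by_contra hcon
        push_neg at hcon
        exact h2 ⟨hxΩ, hcon⟩
    have hsumfin : (∑ j ∈ Finset.univ.filter (fun j => i < j), ENNReal.ofReal (S j)) ≠ ⊤ :=
      (ENNReal.sum_lt_top.2 fun j _ => ENNReal.ofReal_lt_top).ne
    rw [hEeq, measure_diff
      (show {x ∈ Ω | c i < ρ x} ⊆ {x ∈ Ω | c i ≤ ρ x} from fun x hx => ⟨hx.1, hx.2.le⟩)
      (hΩ_meas.inter (measurableSet_lt measurable_const hρm)).nullMeasurableSet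
      (by rw [hgt i]; exact hsumfin),
      hge i, hgt i]
    have hins : Finset.univ.filter (fun j => i ≤ j)
        = insert i (Finset.univ.filter (fun j => i < j)) := by
      ext j
      simp only [Finset.mem_filter, Finset.mem_univ, true_and, Finset.mem_insert]
      constructor
      · intro h
        rcases eq_or_lt_of_le h with h' | h'
        · exact Or.inl h'.symm
        · exact Or.inr h'
      · rintro (h | h)
        · exact h.ge
        · exact h.le
    rw [hins, Finset.sum_insert (by simp)]
    exact ENNReal.add_sub_cancel_right hsumfin
  have hEUvol : volume (⋃ i, E i) = volume Ω := by
    rw [measure_iUnion hEdisj hEmeas, tsum_fintype, hΩvol,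
      ENNReal.ofReal_sum_of_nonneg (fun j _ => hS0 j)]
    exact Finset.sum_congr rfl fun i _ => hEvol i
  have hnull : volume (Ω \ ⋃ i, E i) = 0 := by
    rw [measure_diff (Set.iUnion_subset hEsub) (MeasurableSet.iUnion hEmeas).nullMeasurableSet
      (by rw [hEUvol]; exact hΩfin), hEUvol, tsub_self]
  have hEae : (⋃ i, E i) =ᵐ[volume] Ω := by
    rw [ae_eq_set]
    constructor
    · rw [Set.diff_eq_empty.2 (Set.iUnion_subset hEsub)]
      exact measure_empty
    · exact hnull
  have hcle : ∀ i : Fin m, c i ≤ c ml := by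
    intro i
    apply hc_mono.monotone
    show i.1 ≤ m - 1
    have := i.2
    omega
  have hρfint : IntegrableOn (fun x => ρ x * f x) Ω := by
    apply Integrable.mono' (g := fun x => c ml * |f x|) (hf_int.abs.const_mul (c ml))
      ((hρm.mul hf_meas).aestronglyMeasurable)
    have h0 : (volume.restrict Ω) ((⋃ i, E i)ᶜ) = 0 := by
      rw [Measure.restrict_apply (MeasurableSet.iUnion hEmeas).compl, Set.inter_comm]
      exact hnull
    have hae : ∀ᵐ x ∂(volume.restrict Ω), x ∈ ⋃ i, E i := by
      rw [ae_iff]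
      exact measure_mono_null (fun x hx => hx) h0
    filter_upwards [hae] with x hx
    obtain ⟨i, hxi⟩ := Set.mem_iUnion.1 hx
    rw [Real.norm_eq_abs, Pi.mul_apply, abs_mul, ((hEmem i x).1 hxi).2, abs_of_pos (hc_pos i)]
    exact mul_le_mul_of_nonneg_right (hcle i) (abs_nonneg _)
  have hρint_eq : ∫ x in Ω, ρ x * f x = ∑ i, c i * ∫ x in E i, f x := by
    rw [← setIntegral_congr_set hEae,
      integral_iUnion hEmeas hEdisj (hρfint.mono_set (Set.iUnion_subset hEsub)), tsum_fintype]
    refine Finset.sum_congr rfl fun i _ => ?_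
    rw [setIntegral_congr_fun (hEmeas i) (fun x hx => by
      show ρ x * f x = c i * f x
      rw [((hEmem i x).1 hx).2])]
    exact integral_const_mul _ _
  -- step function side
  have hval : ∀ (i : Fin m) x, x ∈ Dhat i →
      (∑ j, (Dhat j).indicator (fun _ => c j) x) = c i :=
    fun i x hx => aux_sum_indicator Dhat hDdisj c i x hx
  have hρhm : Measurable (fun x => ∑ j, (Dhat j).indicator (fun _ => c j) x) :=
    Finset.measurable_sum _ fun j _ => measurable_const.indicator (hDm j)
  have hρhbound : ∀ x, ‖∑ j, (Dhat j).indicator (fun _ => c j) x‖ ≤ c ml := by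
    intro x
    by_cases hx : ∃ i, x ∈ Dhat i
    · obtain ⟨i, hxi⟩ := hx
      rw [hval i x hxi, Real.norm_eq_abs, abs_of_pos (hc_pos i)]
      exact hcle i
    · push_neg at hx
      rw [show (∑ j, (Dhat j).indicator (fun _ => c j) x) = 0 from
        Finset.sum_eq_zero fun j _ => Set.indicator_of_notMem (hx j) _]
      rw [norm_zero]
      exact (hc_pos ml).le
  have hρhfint : IntegrableOn
      (fun x => (∑ j, (Dhat j).indicator (fun _ => c j) x) * f x) Ω := by
    apply Integrable.mono' (g := fun x => c ml * |f x|) (hf_int.abs.const_mul (c ml))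
      ((hρhm.mul hf_meas).aestronglyMeasurable)
    refine Eventually.of_forall fun x => ?_
    rw [Real.norm_eq_abs, Pi.mul_apply, abs_mul]
    exact mul_le_mul_of_nonneg_right
      (by simpa [Real.norm_eq_abs] using hρhbound x) (abs_nonneg _)
  have hρhint_eq : ∫ x in Ω, (∑ j, (Dhat j).indicator (fun _ => c j) x) * f x
      = ∑ i, c i * ∫ x in Dhat i, f x := by
    rw [← hDunion, integral_iUnion hDm hDdisj (by rw [hDunion]; exact hρhfint), tsum_fintype]
    refine Finset.sum_congr rfl fun i _ => ?_
    rw [setIntegral_congr_fun (hDm i) (fun x hx => by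
      show (∑ j, (Dhat j).indicator (fun _ => c j) x) * f x = c i * f x
      rw [hval i x hx])]
    exact integral_const_mul _ _
  -- ℕ-indexed versions of E
  set EN : ℕ → Set (EuclideanSpace ℝ (Fin N)) := natE m ∅ E with hEN
  have hENdef : ∀ n (h : n < m), EN n = E ⟨n, h⟩ := fun n h => by
    rw [hEN]; exact natE_lt h ∅ E
  have hENempty : ∀ n, ¬ n < m → EN n = ∅ := fun n h => by
    rw [hEN]; exact natE_ge h ∅ E
  have hENmeas : ∀ n, MeasurableSet (EN n) := by
    intro n
    by_cases h : n < m
    · rw [hENdef n h]; exact hEmeas _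
    · rw [hENempty n h]; exact MeasurableSet.empty
  have hENsub : ∀ n, EN n ⊆ Ω := by
    intro n
    by_cases h : n < m
    · rw [hENdef n h]; exact hEsub _
    · rw [hENempty n h]; exact Set.empty_subset _
  have hENdisj : ∀ j k : ℕ, j ≠ k → Disjoint (EN j) (EN k) := by
    intro j k hjk
    by_cases hj : j < m
    · by_cases hk : k < m
      · rw [hENdef j hj, hENdef k hk]
        exact hEdisj (by simp only [ne_eq, Fin.ext_iff]; exact hjk)
      · rw [hENempty k hk]; exact disjoint_empty _
    · rw [hENempty j hj]; exact empty_disjoint _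
  set cN : ℕ → ℝ := natE m 0 c with hcN
  -- rewrite both integrals as range sums
  have hfinsum_a : ∫ x in Ω, (∑ j, (Dhat j).indicator (fun _ => c j) x) * f x
      = ∑ n ∈ Finset.range m, cN n * ∫ x in DN n, f x := by
    rw [hρhint_eq, ← Fin.sum_univ_eq_sum_range (fun n => cN n * ∫ x in DN n, f x) m]
    refine Finset.sum_congr rfl fun i _ => ?_
    have h1 : cN (i:ℕ) = c i := by rw [hcN]; exact natE_lt i.2 0 c
    have h2 : DN (i:ℕ) = Dhat i := hDNdef i.1 i.2
    rw [h1, h2]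
  have hfinsum_b : ∫ x in Ω, ρ x * f x
      = ∑ n ∈ Finset.range m, cN n * ∫ x in EN n, f x := by
    rw [hρint_eq, ← Fin.sum_univ_eq_sum_range (fun n => cN n * ∫ x in EN n, f x) m]
    refine Finset.sum_congr rfl fun i _ => ?_
    have h1 : cN (i:ℕ) = c i := by rw [hcN]; exact natE_lt i.2 0 c
    have h2 : EN (i:ℕ) = E i := hENdef i.1 i.2
    rw [h1, h2]
  -- total sums agree
  have hsum_a : ∑ n ∈ Finset.range m, ∫ x in DN n, f x = ∫ x in Ω, f x := by
    have h := integral_biUnion_finset (Finset.range m) (fun n _ => hDNmeas n)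
      (fun a _ b _ hab => hDNdisj a b hab)
      (fun n _ => hf_int.mono_set (hDNsub n)) (f := f) (μ := volume)
    have hcover : (⋃ n ∈ Finset.range m, DN n) = Ω := by
      rw [← hDunion]; ext x
      simp only [Set.mem_iUnion, Finset.mem_range, exists_prop]
      constructor
      · rintro ⟨n, hn, hx⟩; rw [hDNdef n hn] at hx; exact ⟨⟨n, hn⟩, hx⟩
      · rintro ⟨i, hx⟩; exact ⟨i.1, i.2, by rw [hDNdef i.1 i.2]; exact hx⟩
    rw [← h, hcover]
  have hsum_b : ∑ n ∈ Finset.range m, ∫ x in EN n, f x = ∫ x in Ω, f x := by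
    have h := integral_biUnion_finset (Finset.range m) (fun n _ => hENmeas n)
      (fun a _ b _ hab => hENdisj a b hab)
      (fun n _ => hf_int.mono_set (hENsub n)) (f := f) (μ := volume)
    have hcover : (⋃ n ∈ Finset.range m, EN n) = ⋃ i, E i := by
      ext x
      simp only [Set.mem_iUnion, Finset.mem_range, exists_prop]
      constructor
      · rintro ⟨n, hn, hx⟩; rw [hENdef n hn] at hx; exact ⟨⟨n, hn⟩, hx⟩
      · rintro ⟨i, hx⟩; exact ⟨i.1, i.2, by rw [hENdef i.1 i.2]; exact hx⟩
    rw [← h, hcover]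
    exact setIntegral_congr_set hEae
  -- prefix sums comparison (bathtub)
  have hprefix : ∀ k, k < m - 1 →
      ∑ n ∈ Finset.range (k+1), ∫ x in EN n, f x
        ≤ ∑ n ∈ Finset.range (k+1), ∫ x in DN n, f x := by
    intro k hk
    have hk' : k < m := by omega
    have ha := integral_biUnion_finset (Finset.range (k+1)) (fun n _ => hDNmeas n)
      (fun a _ b _ hab => hDNdisj a b hab)
      (fun n _ => hf_int.mono_set (hDNsub n)) (f := f) (μ := volume)
    have hb := integral_biUnion_finset (Finset.range (k+1)) (fun n _ => hENmeas n)
      (fun a _ b _ hab => hENdisj a b hab)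
      (fun n _ => hf_int.mono_set (hENsub n)) (f := f) (μ := volume)
    rw [← ha, ← hb]
    have hvolB : volume (⋃ n ∈ Finset.range (k+1), EN n)
        = volume {x ∈ Ω | t ⟨k, hk'⟩ ≤ f x} := by
      rw [measure_biUnion_finset (fun a _ b _ hab => hENdisj a b hab) (fun n _ => hENmeas n),
        hsupvol k hk hk', ENNReal.ofReal_sum_of_nonneg]
      · refine Finset.sum_congr rfl fun n hn => ?_
        have hnm : n < m := by have := Finset.mem_range.1 hn; omega
        rw [hENdef n hnm, hEvol, natE_lt hnm 0 S]
      · intro n _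
        by_cases h : n < m
        · rw [natE_lt h 0 S]; exact hS0 _
        · rw [natE_ge h 0 S]
    have hbt := aux_bathtub volume Ω hΩ_meas hΩfin f hf_meas hf_int
      (⋃ n ∈ Finset.range (k+1), EN n)
      (Finset.measurableSet_biUnion _ (fun n _ => hENmeas n))
      (Set.iUnion₂_subset fun n _ => hENsub n) (t ⟨k, hk'⟩) hvolB
    calc ∫ x in ⋃ n ∈ Finset.range (k+1), EN n, f x
        ≤ ∫ x in {x ∈ Ω | t ⟨k, hk'⟩ ≤ f x}, f x := hbt
      _ = ∫ x in ⋃ n ∈ Finset.range (k+1), DN n, f x := by rw [claim k hk hk']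
  -- Abel summation and conclusion
  rw [hfinsum_a, hfinsum_b]
  have ha := Finset.sum_range_by_parts cN (fun n => ∫ x in DN n, f x) m
  have hb := Finset.sum_range_by_parts cN (fun n => ∫ x in EN n, f x) m
  simp only [smul_eq_mul] at ha hb
  rw [ha, hb, hsum_a, hsum_b]
  apply sub_le_sub_left
  apply Finset.sum_le_sum
  intro k hkmem
  have hk1 : k < m - 1 := Finset.mem_range.1 hkmem
  have hd : 0 ≤ cN (k+1) - cN k := by
    have e1 : cN (k+1) = c ⟨k+1, by omega⟩ := by rw [hcN]; exact natE_lt (by omega) 0 c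
    have e2 : cN k = c ⟨k, by omega⟩ := by rw [hcN]; exact natE_lt (by omega) 0 c
    rw [e1, e2, sub_nonneg]
    exact (hc_mono (by simp [Fin.lt_def])).le
  exact mul_le_mul_of_nonneg_left (hprefix k hk1) hd
end

section
/- Let f ∈ L¹(Ω) be nonnegative with all level sets {x ∈ Ω : f(x) = c} of Lebesgue measure zero, and let ρ̂ = c₁χ_{D̂₁} + ⋯ + c_m χ_{D̂_m} be the function built on the super-level sets of f: D̂₁ = {x ∈ Ω : f(x) ≥ t₁} with t₁ = sup{s : |{x ∈ Ω : f(x) ≥ s}| ≥ S₁}, and recursively D̂_i = {x ∈ Ω \ (D̂₁ ∪ ⋯ ∪ D̂_{i−1}) : f(x) ≥ t_i} with t_i = sup{s : |{x ∈ Ω \ (D̂₁ ∪ ⋯ ∪ D̂_{i−1}) : f(x) ≥ s}| ≥ S_i}. Then ρ̂ is the unique minimizer of ρ ↦ ∫_Ω ρ f dx over P: any ρ ∈ P with ∫_Ω ρ f dx = ∫_Ω ρ̂ f dx equals ρ̂ almost everywhere. -/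
open MeasureTheory Set

set_option maxHeartbeats 2000000 in
/-- uniqueness of the minimizer built on super-level sets.
Let `f ∈ L¹(Ω)` be nonnegative with all its level sets of measure zero, and let
`ρ̂ = ∑ i, c i • χ_{D̂ i}` be the step function built on the super-level sets of `f`
(thresholds `t i = sup {s | |{x ∈ Ω \ (D̂ 0 ∪ ⋯ ∪ D̂ (i-1)) : f x ≥ s}| ≥ S i}`,
`D̂ i = {x ∈ Ω \ (D̂ 0 ∪ ⋯ ∪ D̂ (i-1)) : f x ≥ t i}`, last set the remainder).
Then `ρ̂` is the unique minimizer of `ρ ↦ ∫_Ω ρ f` over the rearrangement class `P`: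
any `ρ ∈ P` achieving the same integral equals `ρ̂` a.e. on `Ω`. -/
theorem stmt6 {N m : ℕ} (hm : 0 < m)
    (Ω : Set (EuclideanSpace ℝ (Fin N)))
    (hΩ_meas : MeasurableSet Ω) (hΩ_bd : Bornology.IsBounded Ω)
    (c : Fin m → ℝ) (hc_pos : ∀ i, 0 < c i) (hc_mono : StrictMono c)
    (S : Fin m → ℝ) (hS_pos : ∀ i, 0 < S i)
    (D : Fin m → Set (EuclideanSpace ℝ (Fin N)))
    (hD_meas : ∀ i, MeasurableSet (D i))
    (hD_disj : Pairwise (Function.onFun Disjoint D))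
    (hD_union : (⋃ i, D i) = Ω)
    (hD_vol : ∀ i, volume (D i) = ENNReal.ofReal (S i))
    (f : EuclideanSpace ℝ (Fin N) → ℝ) (hf_meas : Measurable f)
    (hf_int : IntegrableOn f Ω) (hf_nonneg : ∀ x ∈ Ω, 0 ≤ f x)
    (hf_level : ∀ a : ℝ, volume {x ∈ Ω | f x = a} = 0)
    (t : Fin m → ℝ) (Dhat : Fin m → Set (EuclideanSpace ℝ (Fin N)))
    (ht : ∀ i : Fin m, (i : ℕ) < m - 1 →
      t i = sSup {s : ℝ |
        ENNReal.ofReal (S i) ≤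
          volume {x ∈ Ω \ ⋃ j, ⋃ (_ : j < i), Dhat j | s ≤ f x}})
    (hDhat : ∀ i : Fin m, (i : ℕ) < m - 1 →
      Dhat i = {x ∈ Ω \ ⋃ j, ⋃ (_ : j < i), Dhat j | t i ≤ f x})
    (hDlast : ∀ i : Fin m, (i : ℕ) = m - 1 →
      Dhat i = Ω \ ⋃ j, ⋃ (_ : j < i), Dhat j) :
    ∀ ρ : EuclideanSpace ℝ (Fin N) → ℝ, Measurable ρ →
      (∀ r : ℝ, volume {x ∈ Ω | r ≤ ρ x} =
        volume {x ∈ Ω | r ≤ ∑ i, (D i).indicator (fun _ => c i) x}) →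
      (∫ x in Ω, ρ x * f x) =
        ∫ x in Ω, (∑ i, (Dhat i).indicator (fun _ => c i) x) * f x →
      ρ =ᵐ[volume.restrict Ω] fun x => ∑ i, (Dhat i).indicator (fun _ => c i) x := by
  intro ρ hρm hρdist hρint
  classical
  have hΩfin : volume Ω ≠ ⊤ := hΩ_bd.measure_lt_top.ne
  -- ℕ-indexed (total) versions of the data
  set SS : ℕ → ℝ := fun n => if h : n < m then S ⟨n, h⟩ else 1 with hSSdef
  set cc : ℕ → ℝ := fun n => if h : n < m then c ⟨n, h⟩ else 0 with hccdef
  set tt : ℕ → ℝ := fun n => if h : n < m then t ⟨n, h⟩ else 0 with httdef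
  have hSS : ∀ n (h : n < m), SS n = S ⟨n, h⟩ := fun n h => dif_pos h
  have hcc : ∀ n (h : n < m), cc n = c ⟨n, h⟩ := fun n h => dif_pos h
  have htt : ∀ n (h : n < m), tt n = t ⟨n, h⟩ := fun n h => dif_pos h
  set Rem : ℕ → Set (EuclideanSpace ℝ (Fin N)) :=
    fun n => Ω \ ⋃ (j : Fin m), ⋃ (_ : (j : ℕ) < n), Dhat j with hRemdef
  set Tl : ℕ → ENNReal :=
    fun n => ∑ j ∈ Finset.univ.filter (fun j : Fin m => n ≤ (j : ℕ)), ENNReal.ofReal (S j)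
    with hTldef
  have hRemFin : ∀ i : Fin m, (Ω \ ⋃ j, ⋃ (_ : j < i), Dhat j) = Rem (i : ℕ) := fun i => rfl
  have hRemSub : ∀ n, Rem n ⊆ Ω := fun n => diff_subset
  have hRemMono : ∀ {a b : ℕ}, a ≤ b → Rem b ⊆ Rem a := by
    intro a b hab
    apply diff_subset_diff_right
    intro x hx
    simp only [mem_iUnion] at hx ⊢
    obtain ⟨j, hj, hxj⟩ := hx
    exact ⟨j, by omega, hxj⟩
  have hRem0 : Rem 0 = Ω := by
    simp only [hRemdef]
    simp
  have hRemSucc : ∀ n (hn : n < m), Rem (n + 1) = Rem n \ Dhat ⟨n, hn⟩ := by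
    intro n hn
    ext x
    simp only [hRemdef, mem_diff, mem_iUnion, not_exists]
    constructor
    · rintro ⟨hxΩ, hj⟩
      exact ⟨⟨hxΩ, fun j hjn => hj j (by omega)⟩, hj ⟨n, hn⟩ (by simp)⟩
    · rintro ⟨⟨hxΩ, hj⟩, hn'⟩
      refine ⟨hxΩ, fun j hjn => ?_⟩
      rcases Nat.lt_succ_iff_lt_or_eq.1 hjn with h | h
      · exact hj j h
      · have : j = ⟨n, hn⟩ := Fin.ext h
        rwa [this]
  have hTlfin : ∀ n, Tl n ≠ ⊤ := by
    intro n
    simp only [hTldef]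
    exact (ENNReal.sum_lt_top.mpr (fun j _ => ENNReal.ofReal_lt_top)).ne
  have hTlSucc : ∀ n (hn : n < m), Tl n = ENNReal.ofReal (S ⟨n, hn⟩) + Tl (n + 1) := by
    intro n hn
    simp only [hTldef]
    have h : Finset.univ.filter (fun j : Fin m => n ≤ (j : ℕ))
        = insert ⟨n, hn⟩ (Finset.univ.filter (fun j : Fin m => n + 1 ≤ (j : ℕ))) := by
      ext j
      simp only [Finset.mem_filter, Finset.mem_insert, Finset.mem_univ, true_and]
      constructor
      · intro hj
        rcases eq_or_lt_of_le hj with h | h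
        · exact Or.inl (Fin.ext h.symm)
        · exact Or.inr h
      · rintro (rfl | hj)
        · exact le_refl n
        · omega
    rw [h, Finset.sum_insert (by simp [Finset.mem_filter])]
  have hTlLe : ∀ n (hn : n < m), ENNReal.ofReal (S ⟨n, hn⟩) ≤ Tl n := by
    intro n hn
    simp only [hTldef]
    exact Finset.single_le_sum (f := fun j : Fin m => ENNReal.ofReal (S j)) (fun j _ => zero_le)
      (Finset.mem_filter.2 ⟨Finset.mem_univ (⟨n, hn⟩ : Fin m), le_refl n⟩)
  have hΩvol : volume Ω = Tl 0 := by
    simp only [hTldef]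
    rw [← hD_union, measure_iUnion hD_disj hD_meas, tsum_fintype]
    simp [hD_vol]
  -- Markov inequality
  have hMarkov : ∀ s : ℝ, 0 < s → s * (volume {x ∈ Ω | s ≤ f x}).toReal ≤ ∫ x in Ω, f x := by
    intro s hs
    have h0 : 0 ≤ᵐ[volume.restrict Ω] f := (ae_restrict_iff' hΩ_meas).2 (ae_of_all _ hf_nonneg)
    have h := mul_meas_ge_le_integral_of_nonneg h0 hf_int s
    have hms : MeasurableSet {x : EuclideanSpace ℝ (Fin N) | s ≤ f x} :=
      measurableSet_le measurable_const hf_meas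
    have heq : (volume.restrict Ω) {x | s ≤ f x} = volume {x ∈ Ω | s ≤ f x} := by
      rw [Measure.restrict_apply hms]
      congr 1
      ext x
      simp [and_comm]
    rw [measureReal_def] at h
    rwa [heq] at h
  -- the main inductive construction facts
  have key : ∀ n : ℕ, ∀ _ : n < m,
      MeasurableSet (Rem n) ∧ volume (Rem n) = Tl n ∧
      (∀ hn' : n < m - 1,
        MeasurableSet (Dhat ⟨n, by omega⟩) ∧ Dhat ⟨n, by omega⟩ ⊆ Rem n ∧
        volume (Dhat ⟨n, by omega⟩) = ENNReal.ofReal (S ⟨n, by omega⟩) ∧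
        (∀ x ∈ Dhat ⟨n, by omega⟩, t ⟨n, by omega⟩ ≤ f x) ∧
        (∀ x ∈ Rem (n + 1), f x < t ⟨n, by omega⟩)) := by
    intro n
    induction n using Nat.strong_induction_on with
    | _ n ih =>
      intro hn
      have hRemPart : MeasurableSet (Rem n) ∧ volume (Rem n) = Tl n := by
        cases n with
        | zero => rw [hRem0]; exact ⟨hΩ_meas, hΩvol⟩
        | succ k =>
          have hk : k < m := by omega
          have hk1 : k < m - 1 := by omega
          obtain ⟨hRmeas, hRvol, hstep⟩ := ih k (by omega) hk
          obtain ⟨hDm, hDsub, hDvol', -, -⟩ := hstep hk1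
          rw [hRemSucc k hk]
          refine ⟨hRmeas.diff hDm, ?_⟩
          rw [measure_diff hDsub hDm.nullMeasurableSet
              (by rw [hDvol']; exact ENNReal.ofReal_ne_top),
            hRvol, hDvol', hTlSucc k hk]
          exact ENNReal.add_sub_cancel_left ENNReal.ofReal_ne_top
      obtain ⟨hRmeas, hRvol⟩ := hRemPart
      refine ⟨hRmeas, hRvol, ?_⟩
      intro hn'
      set i : Fin m := ⟨n, by omega⟩ with hidef
      set g : ℝ → ENNReal := fun s => volume {x ∈ Rem n | s ≤ f x} with hgdef
      set A : Set ℝ := {s | ENNReal.ofReal (S i) ≤ g s} with hAdef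
      have hsetmeas : ∀ s : ℝ, MeasurableSet {x ∈ Rem n | s ≤ f x} := by
        intro s
        exact hRmeas.inter (measurableSet_le measurable_const hf_meas)
      have hganti : ∀ {a b : ℝ}, a ≤ b → g b ≤ g a := by
        intro a b hab
        apply measure_mono
        rintro x ⟨hxR, hxf⟩
        exact ⟨hxR, le_trans hab hxf⟩
      have htieq : t i = sSup A := by
        rw [ht i hn']; rfl
      have hA0 : (0 : ℝ) ∈ A := by
        have : {x ∈ Rem n | (0:ℝ) ≤ f x} = Rem n := by
          ext x
          exact ⟨fun h => h.1, fun h => ⟨h, hf_nonneg x (hRemSub n h)⟩⟩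
        show ENNReal.ofReal (S i) ≤ g 0
        show ENNReal.ofReal (S i) ≤ volume {x ∈ Rem n | (0:ℝ) ≤ f x}
        rw [this, hRvol]
        exact hTlLe n (by omega)
      have hAbdd : BddAbove A := by
        refine ⟨(∫ x in Ω, f x) / S i + 1, fun s hs => ?_⟩
        by_contra hcon
        push_neg at hcon
        have hint_nonneg : 0 ≤ ∫ x in Ω, f x :=
          setIntegral_nonneg hΩ_meas hf_nonneg
        have hSpos := hS_pos i
        have hs0 : 0 < s := by
          have : (0:ℝ) ≤ (∫ x in Ω, f x) / S i := div_nonneg hint_nonneg hSpos.le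
          linarith
        have hsub : {x ∈ Rem n | s ≤ f x} ⊆ {x ∈ Ω | s ≤ f x} :=
          fun x hx => ⟨hRemSub n hx.1, hx.2⟩
        have hle : ENNReal.ofReal (S i) ≤ volume {x ∈ Ω | s ≤ f x} :=
          le_trans hs (measure_mono hsub)
        have hfin : volume {x ∈ Ω | s ≤ f x} ≠ ⊤ :=
          (lt_of_le_of_lt (measure_mono (fun x hx => hx.1)) hΩ_bd.measure_lt_top).ne
        have hSle : S i ≤ (volume {x ∈ Ω | s ≤ f x}).toReal := by
          rw [← ENNReal.ofReal_le_iff_le_toReal hfin]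
          exact hle
        have hMk := hMarkov s hs0
        have h1 : s * S i ≤ ∫ x in Ω, f x :=
          le_trans (by nlinarith) hMk
        have h2 : s ≤ (∫ x in Ω, f x) / S i := by
          rw [le_div_iff₀ hSpos]
          exact h1
        linarith
      have hlow : ∀ s : ℝ, s < t i → ENNReal.ofReal (S i) ≤ g s := by
        intro s hslt
        rw [htieq] at hslt
        obtain ⟨a, haA, hsa⟩ := exists_lt_of_lt_csSup ⟨0, hA0⟩ hslt
        exact le_trans haA (hganti hsa.le)
      have hDn : Dhat i = {x ∈ Rem n | t i ≤ f x} := hDhat i hn'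
      have hDm : MeasurableSet (Dhat i) := by rw [hDn]; exact hsetmeas _
      have hDsub : Dhat i ⊆ Rem n := by rw [hDn]; exact fun x hx => hx.1
      have hD4 : ∀ x ∈ Dhat i, t i ≤ f x := by rw [hDn]; exact fun x hx => hx.2
      have hD5 : ∀ x ∈ Rem (n + 1), f x < t i := by
        rw [hRemSucc n (by omega)]
        rintro x ⟨hxR, hxD⟩
        by_contra hcon
        push_neg at hcon
        exact hxD (by rw [hDn]; exact ⟨hxR, hcon⟩)
      have hvol_ge : ENNReal.ofReal (S i) ≤ volume (Dhat i) := by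
        have hseq : Dhat i = ⋂ k : ℕ, {x ∈ Rem n | t i - 1/(k+1) ≤ f x} := by
          rw [hDn]
          ext x
          simp only [mem_iInter, mem_sep_iff]
          constructor
          · rintro ⟨hxR, hxf⟩ k
            refine ⟨hxR, le_trans ?_ hxf⟩
            have : (0:ℝ) < 1/((k:ℝ)+1) := by positivity
            linarith
          · intro h
            refine ⟨(h 0).1, ?_⟩
            by_contra hlt
            push_neg at hlt
            obtain ⟨k, hk⟩ := exists_nat_one_div_lt (show (0:ℝ) < t i - f x by linarith)
            have := (h k).2
            linarith
        rw [hseq]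
        have hanti : Antitone fun k : ℕ => {x ∈ Rem n | t i - 1/(k+1) ≤ f x} := by
          intro k l hkl
          rintro x ⟨hxR, hxf⟩
          refine ⟨hxR, le_trans ?_ hxf⟩
          have h1 : (1:ℝ)/((l:ℝ)+1) ≤ 1/((k:ℝ)+1) := by
            apply one_div_le_one_div_of_le (by positivity)
            have : (k:ℝ) ≤ (l:ℝ) := Nat.cast_le.2 hkl
            linarith
          linarith
        rw [hanti.measure_iInter (fun k => (hsetmeas _).nullMeasurableSet)
          ⟨0, (lt_of_le_of_lt (measure_mono (fun x hx => hRemSub n hx.1))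
            hΩ_bd.measure_lt_top).ne⟩]
        refine le_iInf fun k => hlow _ ?_
        have : (0:ℝ) < 1/((k:ℝ)+1) := by positivity
        linarith
      have hvol_le : volume (Dhat i) ≤ ENNReal.ofReal (S i) := by
        have hsub : Dhat i ⊆ {x ∈ Rem n | t i < f x} ∪ {x ∈ Ω | f x = t i} := by
          rw [hDn]
          rintro x ⟨hxR, hxf⟩
          rcases eq_or_lt_of_le hxf with h | h
          · exact Or.inr ⟨hRemSub n hxR, h.symm⟩
          · exact Or.inl ⟨hxR, h⟩
        have hUle : volume {x ∈ Rem n | t i < f x} ≤ ENNReal.ofReal (S i) := by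
          have hUeq : {x ∈ Rem n | t i < f x} = ⋃ k : ℕ, {x ∈ Rem n | t i + 1/(k+1) ≤ f x} := by
            ext x
            simp only [mem_iUnion, mem_sep_iff]
            constructor
            · rintro ⟨hxR, hxf⟩
              obtain ⟨k, hk⟩ := exists_nat_one_div_lt (show (0:ℝ) < f x - t i by linarith)
              exact ⟨k, hxR, by linarith⟩
            · rintro ⟨k, hxR, hxf⟩
              refine ⟨hxR, lt_of_lt_of_le ?_ hxf⟩
              have : (0:ℝ) < 1/((k:ℝ)+1) := by positivity
              linarith
          have hmono : Monotone fun k : ℕ => {x ∈ Rem n | t i + 1/(k+1) ≤ f x} := by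
            intro k l hkl
            rintro x ⟨hxR, hxf⟩
            refine ⟨hxR, le_trans ?_ hxf⟩
            have h1 : (1:ℝ)/((l:ℝ)+1) ≤ 1/((k:ℝ)+1) := by
              apply one_div_le_one_div_of_le (by positivity)
              have : (k:ℝ) ≤ (l:ℝ) := Nat.cast_le.2 hkl
              linarith
            linarith
          rw [hUeq, hmono.measure_iUnion]
          refine iSup_le fun k => ?_
          have hnotA : t i + 1/(k+1) ∉ A := by
            intro hmem
            have := le_csSup hAbdd hmem
            rw [← htieq] at this
            have hpos : (0:ℝ) < 1/((k:ℝ)+1) := by positivity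
            linarith
          have : ¬ ENNReal.ofReal (S i) ≤ g (t i + 1/(k+1)) := hnotA
          exact (not_le.1 this).le
        calc volume (Dhat i)
            ≤ volume ({x ∈ Rem n | t i < f x} ∪ {x ∈ Ω | f x = t i}) := measure_mono hsub
          _ ≤ volume {x ∈ Rem n | t i < f x} + volume {x ∈ Ω | f x = t i} :=
              measure_union_le _ _
          _ = volume {x ∈ Rem n | t i < f x} := by rw [hf_level (t i), add_zero]
          _ ≤ ENNReal.ofReal (S i) := hUle
      exact ⟨hDm, hDsub, le_antisymm hvol_le hvol_ge, hD4, hD5⟩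
  -- unpack the induction
  have hRemMeas : ∀ n, n < m → MeasurableSet (Rem n) := fun n hn => (key n hn).1
  have hRemVol : ∀ n, n < m → volume (Rem n) = Tl n := fun n hn => (key n hn).2.1
  have hDhatVolg : ∀ n (hn' : n < m - 1),
      volume (Dhat ⟨n, by omega⟩) = ENNReal.ofReal (S ⟨n, by omega⟩) :=
    fun n hn' => ((key n (by omega)).2.2 hn').2.2.1
  have hD4g : ∀ n (hn' : n < m - 1), ∀ x ∈ Dhat ⟨n, by omega⟩, t ⟨n, by omega⟩ ≤ f x :=
    fun n hn' => ((key n (by omega)).2.2 hn').2.2.2.1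
  have hD5g : ∀ n (hn' : n < m - 1), ∀ x ∈ Rem (n + 1), f x < t ⟨n, by omega⟩ :=
    fun n hn' => ((key n (by omega)).2.2 hn').2.2.2.2
  have hDhatMeas : ∀ i : Fin m, MeasurableSet (Dhat i) := by
    intro i
    by_cases h : (i : ℕ) < m - 1
    · have := ((key i i.isLt).2.2 h).1
      rwa [Fin.eta] at this
    · have hieq : (i : ℕ) = m - 1 := by omega
      rw [hDlast i hieq, hRemFin i]
      exact hRemMeas _ i.isLt
  have hDhatSubRem : ∀ i : Fin m, Dhat i ⊆ Rem (i : ℕ) := by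
    intro i
    by_cases h : (i : ℕ) < m - 1
    · have := ((key i i.isLt).2.2 h).2.1
      rwa [Fin.eta] at this
    · have hieq : (i : ℕ) = m - 1 := by omega
      rw [hDlast i hieq, hRemFin i]
  have hDhatSubΩ : ∀ i : Fin m, Dhat i ⊆ Ω := fun i => (hDhatSubRem i).trans (hRemSub _)
  have hDhatNotRem : ∀ (j : Fin m) (x), x ∈ Dhat j → x ∉ Rem ((j : ℕ) + 1) := by
    intro j x hx hmem
    simp only [hRemdef, mem_diff, mem_iUnion, not_exists] at hmem
    exact hmem.2 j (by omega) hx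
  have hdisj : ∀ j k : Fin m, (j : ℕ) < (k : ℕ) → ∀ x ∈ Dhat j, x ∉ Dhat k := by
    intro j k hjk x hxj hxk
    exact hDhatNotRem j x hxj (hRemMono (by omega) (hDhatSubRem k hxk))
  have hdisj' : ∀ j k : Fin m, j ≠ k → ∀ x ∈ Dhat j, x ∉ Dhat k := by
    intro j k hjk x hxj hxk
    rcases lt_or_gt_of_ne (fun h : (j:ℕ) = (k:ℕ) => hjk (Fin.ext h)) with h | h
    · exact hdisj j k h x hxj hxk
    · exact hdisj k j h x hxk hxj
  have hcover : ∀ x ∈ Ω, ∃ k : Fin m, x ∈ Dhat k := by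
    intro x hx
    by_contra hcon
    push_neg at hcon
    have hxRem : x ∈ Rem (m - 1) := by
      simp only [hRemdef, mem_diff, mem_iUnion, not_exists]
      exact ⟨hx, fun j _ => hcon j⟩
    have hlast : Dhat ⟨m - 1, by omega⟩ = Rem (m - 1) := by
      rw [hDlast ⟨m - 1, by omega⟩ rfl, hRemFin]
    exact hcon ⟨m - 1, by omega⟩ (by rw [hlast]; exact hxRem)
  have hsum : ∀ (x) (k : Fin m), x ∈ Dhat k →
      (∑ i, (Dhat i).indicator (fun _ => c i) x) = c k := by
    intro x k hk
    rw [Finset.sum_eq_single k]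
    · exact indicator_of_mem hk _
    · intro j _ hjk
      exact indicator_of_notMem (hdisj' k j (Ne.symm hjk) x hk) _
    · intro h
      exact absurd (Finset.mem_univ k) h
  have hsumD : ∀ (x) (k : Fin m), x ∈ D k →
      (∑ i, (D i).indicator (fun _ => c i) x) = c k := by
    intro x k hk
    rw [Finset.sum_eq_single k]
    · exact indicator_of_mem hk _
    · intro j _ hjk
      refine indicator_of_notMem (fun hj => ?_) _
      exact (hD_disj (Ne.symm hjk)).le_bot ⟨hk, hj⟩
    · intro h
      exact absurd (Finset.mem_univ k) h
  -- monotonicity of the thresholds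
  have hA0g : ∀ n (hn' : n < m - 1),
      ENNReal.ofReal (S ⟨n, by omega⟩) ≤ volume {x ∈ Rem n | (0:ℝ) ≤ f x} := by
    intro n hn'
    have : {x ∈ Rem n | (0:ℝ) ≤ f x} = Rem n := by
      ext x
      exact ⟨fun h => h.1, fun h => ⟨h, hf_nonneg x (hRemSub n h)⟩⟩
    rw [this, hRemVol n (by omega)]
    exact hTlLe n (by omega)
  have htmono : ∀ (a b : ℕ) (hab : a ≤ b) (hb : b < m - 1), t ⟨b, by omega⟩ ≤ t ⟨a, by omega⟩ := by
    intro a b hab hb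
    have ha : a < m - 1 := by omega
    rcases eq_or_lt_of_le hab with rfl | hlt
    · exact le_refl _
    · rw [ht ⟨b, by omega⟩ hb]
      refine csSup_le ⟨0, ?_⟩ ?_
      · show ENNReal.ofReal (S ⟨b, by omega⟩) ≤ volume {x ∈ Rem b | (0:ℝ) ≤ f x}
        exact hA0g b hb
      intro s hs
      by_contra hcon
      push_neg at hcon
      have hemp : {x ∈ Rem b | s ≤ f x} = ∅ := by
        ext x
        simp only [mem_sep_iff, mem_empty_iff_false, iff_false, not_and]
        intro hxR hxf
        have hx1 : x ∈ Rem (a + 1) := hRemMono (by omega) hxR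
        have := hD5g a ha x hx1
        linarith
      have hs' : ENNReal.ofReal (S ⟨b, by omega⟩) ≤ volume {x ∈ Rem b | s ≤ f x} := hs
      rw [hemp, measure_empty, nonpos_iff_eq_zero, ENNReal.ofReal_eq_zero] at hs'
      linarith [hS_pos ⟨b, show b < m by omega⟩]
  -- superlevel sets of the step function on D
  have hρ0top : ∀ r : ℝ, c ⟨m - 1, by omega⟩ < r → volume {x ∈ Ω | r ≤ ρ x} = 0 := by
    intro r hr
    rw [hρdist r]
    have hempty : {x ∈ Ω | r ≤ ∑ i, (D i).indicator (fun _ => c i) x} = ∅ := by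
      ext x
      simp only [mem_sep_iff, mem_empty_iff_false, iff_false, not_and]
      intro hxΩ hle
      obtain ⟨k, hk⟩ := mem_iUnion.1 (hD_union.symm ▸ hxΩ)
      rw [hsumD x k hk] at hle
      have : c k ≤ c ⟨m - 1, by omega⟩ := hc_mono.monotone (Fin.le_def.2 (show (k:ℕ) ≤ m - 1 by omega))
      linarith
    rw [hempty, measure_empty]
  have hρ0lvl : ∀ (n : ℕ) (hn : n + 1 < m) (r : ℝ), c ⟨n, by omega⟩ < r → r ≤ c ⟨n + 1, hn⟩ →
      volume {x ∈ Ω | r ≤ ρ x} = Tl (n + 1) := by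
    intro n hn r h1 h2
    rw [hρdist r]
    have hset : {x ∈ Ω | r ≤ ∑ i, (D i).indicator (fun _ => c i) x}
        = ⋃ j ∈ Finset.univ.filter (fun j : Fin m => n + 1 ≤ (j : ℕ)), D j := by
      ext x
      simp only [mem_sep_iff, mem_iUnion, Finset.mem_filter, Finset.mem_univ, true_and,
        exists_prop]
      constructor
      · rintro ⟨hxΩ, hle⟩
        obtain ⟨k, hk⟩ := mem_iUnion.1 (hD_union.symm ▸ hxΩ)
        rw [hsumD x k hk] at hle
        refine ⟨k, ?_, hk⟩
        by_contra hcon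
        have : c k ≤ c ⟨n, by omega⟩ := hc_mono.monotone (Fin.le_def.2 (show (k:ℕ) ≤ n by omega))
        linarith
      · rintro ⟨j, hj, hxj⟩
        have hxΩ : x ∈ Ω := by rw [← hD_union]; exact mem_iUnion.2 ⟨j, hxj⟩
        refine ⟨hxΩ, ?_⟩
        rw [hsumD x j hxj]
        have : c ⟨n + 1, hn⟩ ≤ c j := hc_mono.monotone (Fin.le_def.2 hj)
        linarith
    rw [hset, measure_biUnion_finset ?_ (fun j _ => hD_meas j)]
    · simp only [hTldef]
      exact Finset.sum_congr rfl (fun j _ => hD_vol j)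
    · intro a _ b _ hab
      exact hD_disj hab
  -- null exceptional sets for ρ
  have hN1 : volume {x ∈ Ω | ρ x < cc 0} = 0 := by
    have hA : MeasurableSet {x ∈ Ω | cc 0 ≤ ρ x} :=
      hΩ_meas.inter (measurableSet_le measurable_const hρm)
    have hveq : volume {x ∈ Ω | cc 0 ≤ ρ x} = volume Ω := by
      rw [hcc 0 (by omega), hρdist]
      have : {x ∈ Ω | c ⟨0, by omega⟩ ≤ ∑ i, (D i).indicator (fun _ => c i) x} = Ω := by
        ext x
        simp only [mem_sep_iff]
        refine ⟨fun h => h.1, fun hxΩ => ⟨hxΩ, ?_⟩⟩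
        obtain ⟨k, hk⟩ := mem_iUnion.1 (hD_union.symm ▸ hxΩ)
        rw [hsumD x k hk]
        exact hc_mono.monotone (Fin.le_def.2 (Nat.zero_le _))
      rw [this]
    have hsub : {x ∈ Ω | cc 0 ≤ ρ x} ⊆ Ω := fun x hx => hx.1
    have hdiff : volume (Ω \ {x ∈ Ω | cc 0 ≤ ρ x}) = 0 := by
      rw [measure_diff hsub hA.nullMeasurableSet (by rw [hveq]; exact hΩfin), hveq, tsub_self]
    have heq2 : {x ∈ Ω | ρ x < cc 0} = Ω \ {x ∈ Ω | cc 0 ≤ ρ x} := by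
      ext x
      simp only [mem_sep_iff, mem_diff, not_and, not_le]
      exact ⟨fun h => ⟨h.1, fun _ => h.2⟩, fun h => ⟨h.1, h.2 h.1⟩⟩
    rw [heq2, hdiff]
  have hN2 : volume {x ∈ Ω | cc (m - 1) < ρ x} = 0 := by
    have hcov : {x ∈ Ω | cc (m - 1) < ρ x} ⊆
        ⋃ q : ℚ, {x ∈ Ω | cc (m - 1) < (q : ℝ) ∧ (q : ℝ) ≤ ρ x} := by
      rintro x ⟨hxΩ, hx⟩
      obtain ⟨q, hq1, hq2⟩ := exists_rat_btwn hx
      exact mem_iUnion.2 ⟨q, hxΩ, hq1, hq2.le⟩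
    refine measure_mono_null hcov (measure_iUnion_null fun q => ?_)
    by_cases h : cc (m - 1) < (q : ℝ)
    · refine measure_mono_null (fun x hx => ?_) (hρ0top q ?_)
      · exact ⟨hx.1, hx.2.2⟩
      · rw [← hcc (m - 1) (by omega)]
        exact h
    · have hempty : {x ∈ Ω | cc (m - 1) < (q : ℝ) ∧ (q : ℝ) ≤ ρ x} = ∅ := by
        ext x
        simp only [mem_sep_iff, mem_empty_iff_false, iff_false]
        intro hx
        exact h hx.2.1
      rw [hempty, measure_empty]
  have hN3 : ∀ n, n < m - 1 → volume {x ∈ Ω | cc n < ρ x ∧ ρ x < cc (n + 1)} = 0 := by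
    intro n hn
    have hc1 : volume {x ∈ Ω | cc (n + 1) ≤ ρ x} = Tl (n + 1) := by
      rw [hcc (n + 1) (by omega)]
      exact hρ0lvl n (by omega) _ (hc_mono (Fin.mk_lt_mk.2 (by omega))) (le_refl _)
    have hmain : ∀ q : ℚ, cc n < (q : ℝ) → (q : ℝ) ≤ cc (n + 1) →
        volume {x ∈ Ω | (q : ℝ) ≤ ρ x ∧ ρ x < cc (n + 1)} = 0 := by
      intro q h1 h2
      have hq : volume {x ∈ Ω | (q : ℝ) ≤ ρ x} = Tl (n + 1) := by
        refine hρ0lvl n (by omega) q ?_ ?_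
        · rw [← hcc n (by omega)]; exact h1
        · rw [← hcc (n + 1) (by omega)]; exact h2
      have hBsub : {x ∈ Ω | cc (n + 1) ≤ ρ x} ⊆ {x ∈ Ω | (q : ℝ) ≤ ρ x} :=
        fun x hx => ⟨hx.1, le_trans h2 hx.2⟩
      have hBmeas : MeasurableSet {x ∈ Ω | cc (n + 1) ≤ ρ x} :=
        hΩ_meas.inter (measurableSet_le measurable_const hρm)
      have hfin : volume {x ∈ Ω | cc (n + 1) ≤ ρ x} ≠ ⊤ := by
        rw [hc1]; exact hTlfin _
      have hdiff : volume ({x ∈ Ω | (q : ℝ) ≤ ρ x} \ {x ∈ Ω | cc (n + 1) ≤ ρ x}) = 0 := by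
        rw [measure_diff hBsub hBmeas.nullMeasurableSet hfin, hq, hc1, tsub_self]
      refine measure_mono_null (fun x hx => ?_) hdiff
      exact ⟨⟨hx.1, hx.2.1⟩, fun hB => absurd hB.2 (not_le.2 hx.2.2)⟩
    have hcov : {x ∈ Ω | cc n < ρ x ∧ ρ x < cc (n + 1)} ⊆
        ⋃ q : ℚ, {x ∈ Ω | cc n < (q : ℝ) ∧ ((q : ℝ) ≤ ρ x ∧ ρ x < cc (n + 1))} := by
      rintro x ⟨hxΩ, hx1, hx2⟩
      obtain ⟨q, hq1, hq2⟩ := exists_rat_btwn hx1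
      exact mem_iUnion.2 ⟨q, hxΩ, hq1, hq2.le, hx2⟩
    refine measure_mono_null hcov (measure_iUnion_null fun q => ?_)
    by_cases h : cc n < (q : ℝ)
    · by_cases h2 : (q : ℝ) ≤ cc (n + 1)
      · refine measure_mono_null (fun x hx => ?_) (hmain q h h2)
        exact ⟨hx.1, hx.2.2⟩
      · have hempty : {x ∈ Ω | cc n < (q : ℝ) ∧ ((q : ℝ) ≤ ρ x ∧ ρ x < cc (n + 1))} = ∅ := by
          ext x
          simp only [mem_sep_iff, mem_empty_iff_false, iff_false]
          rintro ⟨_, _, hq, hlt⟩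
          push_neg at h2
          linarith
        rw [hempty, measure_empty]
    · have hempty : {x ∈ Ω | cc n < (q : ℝ) ∧ ((q : ℝ) ≤ ρ x ∧ ρ x < cc (n + 1))} = ∅ := by
        ext x
        simp only [mem_sep_iff, mem_empty_iff_false, iff_false]
        rintro ⟨_, hq, _⟩
        exact h hq
      rw [hempty, measure_empty]
  -- almost every point takes one of the values c k
  have hvals : ∀ᵐ x ∂(volume.restrict Ω), ∃ k : Fin m, ρ x = c k := by
    have hbad : volume ({x ∈ Ω | ρ x < cc 0} ∪ ({x ∈ Ω | cc (m - 1) < ρ x} ∪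
        ⋃ (n : ℕ), ⋃ (_ : n < m - 1), {x ∈ Ω | cc n < ρ x ∧ ρ x < cc (n + 1)})) = 0 := by
      refine measure_union_null hN1 (measure_union_null hN2 (measure_iUnion_null fun n => ?_))
      by_cases h : n < m - 1
      · simpa [h] using hN3 n h
      · simp [h]
    rw [ae_restrict_iff' hΩ_meas, ae_iff]
    refine measure_mono_null ?_ hbad
    intro x hx
    simp only [mem_setOf_eq] at hx
    push_neg at hx
    obtain ⟨hxΩ, hk⟩ := hx
    by_cases hlow : ρ x < cc 0
    · exact Or.inl ⟨hxΩ, hlow⟩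
    by_cases hhigh : cc (m - 1) < ρ x
    · exact Or.inr (Or.inl ⟨hxΩ, hhigh⟩)
    push_neg at hlow hhigh
    refine Or.inr (Or.inr ?_)
    have hlow' : cc 0 < ρ x := by
      rcases eq_or_lt_of_le hlow with h | h
      · exact absurd (h.symm.trans (hcc 0 (by omega))) (hk ⟨0, by omega⟩)
      · exact h
    have hhigh' : ρ x < cc (m - 1) := by
      rcases eq_or_lt_of_le hhigh with h | h
      · exact absurd (h.trans (hcc (m - 1) (by omega))) (hk ⟨m - 1, by omega⟩)
      · exact h
    have hm2 : 2 ≤ m := by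
      by_contra hcon
      have hmeq : m = 1 := by omega
      have : cc (m - 1) = cc 0 := by rw [hmeq]
      linarith
    have hP0 : cc 0 < ρ x := hlow'
    have hn0le : Nat.findGreatest (fun n => cc n < ρ x) (m - 2) ≤ m - 2 :=
      Nat.findGreatest_le _
    have hPn0 : cc (Nat.findGreatest (fun n => cc n < ρ x) (m - 2)) < ρ x :=
      Nat.findGreatest_spec (P := fun n => cc n < ρ x) (Nat.zero_le _) hP0
    set n0 := Nat.findGreatest (fun n => cc n < ρ x) (m - 2) with hn0def
    simp only [mem_iUnion]
    refine ⟨n0, by omega, hxΩ, hPn0, ?_⟩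
    rcases Nat.lt_or_ge n0 (m - 2) with hcase | hcase
    · have hfg : Nat.findGreatest (fun n => cc n < ρ x) (m - 2) < n0 + 1 := by
        rw [← hn0def]
        omega
      have hnot : ¬ cc (n0 + 1) < ρ x :=
        Nat.findGreatest_is_greatest hfg (by omega)
      rcases eq_or_lt_of_le (not_lt.1 hnot) with h | h
      · exact absurd (h.trans (hcc (n0 + 1) (by omega))) (hk ⟨n0 + 1, by omega⟩)
      · exact h
    · have hn0eq : n0 = m - 2 := by omega
      have : cc (n0 + 1) = cc (m - 1) := by rw [hn0eq]; congr 1; omega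
      rw [this]
      exact hhigh'
  -- the sets E n and F n
  set EE : ℕ → Set (EuclideanSpace ℝ (Fin N)) := fun n => {x ∈ Ω | ρ x < cc (n + 1)}
    with hEEdef
  set FF : ℕ → Set (EuclideanSpace ℝ (Fin N)) :=
    fun n => ⋃ (j : Fin m), ⋃ (_ : (j : ℕ) ≤ n), Dhat j with hFFdef
  have hEEmeas : ∀ n, MeasurableSet (EE n) :=
    fun n => hΩ_meas.inter (measurableSet_lt hρm measurable_const)
  have hEEsub : ∀ n, EE n ⊆ Ω := fun n x hx => hx.1
  have hFFsub : ∀ n, FF n ⊆ Ω := by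
    intro n x hx
    simp only [hFFdef, mem_iUnion] at hx
    obtain ⟨j, _, hxj⟩ := hx
    exact hDhatSubΩ j hxj
  have hFFeq : ∀ n, FF n = Ω \ Rem (n + 1) := by
    intro n
    ext x
    simp only [hFFdef, hRemdef, mem_iUnion, mem_diff]
    constructor
    · rintro ⟨j, hjn, hxj⟩
      refine ⟨hDhatSubΩ j hxj, fun hR => ?_⟩
      exact hR.2 ⟨j, by omega, hxj⟩
    · rintro ⟨hxΩ, hnR⟩
      have hU : ∃ j : Fin m, ∃ _ : (j : ℕ) < n + 1, x ∈ Dhat j := by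
        by_contra hcon
        exact hnR ⟨hxΩ, hcon⟩
      obtain ⟨j, hj, hxj⟩ := hU
      exact ⟨j, by omega, hxj⟩
  have hFFmeas : ∀ n, MeasurableSet (FF n) := by
    intro n
    simp only [hFFdef]
    exact MeasurableSet.iUnion fun j => MeasurableSet.iUnion fun _ => hDhatMeas j
  have hFFvol : ∀ n, n < m - 1 → volume (FF n) = Tl 0 - Tl (n + 1) := by
    intro n hn
    rw [hFFeq n, measure_diff (hRemSub (n + 1)) (hRemMeas (n + 1) (by omega)).nullMeasurableSet
      (by rw [hRemVol (n + 1) (by omega)]; exact hTlfin _), hRemVol (n + 1) (by omega), hΩvol]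
  have hEEvol : ∀ n, n < m - 1 → volume (EE n) = Tl 0 - Tl (n + 1) := by
    intro n hn
    have hBmeas : MeasurableSet {x ∈ Ω | cc (n + 1) ≤ ρ x} :=
      hΩ_meas.inter (measurableSet_le measurable_const hρm)
    have hBvol : volume {x ∈ Ω | cc (n + 1) ≤ ρ x} = Tl (n + 1) := by
      rw [hcc (n + 1) (by omega)]
      exact hρ0lvl n (by omega) _ (hc_mono (Fin.mk_lt_mk.2 (by omega))) (le_refl _)
    have heq : EE n = Ω \ {x ∈ Ω | cc (n + 1) ≤ ρ x} := by
      simp only [hEEdef]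
      ext x
      simp only [mem_sep_iff, mem_diff, not_and, not_le]
      exact ⟨fun h => ⟨h.1, fun _ => h.2⟩, fun h => ⟨h.1, h.2 h.1⟩⟩
    rw [heq, measure_diff (fun x hx => hx.1) hBmeas.nullMeasurableSet
      (by rw [hBvol]; exact hTlfin _), hBvol, hΩvol]
  have hvolEF : ∀ n, n < m - 1 → volume (EE n) = volume (FF n) := by
    intro n hn
    rw [hEEvol n hn, hFFvol n hn]
  have hEEfin : ∀ n, volume (EE n) ≠ ⊤ :=
    fun n => (lt_of_le_of_lt (measure_mono (hEEsub n)) hΩ_bd.measure_lt_top).ne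
  have hFFfin : ∀ n, volume (FF n) ≠ ⊤ :=
    fun n => (lt_of_le_of_lt (measure_mono (hFFsub n)) hΩ_bd.measure_lt_top).ne
  -- f bounds on F n and on E n \ F n
  have hFFf : ∀ n, n < m - 1 → ∀ x ∈ FF n, tt n ≤ f x := by
    intro n hn x hx
    simp only [hFFdef, mem_iUnion] at hx
    obtain ⟨j, hjn, hxj⟩ := hx
    have hj1 : (j : ℕ) < m - 1 := by omega
    have h1 : t ⟨(j : ℕ), by omega⟩ ≤ f x := hD4g (j : ℕ) hj1 x hxj
    have h2 : t ⟨n, by omega⟩ ≤ t ⟨(j : ℕ), by omega⟩ := htmono (j : ℕ) n (by omega) hn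
    rw [htt n (by omega)]
    linarith
  have hEFf : ∀ n, n < m - 1 → ∀ x ∈ EE n \ FF n, f x < tt n := by
    intro n hn x hx
    have hxΩ : x ∈ Ω := (hEEsub n) hx.1
    have hxR : x ∈ Rem (n + 1) := by
      by_contra hcon
      exact hx.2 (by rw [hFFeq n]; exact ⟨hxΩ, hcon⟩)
    rw [htt n (by omega)]
    exact hD5g n hn x hxR
  -- telescoping sums
  have htel : ∀ k : ℕ, k ≤ m - 1 →
      (∑ n ∈ Finset.range (m - 1), if k ≤ n then cc (n + 1) - cc n else 0)
        = cc (m - 1) - cc k := by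
    intro k hk
    rw [← Finset.sum_filter]
    have hfil : (Finset.range (m - 1)).filter (fun n => k ≤ n) = Finset.Ico k (m - 1) := by
      ext n
      simp only [Finset.mem_filter, Finset.mem_range, Finset.mem_Ico]
      exact ⟨fun h => ⟨h.2, h.1⟩, fun h => ⟨h.2, h.1⟩⟩
    rw [hfil, Finset.sum_Ico_eq_sub _ hk, Finset.sum_range_sub (fun n => cc n),
      Finset.sum_range_sub (fun n => cc n)]
    ring
  have hid1 : ∀ x ∈ Ω, (∃ k : Fin m, ρ x = c k) →
      ρ x = cc (m - 1) - ∑ n ∈ Finset.range (m - 1),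
        (cc (n + 1) - cc n) * (EE n).indicator (fun _ => (1:ℝ)) x := by
    rintro x hxΩ ⟨k, hkx⟩
    have hsum_eq : (∑ n ∈ Finset.range (m - 1),
        (cc (n + 1) - cc n) * (EE n).indicator (fun _ => (1:ℝ)) x)
        = ∑ n ∈ Finset.range (m - 1), if (k : ℕ) ≤ n then cc (n + 1) - cc n else 0 := by
      refine Finset.sum_congr rfl fun n hn => ?_
      have hn' : n < m - 1 := Finset.mem_range.1 hn
      by_cases hmem : (k : ℕ) ≤ n
      · have hx : x ∈ EE n := by
          refine ⟨hxΩ, ?_⟩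
          rw [hkx, hcc (n + 1) (by omega)]
          exact hc_mono (Fin.lt_def.2 (show (k : ℕ) < n + 1 by omega))
        rw [indicator_of_mem hx, if_pos hmem, mul_one]
      · have hx : x ∉ EE n := by
          intro hx
          have h2 := hx.2
          rw [hkx, hcc (n + 1) (by omega)] at h2
          have h3 := hc_mono.lt_iff_lt.1 h2
          rw [Fin.lt_def] at h3
          have h4 : (k : ℕ) < n + 1 := h3
          exact hmem (by omega)
        rw [indicator_of_notMem hx, if_neg hmem, mul_zero]
    rw [hsum_eq, htel (k : ℕ) (by omega), hkx]
    have hck : cc (k : ℕ) = c k := hcc (k : ℕ) (by omega)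
    rw [hck]
    ring
  have hid2 : ∀ x ∈ Ω,
      (∑ i, (Dhat i).indicator (fun _ => c i) x)
        = cc (m - 1) - ∑ n ∈ Finset.range (m - 1),
          (cc (n + 1) - cc n) * (FF n).indicator (fun _ => (1:ℝ)) x := by
    intro x hxΩ
    obtain ⟨k, hk⟩ := hcover x hxΩ
    rw [hsum x k hk]
    have hsum_eq : (∑ n ∈ Finset.range (m - 1),
        (cc (n + 1) - cc n) * (FF n).indicator (fun _ => (1:ℝ)) x)
        = ∑ n ∈ Finset.range (m - 1), if (k : ℕ) ≤ n then cc (n + 1) - cc n else 0 := by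
      refine Finset.sum_congr rfl fun n hn => ?_
      by_cases hmem : (k : ℕ) ≤ n
      · have hx : x ∈ FF n := by
          simp only [hFFdef, mem_iUnion]
          exact ⟨k, hmem, hk⟩
        rw [indicator_of_mem hx, if_pos hmem, mul_one]
      · have hx : x ∉ FF n := by
          intro hx
          simp only [hFFdef, mem_iUnion] at hx
          obtain ⟨j, hjn, hxj⟩ := hx
          have hjk : j = k := by
            by_contra hne
            exact hdisj' j k hne x hxj hk
          rw [hjk] at hjn
          exact hmem hjn
        rw [indicator_of_notMem hx, if_neg hmem, mul_zero]
    rw [hsum_eq, htel (k : ℕ) (by omega)]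
    have hck : cc (k : ℕ) = c k := hcc (k : ℕ) (by omega)
    rw [hck]
    ring
  -- integral representation
  have hind_mul : ∀ (s : Set (EuclideanSpace ℝ (Fin N))) (x),
      s.indicator (fun _ => (1:ℝ)) x * f x = s.indicator f x := by
    intro s x
    by_cases h : x ∈ s <;> simp [h]
  have hrepr : ∀ (φ : EuclideanSpace ℝ (Fin N) → ℝ)
      (G : ℕ → Set (EuclideanSpace ℝ (Fin N))),
      (∀ n, MeasurableSet (G n)) → (∀ n, G n ⊆ Ω) →
      (∀ᵐ x ∂(volume.restrict Ω), φ x = cc (m - 1) - ∑ n ∈ Finset.range (m - 1),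
        (cc (n + 1) - cc n) * (G n).indicator (fun _ => (1:ℝ)) x) →
      ∫ x in Ω, φ x * f x
        = cc (m - 1) * (∫ x in Ω, f x) - ∑ n ∈ Finset.range (m - 1),
            (cc (n + 1) - cc n) * ∫ x in G n, f x := by
    intro φ G hGm hGs hae
    have h1 : ∫ x in Ω, φ x * f x = ∫ x in Ω,
        (cc (m - 1) * f x - ∑ n ∈ Finset.range (m - 1),
          (cc (n + 1) - cc n) * (G n).indicator f x) := by
      refine integral_congr_ae ?_
      filter_upwards [hae] with x hx
      rw [hx, sub_mul, Finset.sum_mul]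
      congr 1
      refine Finset.sum_congr rfl fun n _ => ?_
      rw [mul_assoc, hind_mul]
    have hint1 : Integrable (fun x => cc (m - 1) * f x) (volume.restrict Ω) :=
      hf_int.const_mul _
    have hint2 : ∀ n, Integrable (fun x => (cc (n + 1) - cc n) * (G n).indicator f x)
        (volume.restrict Ω) := fun n => (hf_int.indicator (hGm n)).const_mul _
    rw [h1, integral_sub hint1 (integrable_finset_sum _ (fun n _ => hint2 n)),
      integral_finset_sum _ (fun n _ => hint2 n)]
    congr 1
    · exact integral_const_mul _ _
    · refine Finset.sum_congr rfl fun n _ => ?_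
      rw [integral_const_mul, setIntegral_indicator (hGm n),
        inter_eq_self_of_subset_right (hGs n)]
  -- the integral equality, in telescoped form
  have hEq : (∑ n ∈ Finset.range (m - 1), (cc (n + 1) - cc n) * ∫ x in EE n, f x)
      = ∑ n ∈ Finset.range (m - 1), (cc (n + 1) - cc n) * ∫ x in FF n, f x := by
    have hρae : ∀ᵐ x ∂(volume.restrict Ω), ρ x = cc (m - 1) - ∑ n ∈ Finset.range (m - 1),
        (cc (n + 1) - cc n) * (EE n).indicator (fun _ => (1:ℝ)) x := by
      filter_upwards [hvals, ae_restrict_mem hΩ_meas] with x hex hxΩ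
      exact hid1 x hxΩ hex
    have hρ2ae : ∀ᵐ x ∂(volume.restrict Ω),
        (∑ i, (Dhat i).indicator (fun _ => c i) x)
          = cc (m - 1) - ∑ n ∈ Finset.range (m - 1),
            (cc (n + 1) - cc n) * (FF n).indicator (fun _ => (1:ℝ)) x := by
      filter_upwards [ae_restrict_mem hΩ_meas] with x hxΩ
      exact hid2 x hxΩ
    have h1 := hrepr ρ EE hEEmeas hEEsub hρae
    have h2 := hrepr (fun x => ∑ i, (Dhat i).indicator (fun _ => c i) x) FF hFFmeas hFFsub hρ2ae
    rw [h1, h2] at hρint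
    linarith
  -- integrability on the pieces
  have hIntE : ∀ n, IntegrableOn f (EE n) := fun n => hf_int.mono_set (hEEsub n)
  have hIntF : ∀ n, IntegrableOn f (FF n) := fun n => hf_int.mono_set (hFFsub n)
  have hterm : ∀ n, n < m - 1 →
      (∫ x in FF n, f x) - ∫ x in EE n, f x
        = (∫ x in FF n \ EE n, f x) - ∫ x in EE n \ FF n, f x := by
    intro n hn
    have h1 : (∫ x in FF n ∩ EE n, f x) + ∫ x in FF n \ EE n, f x = ∫ x in FF n, f x :=
      integral_inter_add_diff (hEEmeas n) (hIntF n)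
    have h2 : (∫ x in EE n ∩ FF n, f x) + ∫ x in EE n \ FF n, f x = ∫ x in EE n, f x :=
      integral_inter_add_diff (hFFmeas n) (hIntE n)
    rw [inter_comm (EE n) (FF n)] at h2
    linarith
  have hdiffvol : ∀ n, n < m - 1 → volume (EE n \ FF n) = volume (FF n \ EE n) := by
    intro n hn
    have h1 : volume (EE n \ FF n) + volume (EE n ∩ FF n) = volume (EE n) :=
      measure_diff_add_inter _ (hFFmeas n)
    have h2 : volume (FF n \ EE n) + volume (FF n ∩ EE n) = volume (FF n) :=
      measure_diff_add_inter _ (hEEmeas n)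
    rw [inter_comm (FF n) (EE n)] at h2
    rw [hvolEF n hn] at h1
    have hfin : volume (EE n ∩ FF n) ≠ ⊤ :=
      (lt_of_le_of_lt (measure_mono (fun x hx => (hEEsub n) hx.1)) hΩ_bd.measure_lt_top).ne
    exact WithTop.add_right_cancel hfin (h1.trans h2.symm)
  have hge : ∀ n, n < m - 1 →
      tt n * (volume (FF n \ EE n)).toReal ≤ ∫ x in FF n \ EE n, f x := by
    intro n hn
    have hfin : volume (FF n \ EE n) ≠ ⊤ :=
      (lt_of_le_of_lt (measure_mono (fun x hx => (hFFsub n) hx.1)) hΩ_bd.measure_lt_top).ne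
    have h := setIntegral_ge_of_const_le ((hFFmeas n).diff (hEEmeas n)) hfin
      (fun x hx => hFFf n hn x hx.1) ((hIntF n).mono_set diff_subset)
    rwa [smul_eq_mul, mul_comm, measureReal_def] at h
  have hle : ∀ n, n < m - 1 →
      (∫ x in EE n \ FF n, f x) ≤ tt n * (volume (EE n \ FF n)).toReal := by
    intro n hn
    have hmeas : MeasurableSet (EE n \ FF n) := (hEEmeas n).diff (hFFmeas n)
    have hfin : volume (EE n \ FF n) < ⊤ :=
      lt_of_le_of_lt (measure_mono (fun x hx => (hEEsub n) hx.1)) hΩ_bd.measure_lt_top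
    have h1 : (∫ x in EE n \ FF n, f x) ≤ ∫ x in EE n \ FF n, (fun _ => tt n) x :=
      setIntegral_mono_on ((hIntE n).mono_set diff_subset)
        (integrableOn_const hfin.ne) hmeas (fun x hx => (hEFf n hn x hx).le)
    rwa [setIntegral_const, smul_eq_mul, mul_comm, measureReal_def] at h1
  have hterm0 : ∀ n, n < m - 1 → 0 ≤ (∫ x in FF n, f x) - ∫ x in EE n, f x := by
    intro n hn
    rw [hterm n hn]
    have hge' := hge n hn
    rw [(hdiffvol n hn).symm] at hge'
    linarith [hle n hn]
  have hccs : ∀ n, n < m - 1 → cc n < cc (n + 1) := by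
    intro n hn
    rw [hcc n (by omega), hcc (n + 1) (by omega)]
    exact hc_mono (Fin.mk_lt_mk.2 (by omega))
  have hzero : ∀ n, n < m - 1 → (∫ x in FF n, f x) = ∫ x in EE n, f x := by
    have hsum0 : (∑ n ∈ Finset.range (m - 1),
        (cc (n + 1) - cc n) * ((∫ x in FF n, f x) - ∫ x in EE n, f x)) = 0 := by
      simp only [mul_sub]
      rw [Finset.sum_sub_distrib, hEq, sub_self]
    intro n hn
    have hpos : ∀ k ∈ Finset.range (m - 1),
        0 ≤ (cc (k + 1) - cc k) * ((∫ x in FF k, f x) - ∫ x in EE k, f x) := by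
      intro k hk
      have hk' : k < m - 1 := Finset.mem_range.1 hk
      exact mul_nonneg (by linarith [hccs k hk']) (hterm0 k hk')
    have h0 := (Finset.sum_eq_zero_iff_of_nonneg hpos).1 hsum0 n (Finset.mem_range.2 hn)
    rcases mul_eq_zero.1 h0 with h | h
    · linarith [hccs n hn]
    · linarith
  have hnull : ∀ n, n < m - 1 → volume (EE n \ FF n) = 0 ∧ volume (FF n \ EE n) = 0 := by
    intro n hn
    have hFE := hterm n hn
    rw [hzero n hn, sub_self] at hFE
    have hge' := hge n hn
    rw [(hdiffvol n hn).symm] at hge'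
    have hle' := hle n hn
    have hv : (∫ x in EE n \ FF n, f x) = tt n * (volume (EE n \ FF n)).toReal := by
      linarith
    have hmeas : MeasurableSet (EE n \ FF n) := (hEEmeas n).diff (hFFmeas n)
    have hfin : volume (EE n \ FF n) < ⊤ :=
      lt_of_le_of_lt (measure_mono (fun x hx => (hEEsub n) hx.1)) hΩ_bd.measure_lt_top
    have hintEF : IntegrableOn f (EE n \ FF n) := (hIntE n).mono_set diff_subset
    have hv' : (∫ x in EE n \ FF n, f x) = (volume (EE n \ FF n)).toReal * tt n := by
      rw [hv, mul_comm]
    have hint0 : (∫ x in EE n \ FF n, (fun x => tt n - f x) x) = 0 := by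
      rw [integral_sub (show Integrable (fun _ => tt n) (volume.restrict (EE n \ FF n)) from integrableOn_const hfin.ne) hintEF, setIntegral_const,
        smul_eq_mul, measureReal_def]
      linarith [hv']
    have hEFnull : volume (EE n \ FF n) = 0 := by
      have h0le : 0 ≤ᵐ[volume.restrict (EE n \ FF n)] fun x => tt n - f x := by
        refine (ae_restrict_iff' hmeas).2 (ae_of_all _ ?_)
        intro x hx
        have h7 := hEFf n hn x hx
        simp only [Pi.zero_apply]
        linarith
      have hint' : IntegrableOn (fun x => tt n - f x) (EE n \ FF n) :=
        (integrableOn_const hfin.ne).sub hintEF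
      have hae0 := (setIntegral_eq_zero_iff_of_nonneg_ae h0le hint').1 hint0
      by_contra hne
      have h1 : ∀ᵐ x ∂(volume.restrict (EE n \ FF n)), x ∈ EE n \ FF n :=
        ae_restrict_mem hmeas
      have h2 : ∀ᵐ x ∂(volume.restrict (EE n \ FF n)), False := by
        filter_upwards [hae0, h1] with x h3 h4
        have h5 := hEFf n hn x h4
        have h6 : tt n - f x = 0 := h3
        linarith
      have h3 : (volume.restrict (EE n \ FF n)) {a | ¬False} = 0 := ae_iff.1 h2
      simp only [not_false_iff, setOf_true] at h3
      rw [Measure.restrict_apply_univ] at h3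
      exact hne h3
    exact ⟨hEFnull, by rw [← hdiffvol n hn]; exact hEFnull⟩
  -- conclusion
  have hindae : ∀ᵐ x ∂(volume.restrict Ω), ∀ n ∈ Finset.range (m - 1),
      (EE n).indicator (fun _ => (1:ℝ)) x = (FF n).indicator (fun _ => (1:ℝ)) x := by
    rw [Filter.eventually_all_finset]
    intro n hn
    have hn' : n < m - 1 := Finset.mem_range.1 hn
    obtain ⟨h1, h2⟩ := hnull n hn'
    have hsd : volume ((EE n \ FF n) ∪ (FF n \ EE n)) = 0 := measure_union_null h1 h2
    have hr : (volume.restrict Ω) ((EE n \ FF n) ∪ (FF n \ EE n)) = 0 :=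
      le_antisymm (le_trans (Measure.restrict_le_self _) (le_of_eq hsd)) zero_le
    have hae := (measure_eq_zero_iff_ae_notMem.1 hr)
    filter_upwards [hae] with x hx
    by_cases hE : x ∈ EE n <;> by_cases hF : x ∈ FF n
    · rw [indicator_of_mem hE, indicator_of_mem hF]
    · exact absurd (Or.inl ⟨hE, hF⟩) hx
    · exact absurd (Or.inr ⟨hF, hE⟩) hx
    · rw [indicator_of_notMem hE, indicator_of_notMem hF]
  filter_upwards [hvals, ae_restrict_mem hΩ_meas, hindae] with x hex hxΩ hind
  show ρ x = ∑ i, (Dhat i).indicator (fun _ => c i) x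
  rw [hid1 x hxΩ hex, hid2 x hxΩ]
  congr 1
  refine Finset.sum_congr rfl fun n hn => ?_
  rw [hind n hn]
end
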